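/- arXiv:1906.09047 — 10 statements merged into one kernel-verified Lean document; each statement's English description precedes it below -/
import Mathlib

section
/- Let (X_t) be a stochastic process adapted to a filtration F_t taking values in a state space S ⊆ ℝ≥0 with 0 ∈ S, and let T = min{t : X_t = 0}. If there exists δ > 0 such that for all t < T, E[X_t − X_{t+1} | F_t] ≥ δ, then E[T | F_0] ≤ X_0/δ. -/
open MeasureTheory
open scoped ENNReal

/-- First hitting time of state `0`, valued in `ℕ∞` (`⊤` if never hit). -/
noncomputable def hittingTimeZero {Ω : Type*} (X : ℕ → Ω → ℝ) (ω : Ω) : ℕ∞ :=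
  ⨅ (t : ℕ) (_ : X t ω = 0), (t : ℕ∞)

lemma hittingTimeZero_lt_iff {Ω : Type*} (X : ℕ → Ω → ℝ) (ω : Ω) (t : ℕ) :
    (t : ℕ∞) < hittingTimeZero X ω ↔ ∀ u ≤ t, X u ω ≠ 0 := by
  constructor
  · intro h u hu hX
    have hle : hittingTimeZero X ω ≤ (u : ℕ∞) :=
      iInf_le_of_le u (iInf_le_of_le hX le_rfl)
    have : (t : ℕ∞) < (u : ℕ∞) := lt_of_lt_of_le h hle
    exact absurd (by exact_mod_cast this) (not_lt.mpr hu)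
  · intro h
    have h1 : (t : ℕ∞) + 1 ≤ hittingTimeZero X ω := by
      refine le_iInf fun u => le_iInf fun hX => ?_
      have hu : t < u := lt_of_not_ge fun hle => h u hle hX
      have : ((t + 1 : ℕ) : ℕ∞) ≤ (u : ℕ∞) := by exact_mod_cast hu
      simpa using this
    exact (ENat.add_one_le_iff (by simp)).mp h1

lemma enatCoe_eq_tsum (a : ℕ∞) :
    (a : ℝ≥0∞) = ∑' t : ℕ, if (t : ℕ∞) < a then (1 : ℝ≥0∞) else 0 := by
  cases a with
  | top =>
    have h : ∀ t : ℕ, (if (t : ℕ∞) < (⊤ : ℕ∞) then (1 : ℝ≥0∞) else 0) = 1 := by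
      intro t
      rw [if_pos (lt_top_iff_ne_top.mpr (by simp))]
    simp only [h]
    rw [ENNReal.tsum_const_eq_top_of_ne_zero one_ne_zero]
    rfl
  | coe n =>
    rw [tsum_eq_sum (s := Finset.range n)
      (by
        intro t ht
        rw [if_neg]
        intro hlt
        exact ht (Finset.mem_range.mpr (by exact_mod_cast hlt)))]
    have h : ∀ t ∈ Finset.range n, (if (t : ℕ∞) < (n : ℕ∞) then (1 : ℝ≥0∞) else 0) = 1 := by
      intro t ht
      rw [if_pos (by exact_mod_cast Finset.mem_range.mp ht)]
    rw [Finset.sum_congr rfl h]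
    simp

/-- Additive drift theorem, upper bound: if the process on `ℝ≥0` (adapted to a
filtration `ℱ`) has drift at least `δ > 0` towards `0` on the event `t < T`,
then `E[T | ℱ 0] ≤ X 0 / δ` (stated via set integrals over `ℱ 0`-measurable sets). -/
theorem additive_drift_upper
    {Ω : Type*} {m0 : MeasurableSpace Ω} {μ : Measure Ω} [IsProbabilityMeasure μ]
    (ℱ : Filtration ℕ m0) (X : ℕ → Ω → ℝ)
    (hadapted : Adapted ℱ X)
    (hnonneg : ∀ t ω, 0 ≤ X t ω)
    (hint : ∀ t, Integrable (X t) μ)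
    (δ : ℝ) (hδ : 0 < δ)
    (hdrift : ∀ t : ℕ, ∀ᵐ ω ∂μ,
      (t : ℕ∞) < hittingTimeZero X ω →
        δ ≤ (μ[fun ω => X t ω - X (t + 1) ω | ℱ t]) ω) :
    ∀ s : Set Ω, MeasurableSet[ℱ 0] s →
      ∫⁻ ω in s, (hittingTimeZero X ω : ENNReal) ∂μ
        ≤ ∫⁻ ω in s, ENNReal.ofReal (X 0 ω / δ) ∂μ := by
  intro s hs
  set A : ℕ → Set Ω := fun t => {ω | (t : ℕ∞) < hittingTimeZero X ω} with hA
  -- measurability of A t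
  have hAmeas : ∀ t, MeasurableSet[ℱ t] (A t) := by
    intro t
    have hAeq : A t = ⋂ u ∈ Finset.range (t + 1), {ω | X u ω ≠ 0} := by
      ext ω
      simp [hA, hittingTimeZero_lt_iff, Nat.lt_succ_iff]
    rw [hAeq]
    refine Finset.measurableSet_biInter _ fun u hu => ?_
    have hu' : u ≤ t := Nat.lt_succ_iff.mp (Finset.mem_range.mp hu)
    have hm : MeasurableSet[ℱ u] {ω | X u ω ≠ 0} := by
      have := ((hadapted u) (measurableSet_singleton (0 : ℝ))).compl
      exact this
    exact ℱ.mono hu' _ hm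
  have hAmeas0 : ∀ t, MeasurableSet (A t) := fun t => ℱ.le t _ (hAmeas t)
  have hsub : ∀ t, A (t + 1) ⊆ A t := by
    intro t ω hω
    have h1 : ((t : ℕ∞)) < ((t + 1 : ℕ) : ℕ∞) := by exact_mod_cast Nat.lt_succ_self t
    exact lt_trans (by simpa using h1) hω
  have hs0 : MeasurableSet s := ℱ.le 0 _ hs
  have hst : ∀ t, MeasurableSet[ℱ t] s := fun t => ℱ.mono (Nat.zero_le t) _ hs
  -- key drift inequality per step
  have key : ∀ t, δ * (μ (s ∩ A t)).toReal
      ≤ ∫ ω in s ∩ A t, (X t ω - X (t + 1) ω) ∂μ := by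
    intro t
    have hmeas : MeasurableSet (s ∩ A t) := hs0.inter (hAmeas0 t)
    have hint' : Integrable (fun ω => X t ω - X (t + 1) ω) μ := (hint t).sub (hint (t + 1))
    have h1 : ∫ _ω in s ∩ A t, δ ∂μ
        ≤ ∫ ω in s ∩ A t, (μ[fun ω => X t ω - X (t + 1) ω | ℱ t]) ω ∂μ := by
      refine setIntegral_mono_ae_restrict
        (integrableOn_const (measure_lt_top _ _).ne)
        integrable_condExp.integrableOn ?_
      rw [Filter.EventuallyLE, ae_restrict_iff' hmeas]
      filter_upwards [hdrift t] with ω h hω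
      exact h hω.2
    rw [setIntegral_const, setIntegral_condExp (ℱ.le t) hint' ((hst t).inter (hAmeas t))] at h1
    calc δ * (μ (s ∩ A t)).toReal = (μ (s ∩ A t)).toReal • δ := by
          rw [smul_eq_mul, mul_comm]
      _ ≤ _ := h1
  -- telescoping
  set g : ℕ → ℝ := fun t => ∫ ω in s ∩ A t, X t ω ∂μ with hg
  have hg_nonneg : ∀ t, 0 ≤ g t := fun t =>
    setIntegral_nonneg (hs0.inter (hAmeas0 t)) fun ω _ => hnonneg t ω
  have hstep : ∀ t, ∫ ω in s ∩ A t, (X t ω - X (t + 1) ω) ∂μ ≤ g t - g (t + 1) := by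
    intro t
    rw [integral_sub (hint t).integrableOn (hint (t + 1)).integrableOn]
    have h2 : g (t + 1) ≤ ∫ ω in s ∩ A t, X (t + 1) ω ∂μ := by
      refine setIntegral_mono_set (hint (t + 1)).integrableOn
        (Filter.Eventually.of_forall fun ω => hnonneg (t + 1) ω)
        (HasSubset.Subset.eventuallyLE (Set.inter_subset_inter_right s (hsub t)))
    linarith
  have hsum : ∀ n : ℕ, δ * ∑ t ∈ Finset.range n, (μ (s ∩ A t)).toReal
      ≤ ∫ ω in s, X 0 ω ∂μ := by
    intro n
    have h1 : ∑ t ∈ Finset.range n, δ * (μ (s ∩ A t)).toReal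
        ≤ ∑ t ∈ Finset.range n, (g t - g (t + 1)) :=
      Finset.sum_le_sum fun t _ => (key t).trans (hstep t)
    rw [Finset.sum_range_sub' g n] at h1
    have h2 : g 0 ≤ ∫ ω in s, X 0 ω ∂μ := by
      refine setIntegral_mono_set (hint 0).integrableOn
        (Filter.Eventually.of_forall fun ω => hnonneg 0 ω)
        (HasSubset.Subset.eventuallyLE Set.inter_subset_left)
    rw [Finset.mul_sum]
    linarith [hg_nonneg n]
  -- move to ℝ≥0∞
  set I : ℝ := ∫ ω in s, X 0 ω ∂μ with hI
  have hI_nonneg : 0 ≤ I := setIntegral_nonneg hs0 fun ω _ => hnonneg 0 ω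
  have htsum : ∑' t : ℕ, μ (s ∩ A t) ≤ ENNReal.ofReal (I / δ) := by
    refine ENNReal.summable.tsum_le_of_sum_le fun F => ?_
    obtain ⟨n, hn⟩ : ∃ n, F ⊆ Finset.range n := ⟨(F.sup id) + 1, fun x hx =>
      Finset.mem_range.mpr (Nat.lt_succ_of_le (Finset.le_sup (f := id) hx))⟩
    calc ∑ t ∈ F, μ (s ∩ A t) ≤ ∑ t ∈ Finset.range n, μ (s ∩ A t) :=
          Finset.sum_le_sum_of_subset hn
      _ = ENNReal.ofReal (∑ t ∈ Finset.range n, (μ (s ∩ A t)).toReal) := by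
          rw [ENNReal.ofReal_sum_of_nonneg fun t _ => ENNReal.toReal_nonneg]
          exact Finset.sum_congr rfl fun t _ =>
            (ENNReal.ofReal_toReal (measure_lt_top _ _).ne).symm
      _ ≤ ENNReal.ofReal (I / δ) := by
          refine ENNReal.ofReal_le_ofReal ?_
          rw [le_div_iff₀ hδ, mul_comm]
          exact hsum n
  -- LHS as tsum of measures
  have hlhs : ∫⁻ ω in s, (hittingTimeZero X ω : ℝ≥0∞) ∂μ = ∑' t : ℕ, μ (s ∩ A t) := by
    have hpt : ∀ ω, ((hittingTimeZero X ω : ℕ∞) : ℝ≥0∞)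
        = ∑' t : ℕ, Set.indicator (A t) (1 : Ω → ℝ≥0∞) ω := by
      intro ω
      rw [enatCoe_eq_tsum]
      refine tsum_congr fun t => ?_
      rw [Set.indicator_apply]
      rfl
    simp_rw [hpt]
    rw [lintegral_tsum fun t => (measurable_one.indicator (hAmeas0 t)).aemeasurable]
    refine tsum_congr fun t => ?_
    rw [lintegral_indicator_one (hAmeas0 t), Measure.restrict_apply (hAmeas0 t),
      Set.inter_comm]
  -- RHS
  have hrhs : ∫⁻ ω in s, ENNReal.ofReal (X 0 ω / δ) ∂μ = ENNReal.ofReal (I / δ) := by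
    rw [← ofReal_integral_eq_lintegral_ofReal
      (((hint 0).div_const δ).integrableOn)
      (Filter.Eventually.of_forall fun ω => div_nonneg (hnonneg 0 ω) hδ.le)]
    rw [integral_div]
  rw [hlhs, hrhs]
  exact htsum
end

section
/- Let (X_t) be a stochastic process adapted to a filtration F_t on a state space S ⊆ ℝ≥0 with 0 ∈ S and T = min{t : X_t = 0}. If there exist δ > 0 and b > 0 such that for all t < T, E[X_t − X_{t+1} | F_t] ≤ δ and X_t ≤ b, then E[T | F_0] ≥ X_0/δ. -/
open scoped ENNReal


open MeasureTheory

lemma lt_hittingTimeZero_iff' {Ω : Type*} (X : ℕ → Ω → ℝ) (ω : Ω) (t : ℕ) :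
    (t : ℕ∞) < (⨅ (u : ℕ) (_ : X u ω = 0), (u : ℕ∞)) ↔ ∀ k ≤ t, X k ω ≠ 0 := by
  constructor
  · intro h k hk hzero
    have h1 : (⨅ (u : ℕ) (_ : X u ω = 0), (u : ℕ∞)) ≤ (k : ℕ∞) := iInf₂_le k hzero
    have h2 : (k : ℕ∞) ≤ (t : ℕ∞) := by exact_mod_cast hk
    exact absurd (h.trans_le (h1.trans h2)) (lt_irrefl _)
  · intro h
    have h1 : ((t + 1 : ℕ) : ℕ∞) ≤ ⨅ (u : ℕ) (_ : X u ω = 0), (u : ℕ∞) := by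
      refine le_iInf₂ fun k hk => ?_
      have : t < k := lt_of_not_ge fun hle => h k hle hk
      exact_mod_cast this
    exact lt_of_lt_of_le (by exact_mod_cast Nat.lt_succ_self t) h1

lemma tsum_ite_lt_enat (m : ℕ∞) :
    ∑' t : ℕ, (if (t : ℕ∞) < m then (1 : ℝ≥0∞) else 0) = (m : ℝ≥0∞) := by
  cases m with
  | top =>
    have h : ∀ t : ℕ, (t : ℕ∞) < ⊤ := fun t => lt_of_le_of_ne le_top (by simp)
    simp only [h, if_pos]
    rw [ENNReal.tsum_const_eq_top_of_ne_zero one_ne_zero, ENat.toENNReal_top]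
  | coe n =>
    calc ∑' t : ℕ, (if (t : ℕ∞) < (n : ℕ∞) then (1 : ℝ≥0∞) else 0)
        = ∑' t : ℕ, (if t < n then (1 : ℝ≥0∞) else 0) := by
          exact tsum_congr fun t => by simp only [Nat.cast_lt]
      _ = ∑ t ∈ Finset.range n, (if t < n then (1 : ℝ≥0∞) else 0) := by
          refine tsum_eq_sum fun t ht => ?_
          rw [if_neg (by simpa using ht)]
      _ = ∑ t ∈ Finset.range n, (1 : ℝ≥0∞) := by
          refine Finset.sum_congr rfl fun t ht => ?_
          rw [if_pos (Finset.mem_range.mp ht)]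
      _ = n := by simp
      _ = ((n : ℕ∞) : ℝ≥0∞) := by simp


/-- Additive drift theorem, lower bound: if the process on `ℝ≥0` (adapted to a
filtration `ℱ`) is bounded by `b` and has drift at most `δ > 0` towards `0`
on the event `t < T`, then `E[T | ℱ 0] ≥ X 0 / δ`
(stated via set integrals over `ℱ 0`-measurable sets). -/
theorem additive_drift_lower
    {Ω : Type*} {m0 : MeasurableSpace Ω} {μ : Measure Ω} [IsProbabilityMeasure μ]
    (ℱ : Filtration ℕ m0) (X : ℕ → Ω → ℝ)
    (hadapted : Adapted ℱ X)
    (hnonneg : ∀ t ω, 0 ≤ X t ω)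
    (hint : ∀ t, Integrable (X t) μ)
    (δ b : ℝ) (hδ : 0 < δ) (hb : 0 < b)
    (hdrift : ∀ t : ℕ, ∀ᵐ ω ∂μ,
      (t : ℕ∞) < hittingTimeZero X ω →
        (μ[fun ω => X t ω - X (t + 1) ω | ℱ t]) ω ≤ δ)
    (hbound : ∀ t : ℕ, ∀ᵐ ω ∂μ,
      (t : ℕ∞) < hittingTimeZero X ω → X t ω ≤ b) :
    ∀ s : Set Ω, MeasurableSet[ℱ 0] s →
      ∫⁻ ω in s, ENNReal.ofReal (X 0 ω / δ) ∂μ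
        ≤ ∫⁻ ω in s, (hittingTimeZero X ω : ENNReal) ∂μ := by
  intro s hs
  classical
  set T : Ω → ℕ∞ := hittingTimeZero X with hTdef
  set A : ℕ → Set Ω := fun t => {ω | (t : ℕ∞) < T ω} with hAdef
  have hA_iff : ∀ t ω, ω ∈ A t ↔ ∀ k ≤ t, X k ω ≠ 0 := fun t ω =>
    lt_hittingTimeZero_iff' X ω t
  have hs_t : ∀ t, MeasurableSet[ℱ t] s := fun t => ℱ.mono (Nat.zero_le t) s hs
  have hs0 : MeasurableSet s := ℱ.le 0 s hs
  have hA_meas : ∀ t, MeasurableSet[ℱ t] (A t) := by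
    intro t
    have heq : A t = ⋂ k ∈ Finset.range (t + 1), (X k) ⁻¹' ({0}ᶜ) := by
      ext ω
      simp only [Set.mem_iInter, Finset.mem_range, Nat.lt_succ_iff, Set.mem_preimage,
        Set.mem_compl_iff, Set.mem_singleton_iff]
      exact hA_iff t ω
    rw [heq]
    refine Set.Finite.measurableSet_biInter (Finset.finite_toSet _) fun k hk => ?_
    have hk' : k ≤ t := Nat.lt_succ_iff.mp (Finset.mem_range.mp hk)
    have hm : Measurable[ℱ t] (X k) :=
      (hadapted k).mono (ℱ.mono hk') le_rfl
    exact hm (MeasurableSet.compl (measurableSet_singleton 0))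
  have hA_meas0 : ∀ t, MeasurableSet (A t) := fun t => ℱ.le t _ (hA_meas t)
  have hA_anti : ∀ t, A (t + 1) ⊆ A t := by
    intro t ω hω
    rw [hA_iff] at hω ⊢
    exact fun k hk => hω k (hk.trans (Nat.le_succ t))
  -- stopped process
  set Y : ℕ → Ω → ℝ := fun t => (A t).indicator (X t) with hYdef
  have hYint : ∀ t, Integrable (Y t) μ := fun t => (hint t).indicator (hA_meas0 t)
  have hY0 : ∀ ω, Y 0 ω = X 0 ω := by
    intro ω
    by_cases hω : ω ∈ A 0
    · simp [hYdef, Set.indicator_of_mem hω]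
    · have : X 0 ω = 0 := by
        by_contra h0
        exact hω ((hA_iff 0 ω).2 fun k hk => by obtain rfl := Nat.le_zero.mp hk; exact h0)
      simp [hYdef, Set.indicator_of_notMem hω, this]
  -- telescoping identity pointwise
  have hYdiff : ∀ t, (fun ω => Y t ω - Y (t + 1) ω)
      = (A t).indicator (fun ω => X t ω - X (t + 1) ω) := by
    intro t
    funext ω
    by_cases hω : ω ∈ A t
    · have hYt : Y t ω = X t ω := Set.indicator_of_mem hω _
      have hYt1 : Y (t + 1) ω = X (t + 1) ω := by
        by_cases hω1 : ω ∈ A (t + 1)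
        · exact Set.indicator_of_mem hω1 _
        · have hx : X (t + 1) ω = 0 := by
            by_contra h0
            refine hω1 ((hA_iff (t + 1) ω).2 fun k hk => ?_)
            rcases Nat.lt_succ_iff_lt_or_eq.mp (Nat.lt_succ_of_le hk) with h | rfl
            · exact (hA_iff t ω).1 hω k (Nat.lt_succ_iff.mp h)
            · exact h0
          simp [hYdef, Set.indicator_of_notMem hω1, hx]
      simp [hYt, hYt1, Set.indicator_of_mem hω]
    · have hω1 : ω ∉ A (t + 1) := fun h => hω (hA_anti t h)
      simp [hYdef, Set.indicator_of_notMem hω, Set.indicator_of_notMem hω1]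
  -- drift step
  have hE_meas : ∀ t, MeasurableSet[ℱ t] (A t ∩ s) := fun t => (hA_meas t).inter (hs_t t)
  have hE_meas0 : ∀ t, MeasurableSet (A t ∩ s) := fun t => ℱ.le t _ (hE_meas t)
  have hdrift_int : ∀ t : ℕ, ∫ ω in s, (Y t ω - Y (t + 1) ω) ∂μ
      ≤ δ * (μ (s ∩ A t)).toReal := by
    intro t
    have hg : Integrable (fun ω => X t ω - X (t + 1) ω) μ := (hint t).sub (hint (t + 1))
    have step1 : ∫ ω in s, (Y t ω - Y (t + 1) ω) ∂μ
        = ∫ ω in A t ∩ s, (X t ω - X (t + 1) ω) ∂μ := by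
      rw [show (fun ω => Y t ω - Y (t + 1) ω)
          = (A t).indicator (fun ω => X t ω - X (t + 1) ω) from hYdiff t]
      rw [integral_indicator (hA_meas0 t), Measure.restrict_restrict (hA_meas0 t)]
    have step2 : ∫ ω in A t ∩ s, (X t ω - X (t + 1) ω) ∂μ
        = ∫ ω in A t ∩ s, (μ[fun ω => X t ω - X (t + 1) ω | ℱ t]) ω ∂μ :=
      (setIntegral_condExp (ℱ.le t) hg (hE_meas t)).symm
    have step3 : ∫ ω in A t ∩ s, (μ[fun ω => X t ω - X (t + 1) ω | ℱ t]) ω ∂μ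
        ≤ ∫ _ω in A t ∩ s, δ ∂μ := by
      refine integral_mono_ae (integrable_condExp.integrableOn) (integrable_const δ) ?_
      have h1 : ∀ᵐ ω ∂(μ.restrict (A t ∩ s)), ω ∈ A t ∩ s :=
        ae_restrict_mem (hE_meas0 t)
      filter_upwards [h1, ae_restrict_of_ae (hdrift t)] with ω hω hd
      exact hd hω.1
    have step4 : ∫ _ω in A t ∩ s, δ ∂μ = δ * (μ (s ∩ A t)).toReal := by
      rw [setIntegral_const, smul_eq_mul, mul_comm, Set.inter_comm]; rfl
    calc ∫ ω in s, (Y t ω - Y (t + 1) ω) ∂μ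
        = ∫ ω in A t ∩ s, (X t ω - X (t + 1) ω) ∂μ := step1
      _ = _ := step2
      _ ≤ ∫ _ω in A t ∩ s, δ ∂μ := step3
      _ = δ * (μ (s ∩ A t)).toReal := step4
  -- bound step
  have hbound_int : ∀ n : ℕ, ∫ ω in s, Y n ω ∂μ ≤ b * (μ (s ∩ A n)).toReal := by
    intro n
    have step1 : ∫ ω in s, Y n ω ∂μ = ∫ ω in A n ∩ s, X n ω ∂μ := by
      rw [hYdef]
      rw [integral_indicator (hA_meas0 n), Measure.restrict_restrict (hA_meas0 n)]
    have step2 : ∫ ω in A n ∩ s, X n ω ∂μ ≤ ∫ _ω in A n ∩ s, b ∂μ := by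
      refine integral_mono_ae ((hint n).integrableOn) (integrable_const b) ?_
      have h1 : ∀ᵐ ω ∂(μ.restrict (A n ∩ s)), ω ∈ A n ∩ s :=
        ae_restrict_mem (hE_meas0 n)
      filter_upwards [h1, ae_restrict_of_ae (hbound n)] with ω hω hd
      exact hd hω.1
    have step3 : ∫ _ω in A n ∩ s, b ∂μ = b * (μ (s ∩ A n)).toReal := by
      rw [setIntegral_const, smul_eq_mul, mul_comm, Set.inter_comm]; rfl
    calc ∫ ω in s, Y n ω ∂μ = ∫ ω in A n ∩ s, X n ω ∂μ := step1
      _ ≤ _ := step2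
      _ = _ := step3
  -- telescoping
  have htel : ∀ n : ℕ, ∫ ω in s, X 0 ω ∂μ
      = ∫ ω in s, Y n ω ∂μ + ∑ t ∈ Finset.range n, ∫ ω in s, (Y t ω - Y (t + 1) ω) ∂μ := by
    intro n
    have h1 : ∑ t ∈ Finset.range n, ∫ ω in s, (Y t ω - Y (t + 1) ω) ∂μ
        = ∑ t ∈ Finset.range n, ((∫ ω in s, Y t ω ∂μ) - ∫ ω in s, Y (t + 1) ω ∂μ) := by
      refine Finset.sum_congr rfl fun t _ => ?_
      exact integral_sub ((hYint t).integrableOn) ((hYint (t + 1)).integrableOn)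
    have h2 : ∫ ω in s, X 0 ω ∂μ = ∫ ω in s, Y 0 ω ∂μ :=
      (integral_congr_ae (Filter.Eventually.of_forall fun ω => (hY0 ω).symm))
    rw [h1, Finset.sum_range_sub' (fun t => ∫ ω in s, Y t ω ∂μ), h2]
    ring
  -- combine
  have hmain : ∀ n : ℕ, ∫ ω in s, X 0 ω ∂μ
      ≤ b * (μ (s ∩ A n)).toReal + δ * ∑ t ∈ Finset.range n, (μ (s ∩ A t)).toReal := by
    intro n
    rw [htel n]
    have h1 : ∑ t ∈ Finset.range n, ∫ ω in s, (Y t ω - Y (t + 1) ω) ∂μ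
        ≤ ∑ t ∈ Finset.range n, δ * (μ (s ∩ A t)).toReal :=
      Finset.sum_le_sum fun t _ => hdrift_int t
    rw [← Finset.mul_sum] at h1
    exact add_le_add (hbound_int n) h1
  -- the lintegral of T
  set M : ℝ≥0∞ := ∑' t : ℕ, μ (s ∩ A t) with hMdef
  have hTint : ∫⁻ ω in s, (T ω : ℝ≥0∞) ∂μ = M := by
    have hpt : ∀ ω, (T ω : ℝ≥0∞)
        = ∑' t : ℕ, (A t).indicator (fun _ => (1 : ℝ≥0∞)) ω := by
      intro ω
      rw [← tsum_ite_lt_enat (T ω)]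
      exact tsum_congr fun t => by
        by_cases hω : ω ∈ A t
        · rw [Set.indicator_of_mem hω]; exact if_pos hω
        · rw [Set.indicator_of_notMem hω]; exact if_neg hω
    calc ∫⁻ ω in s, (T ω : ℝ≥0∞) ∂μ
        = ∫⁻ ω in s, ∑' t : ℕ, (A t).indicator (fun _ => (1 : ℝ≥0∞)) ω ∂μ :=
          lintegral_congr hpt
      _ = ∑' t : ℕ, ∫⁻ ω in s, (A t).indicator (fun _ => (1 : ℝ≥0∞)) ω ∂μ :=
          lintegral_tsum fun t =>
            ((measurable_const.indicator (hA_meas0 t)).aemeasurable)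
      _ = ∑' t : ℕ, μ (s ∩ A t) := by
          refine tsum_congr fun t => ?_
          rw [lintegral_indicator (hA_meas0 t), Measure.restrict_restrict (hA_meas0 t)]
          simp [Set.inter_comm]
      _ = M := rfl
  rw [hTint]
  by_cases hM : M = ⊤
  · rw [hM]; exact le_top
  -- finite case
  have hμfin : ∀ t, μ (s ∩ A t) ≠ ⊤ := fun t => measure_ne_top μ _
  have hsummable : Summable fun t : ℕ => (μ (s ∩ A t)).toReal :=
    ENNReal.summable_toReal hM
  have htsum_eq : ∑' t : ℕ, (μ (s ∩ A t)).toReal = M.toReal :=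
    (ENNReal.tsum_toReal_eq hμfin).symm
  have hsum_le : ∀ n : ℕ, ∑ t ∈ Finset.range n, (μ (s ∩ A t)).toReal ≤ M.toReal := by
    intro n
    rw [← htsum_eq]
    exact Summable.sum_le_tsum (Finset.range n) (fun t _ => ENNReal.toReal_nonneg) hsummable
  have htend : Filter.Tendsto (fun n : ℕ => (μ (s ∩ A n)).toReal)
      Filter.atTop (nhds 0) := hsummable.tendsto_atTop_zero
  have hlim : Filter.Tendsto
      (fun n : ℕ => b * (μ (s ∩ A n)).toReal + δ * M.toReal)
      Filter.atTop (nhds (δ * M.toReal)) := by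
    have := (htend.const_mul b).add (tendsto_const_nhds (x := δ * M.toReal))
    simpa using this
  have hle : ∫ ω in s, X 0 ω ∂μ ≤ δ * M.toReal := by
    refine ge_of_tendsto' hlim fun n => ?_
    calc ∫ ω in s, X 0 ω ∂μ
        ≤ b * (μ (s ∩ A n)).toReal + δ * ∑ t ∈ Finset.range n, (μ (s ∩ A t)).toReal :=
          hmain n
      _ ≤ b * (μ (s ∩ A n)).toReal + δ * M.toReal := by
          exact add_le_add_right (mul_le_mul_of_nonneg_left (hsum_le n) hδ.le) _
  -- conclude
  have hX0nn : 0 ≤ᵐ[μ.restrict s] X 0 :=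
    Filter.Eventually.of_forall fun ω => hnonneg 0 ω
  have hlint_eq : ∫⁻ ω in s, ENNReal.ofReal (X 0 ω) ∂μ
      = ENNReal.ofReal (∫ ω in s, X 0 ω ∂μ) :=
    (ofReal_integral_eq_lintegral_ofReal ((hint 0).integrableOn) hX0nn).symm
  have hδ' : ENNReal.ofReal δ ≠ 0 := by
    simp [ENNReal.ofReal_eq_zero, not_le, hδ]
  calc ∫⁻ ω in s, ENNReal.ofReal (X 0 ω / δ) ∂μ
      = ∫⁻ ω in s, ENNReal.ofReal δ⁻¹ * ENNReal.ofReal (X 0 ω) ∂μ := by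
        refine lintegral_congr fun ω => ?_
        rw [div_eq_mul_inv, ENNReal.ofReal_mul (hnonneg 0 ω), mul_comm]
    _ = ENNReal.ofReal δ⁻¹ * ∫⁻ ω in s, ENNReal.ofReal (X 0 ω) ∂μ :=
        lintegral_const_mul' _ _ ENNReal.ofReal_ne_top
    _ = ENNReal.ofReal δ⁻¹ * ENNReal.ofReal (∫ ω in s, X 0 ω ∂μ) := by rw [hlint_eq]
    _ ≤ ENNReal.ofReal δ⁻¹ * ENNReal.ofReal (δ * M.toReal) :=
        mul_le_mul_right (ENNReal.ofReal_le_ofReal hle) _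
    _ = ENNReal.ofReal δ⁻¹ * (ENNReal.ofReal δ * ENNReal.ofReal M.toReal) := by
        rw [ENNReal.ofReal_mul hδ.le]
    _ = M := by
        rw [← mul_assoc, ENNReal.ofReal_inv_of_pos hδ,
          ENNReal.inv_mul_cancel hδ' ENNReal.ofReal_ne_top, one_mul,
          ENNReal.ofReal_toReal hM]
end

section
/- Let (X_t) be a Markov process on {0, 1, ..., N} and Δ : {1, ..., N} → (0, ∞) a monotone increasing function with E[X_t − X_{t+1} | X_t = k] ≥ Δ(k) for all k ≥ 1. Then the first hitting time T = min{t : X_t = 0} satisfies E[T | X_0] ≤ Σ_{k=1}^{X_0} 1/Δ(k). -/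
open MeasureTheory ProbabilityTheory Finset

/-- First hitting time of state `0` for an `ℕ`-valued process, valued in `ℕ∞`. -/
noncomputable def hitZero {Ω : Type*} (X : ℕ → Ω → ℕ) (ω : Ω) : ℕ∞ :=
  ⨅ (t : ℕ) (_ : X t ω = 0), (t : ℕ∞)

/-- `(X_t)` is a time-homogeneous Markov process with one-step transition
probabilities `p`: conditioned on any event determined by `X_0, …, X_t` together
with `{X_t = k}`, the probability of `{X_{t+1} = j}` is `p k j`. -/
def IsMarkovWith {Ω : Type*} [MeasurableSpace Ω] (μ : Measure Ω)
    (X : ℕ → Ω → ℕ) (p : ℕ → ℕ → ℝ) : Prop :=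
  ∀ (t k j : ℕ) (A : Set Ω),
    MeasurableSet[MeasurableSpace.comap (fun ω (i : Fin (t + 1)) => X i ω) inferInstance] A →
      μ (A ∩ {ω | X t ω = k} ∩ {ω | X (t + 1) ω = j})
        = ENNReal.ofReal (p k j) * μ (A ∩ {ω | X t ω = k})

lemma lt_hitZero_iff {Ω : Type*} (X : ℕ → Ω → ℕ) (ω : Ω) (t : ℕ) :
    (t : ℕ∞) < hitZero X ω ↔ ∀ s ≤ t, X s ω ≠ 0 := by
  constructor
  · intro h s hs h0
    have h1 : hitZero X ω ≤ (s : ℕ∞) := by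
      unfold hitZero; exact iInf_le_of_le s (iInf_le _ h0)
    have h2 : (t : ℕ∞) < (s : ℕ∞) := h.trans_le h1
    exact absurd hs (not_le.2 (by exact_mod_cast h2))
  · intro h
    have h1 : ((t + 1 : ℕ) : ℕ∞) ≤ hitZero X ω := by
      refine le_iInf fun s => le_iInf fun hs => ?_
      have : t < s := lt_of_not_ge fun hle => h s hle hs
      exact_mod_cast this
    calc (t : ℕ∞) < ((t + 1 : ℕ) : ℕ∞) := by exact_mod_cast Nat.lt_succ_self t
      _ ≤ _ := h1

lemma enatCast_eq_tsum (m : ℕ∞) :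
    (m : ENNReal) = ∑' t : ℕ, if (t : ℕ∞) < m then 1 else 0 := by
  cases m with
  | top =>
    have : ∀ t : ℕ, (if (t : ℕ∞) < ⊤ then (1 : ENNReal) else 0) = 1 := fun t => by
      simp
    rw [tsum_congr this]
    simp [ENNReal.tsum_const_eq_top_of_ne_zero]
  | coe n =>
    have h0 : ∀ t : ℕ, t ∉ range n → (if (t : ℕ∞) < (n : ℕ∞) then (1 : ENNReal) else 0) = 0 := by
      intro t ht
      simp only [mem_range, not_lt] at ht
      simp [not_lt.2 (by exact_mod_cast ht : (n : ℕ∞) ≤ t)]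
    rw [tsum_eq_sum h0]
    have : ∀ t ∈ range n, (if (t : ℕ∞) < (n : ℕ∞) then (1 : ENNReal) else 0) = 1 := by
      intro t ht
      simp only [mem_range] at ht
      simp [(by exact_mod_cast ht : (t : ℕ∞) < (n : ℕ∞))]
    rw [Finset.sum_congr rfl this]
    simp

/-- Discrete variable drift theorem (upper bound): for a Markov process on
`{0, …, N}` whose drift from state `k ≥ 1` is at least `Δ k` with `Δ` positive
and monotone increasing, the first hitting time of `0` satisfies
`E[T | X_0] ≤ ∑_{k=1}^{X_0} 1 / Δ k`. -/
theorem discrete_variable_drift_upper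
    {Ω : Type*} {m0 : MeasurableSpace Ω} {μ : Measure Ω} [IsProbabilityMeasure μ]
    (N : ℕ) (X : ℕ → Ω → ℕ)
    (hmeas : ∀ t, Measurable (X t))
    (hrange : ∀ t ω, X t ω ≤ N)
    (p : ℕ → ℕ → ℝ)
    (hp0 : ∀ k j, 0 ≤ p k j)
    (hp1 : ∀ k, k ≤ N → ∑ j ∈ range (N + 1), p k j = 1)
    (hMarkov : IsMarkovWith μ X p)
    (Δ : ℕ → ℝ)
    (hΔpos : ∀ k, 1 ≤ k → k ≤ N → 0 < Δ k)
    (hΔmono : ∀ k l, 1 ≤ k → k ≤ l → l ≤ N → Δ k ≤ Δ l)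
    (hdrift : ∀ k, 1 ≤ k → k ≤ N →
      Δ k ≤ ∑ j ∈ range (N + 1), p k j * ((k : ℝ) - j)) :
    ∀ k0, k0 ≤ N → μ {ω | X 0 ω = k0} ≠ 0 →
      ∫⁻ ω, (hitZero X ω : ENNReal) ∂(μ[|{ω | X 0 ω = k0}])
        ≤ ENNReal.ofReal (∑ k ∈ Icc 1 k0, 1 / Δ k) := by
  intro k0 hk0 hB0
  set B : Set Ω := {ω | X 0 ω = k0} with hBdef
  have hfin : ∀ s : Set Ω, μ s ≠ ⊤ := fun s => measure_ne_top μ s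
  -- the potential function
  set g : ℕ → ℝ := fun k => ∑ i ∈ Ioc 0 k, 1 / Δ i with hgdef
  have hg0 : g 0 = 0 := by simp [hgdef]
  have hgnn : ∀ k, k ≤ N → 0 ≤ g k := by
    intro k hk
    apply Finset.sum_nonneg
    intro i hi
    simp only [mem_Ioc] at hi
    have := hΔpos i hi.1 (hi.2.trans hk)
    positivity
  -- key potential inequality
  have hgkey : ∀ k j, 1 ≤ k → k ≤ N → j ≤ N → ((k : ℝ) - j) / Δ k ≤ g k - g j := by
    intro k j hk1 hkN hjN
    have hΔk := hΔpos k hk1 hkN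
    rcases le_or_gt j k with hjk | hkj
    · have hsplit : g j + ∑ i ∈ Ioc j k, 1 / Δ i = g k :=
        Finset.sum_Ioc_consecutive _ (Nat.zero_le j) hjk
      have hbd : (Ioc j k).card • (1 / Δ k) ≤ ∑ i ∈ Ioc j k, 1 / Δ i := by
        refine Finset.card_nsmul_le_sum _ _ _ fun i hi => ?_
        simp only [mem_Ioc] at hi
        have hi1 : 1 ≤ i := (Nat.zero_le j).trans_lt hi.1
        exact one_div_le_one_div_of_le (hΔpos i hi1 (hi.2.trans hkN))
          (hΔmono i k hi1 hi.2 hkN)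
      have hcard : ((Ioc j k).card : ℝ) = (k : ℝ) - j := by
        rw [Nat.card_Ioc, Nat.cast_sub hjk]
      rw [nsmul_eq_mul, hcard] at hbd
      have : ((k : ℝ) - j) / Δ k = ((k : ℝ) - j) * (1 / Δ k) := by ring
      rw [this]
      linarith
    · have hsplit : g k + ∑ i ∈ Ioc k j, 1 / Δ i = g j :=
        Finset.sum_Ioc_consecutive _ (Nat.zero_le k) hkj.le
      have hbd : ∑ i ∈ Ioc k j, 1 / Δ i ≤ (Ioc k j).card • (1 / Δ k) := by
        refine Finset.sum_le_card_nsmul _ _ _ fun i hi => ?_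
        simp only [mem_Ioc] at hi
        exact one_div_le_one_div_of_le hΔk (hΔmono k i hk1 hi.1.le (hi.2.trans hjN))
      have hcard : ((Ioc k j).card : ℝ) = (j : ℝ) - k := by
        rw [Nat.card_Ioc, Nat.cast_sub hkj.le]
      rw [nsmul_eq_mul, hcard] at hbd
      have h1 : ((k : ℝ) - j) / Δ k = -(((j : ℝ) - k) * (1 / Δ k)) := by ring
      rw [h1]
      linarith
  -- expected one-step drop of the potential
  have hgdrop : ∀ k, 1 ≤ k → k ≤ N → ∑ j ∈ range (N + 1), p k j * g j ≤ g k - 1 := by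
    intro k hk1 hkN
    have hΔk := hΔpos k hk1 hkN
    have step1 : ∑ j ∈ range (N + 1), p k j * g j
        ≤ ∑ j ∈ range (N + 1), p k j * (g k - ((k : ℝ) - j) / Δ k) := by
      refine Finset.sum_le_sum fun j hj => ?_
      simp only [mem_range, Nat.lt_succ_iff] at hj
      have := hgkey k j hk1 hkN hj
      have hkj : g j ≤ g k - ((k : ℝ) - j) / Δ k := by linarith
      exact mul_le_mul_of_nonneg_left hkj (hp0 k j)
    have step2 : ∑ j ∈ range (N + 1), p k j * (g k - ((k : ℝ) - j) / Δ k)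
        = g k - (∑ j ∈ range (N + 1), p k j * ((k : ℝ) - j)) / Δ k := by
      rw [eq_sub_iff_add_eq, Finset.sum_div, ← Finset.sum_add_distrib]
      have : ∀ j ∈ range (N + 1),
          p k j * (g k - ((k : ℝ) - j) / Δ k) + p k j * ((k : ℝ) - j) / Δ k
            = p k j * g k := fun j _ => by ring
      rw [Finset.sum_congr rfl this, ← Finset.sum_mul, hp1 k hkN, one_mul]
    have step3 : (1 : ℝ) ≤ (∑ j ∈ range (N + 1), p k j * ((k : ℝ) - j)) / Δ k := by
      rw [le_div_iff₀ hΔk, one_mul]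
      exact hdrift k hk1 hkN
    calc ∑ j ∈ range (N + 1), p k j * g j
        ≤ g k - (∑ j ∈ range (N + 1), p k j * ((k : ℝ) - j)) / Δ k := by
          rw [← step2]; exact step1
      _ ≤ g k - 1 := by linarith
  -- events
  have hXset : ∀ t k, MeasurableSet {ω | X t ω = k} := fun t k =>
    (hmeas t) (measurableSet_singleton k)
  set A : ℕ → Set Ω := fun t => {ω | X 0 ω = k0 ∧ ∀ s ≤ t, X s ω ≠ 0} with hAdef
  have hAm : ∀ t, MeasurableSet (A t) := by
    intro t
    have : A t = {ω | X 0 ω = k0} ∩ ⋂ s ∈ Finset.range (t + 1), {ω | X s ω = 0}ᶜ := by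
      ext ω
      simp [hAdef, Nat.lt_succ_iff]
    rw [this]
    exact (hXset 0 k0).inter
      (Finset.measurableSet_biInter _ fun s _ => (hXset s 0).compl)
  have hAcomap : ∀ t, MeasurableSet[MeasurableSpace.comap
      (fun ω (i : Fin (t + 1)) => X i ω) inferInstance] (A t) := by
    intro t
    refine ⟨{f : Fin (t + 1) → ℕ | f ⟨0, t.succ_pos⟩ = k0 ∧ ∀ i, f i ≠ 0}, ?_, ?_⟩
    · have h1 : MeasurableSet {f : Fin (t + 1) → ℕ | f ⟨0, t.succ_pos⟩ = k0} := by
        have hm : Measurable fun f : Fin (t + 1) → ℕ => f ⟨0, t.succ_pos⟩ :=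
          measurable_pi_apply _
        exact hm (measurableSet_singleton k0)
      have h2 : MeasurableSet {f : Fin (t + 1) → ℕ | ∀ i, f i ≠ 0} := by
        have : {f : Fin (t + 1) → ℕ | ∀ i, f i ≠ 0}
            = ⋂ i, (fun f : Fin (t + 1) → ℕ => f i) ⁻¹' ({0}ᶜ) := by
          ext f; simp
        rw [this]
        exact MeasurableSet.iInter fun i =>
          (measurable_pi_apply i) (measurableSet_singleton 0).compl
      rw [Set.setOf_and]
      exact h1.inter h2
    · ext ω
      simp only [Set.mem_preimage, Set.mem_setOf_eq, hAdef]
      constructor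
      · rintro ⟨h1, h2⟩
        exact ⟨h1, fun s hs => h2 ⟨s, Nat.lt_succ_of_le hs⟩⟩
      · rintro ⟨h1, h2⟩
        exact ⟨h1, fun i => h2 i (Nat.lt_succ_iff.mp i.isLt)⟩
  set q : ℕ → ℕ → ℝ := fun t k => (μ (A t ∩ {ω | X t ω = k})).toReal with hqdef
  have hqnn : ∀ t k, 0 ≤ q t k := fun t k => ENNReal.toReal_nonneg
  have hq0 : ∀ t, q t 0 = 0 := by
    intro t
    have : A t ∩ {ω | X t ω = 0} = ∅ := by
      ext ω
      simp only [Set.mem_inter_iff, Set.mem_setOf_eq, Set.mem_empty_iff_false, iff_false,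
        not_and, hAdef]
      rintro ⟨-, h2⟩
      exact h2 t le_rfl
    simp [hqdef, this]
  -- partition over the value of X t
  have hpart : ∀ (t : ℕ) (C : Set Ω), MeasurableSet C →
      (μ (A t ∩ C)).toReal
        = ∑ k ∈ range (N + 1), (μ (A t ∩ {ω | X t ω = k} ∩ C)).toReal := by
    intro t C hC
    have hun : A t ∩ C = ⋃ k ∈ range (N + 1), (A t ∩ {ω | X t ω = k} ∩ C) := by
      ext ω
      simp only [Set.mem_inter_iff, Set.mem_iUnion, Set.mem_setOf_eq, mem_range,
        Nat.lt_succ_iff, exists_prop]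
      constructor
      · rintro ⟨h1, h2⟩
        exact ⟨X t ω, hrange t ω, ⟨h1, rfl⟩, h2⟩
      · rintro ⟨k, -, ⟨h1, -⟩, h2⟩
        exact ⟨h1, h2⟩
    have hdisj : Set.PairwiseDisjoint ↑(range (N + 1))
        (fun k => A t ∩ {ω | X t ω = k} ∩ C) := by
      intro k _ l _ hkl
      refine Set.disjoint_left.2 fun ω h1 h2 => hkl ?_
      have e1 : X t ω = k := h1.1.2
      have e2 : X t ω = l := h2.1.2
      rw [← e1, ← e2]
    rw [hun, measure_biUnion_finset hdisj
      (fun k _ => ((hAm t).inter (hXset t k)).inter hC),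
      ENNReal.toReal_sum (fun k _ => hfin _)]
  -- one-step evolution of q
  have hq1 : ∀ t j, j ≠ 0 → q (t + 1) j = ∑ k ∈ range (N + 1), p k j * q t k := by
    intro t j hj
    have hset : A (t + 1) ∩ {ω | X (t + 1) ω = j} = A t ∩ {ω | X (t + 1) ω = j} := by
      ext ω
      simp only [Set.mem_inter_iff, Set.mem_setOf_eq, hAdef]
      constructor
      · rintro ⟨⟨h1, h2⟩, h3⟩
        exact ⟨⟨h1, fun s hs => h2 s (hs.trans (Nat.le_succ t))⟩, h3⟩
      · rintro ⟨⟨h1, h2⟩, h3⟩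
        refine ⟨⟨h1, fun s hs => ?_⟩, h3⟩
        rcases Nat.le_succ_iff.mp hs with h | h
        · exact h2 s h
        · rw [h, h3]; exact hj
    have := hpart t {ω | X (t + 1) ω = j} (hXset (t + 1) j)
    rw [hqdef]
    simp only
    rw [hset, this]
    refine Finset.sum_congr rfl fun k _ => ?_
    rw [hMarkov t k j (A t) (hAcomap t), ENNReal.toReal_mul,
      ENNReal.toReal_ofReal (hp0 k j)]
  set S : ℕ → ℝ := fun t => (μ (A t)).toReal with hSdef
  have hS : ∀ t, S t = ∑ k ∈ range (N + 1), q t k := by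
    intro t
    have := hpart t Set.univ MeasurableSet.univ
    simpa [hSdef, hqdef] using this
  set G : ℕ → ℝ := fun t => ∑ k ∈ range (N + 1), g k * q t k with hGdef
  have hGnn : ∀ t, 0 ≤ G t := by
    intro t
    refine Finset.sum_nonneg fun k hk => ?_
    simp only [mem_range, Nat.lt_succ_iff] at hk
    exact mul_nonneg (hgnn k hk) (hqnn t k)
  have hGstep : ∀ t, G (t + 1) + S t ≤ G t := by
    intro t
    have h1 : G (t + 1) = ∑ k ∈ range (N + 1), q t k * ∑ j ∈ range (N + 1), p k j * g j := by
      rw [hGdef]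
      simp only
      have e1 : ∀ j ∈ range (N + 1),
          g j * q (t + 1) j = g j * ∑ k ∈ range (N + 1), p k j * q t k := by
        intro j _
        rcases Nat.eq_zero_or_pos j with h | h
        · subst h; rw [hg0]; ring
        · rw [hq1 t j h.ne']
      rw [Finset.sum_congr rfl e1]
      simp only [Finset.mul_sum]
      rw [Finset.sum_comm]
      exact Finset.sum_congr rfl fun k _ => Finset.sum_congr rfl fun j _ => by ring
    have h2 : ∑ k ∈ range (N + 1), q t k * ∑ j ∈ range (N + 1), p k j * g j
        ≤ ∑ k ∈ range (N + 1), q t k * (g k - 1) := by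
      refine Finset.sum_le_sum fun k hk => ?_
      simp only [mem_range, Nat.lt_succ_iff] at hk
      rcases Nat.eq_zero_or_pos k with h | h
      · subst h; rw [hq0]; simp
      · exact mul_le_mul_of_nonneg_left (hgdrop k h hk) (hqnn t k)
    have h3 : ∑ k ∈ range (N + 1), q t k * (g k - 1) = G t - S t := by
      rw [hGdef, hS t]
      simp only
      rw [← Finset.sum_sub_distrib]
      exact Finset.sum_congr rfl fun k _ => by ring
    have := h1 ▸ (h2.trans_eq h3)
    linarith
  have hsum : ∀ n, G n + ∑ t ∈ range n, S t ≤ G 0 := by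
    intro n
    induction n with
    | zero => simp
    | succ n ih =>
      rw [Finset.sum_range_succ]
      have := hGstep n
      linarith
  have hG0 : G 0 ≤ g k0 * (μ B).toReal := by
    have hterm : ∀ k ∈ range (N + 1),
        g k * q 0 k ≤ if k = k0 then g k0 * (μ B).toReal else 0 := by
      intro k hk
      simp only [mem_range, Nat.lt_succ_iff] at hk
      rcases eq_or_ne k k0 with h | h
      · subst h
        rw [if_pos rfl]
        have hsub : A 0 ∩ {ω | X 0 ω = k} ⊆ B := fun ω hω => hω.1.1
        have : q 0 k ≤ (μ B).toReal :=
          ENNReal.toReal_le_toReal (hfin _) (hfin _) |>.mpr (measure_mono hsub)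
        exact mul_le_mul_of_nonneg_left this (hgnn k hk)
      · rw [if_neg h]
        have hempty : A 0 ∩ {ω | X 0 ω = k} = ∅ := by
          ext ω
          simp only [Set.mem_inter_iff, Set.mem_setOf_eq, Set.mem_empty_iff_false, iff_false,
            not_and, hAdef]
          rintro ⟨h1, -⟩ h2
          exact (h (h2.symm.trans h1)).elim
        have : q 0 k = 0 := by simp [hqdef, hempty]
        simp [this]
    calc G 0 ≤ ∑ k ∈ range (N + 1), if k = k0 then g k0 * (μ B).toReal else 0 :=
        Finset.sum_le_sum hterm
      _ = g k0 * (μ B).toReal := by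
        rw [Finset.sum_ite_eq' (range (N + 1)) k0]
        simp [Nat.lt_succ_iff, hk0]
  -- the tail sum bound
  have htsum : ∑' t, μ (A t) ≤ ENNReal.ofReal (g k0) * μ B := by
    rw [ENNReal.tsum_eq_iSup_sum]
    refine iSup_le fun s => ?_
    obtain ⟨n, hn⟩ := s.exists_nat_subset_range
    calc ∑ t ∈ s, μ (A t) ≤ ∑ t ∈ range n, μ (A t) :=
        Finset.sum_le_sum_of_subset hn
      _ = ENNReal.ofReal (∑ t ∈ range n, S t) := by
        rw [ENNReal.ofReal_sum_of_nonneg (fun _ _ => ENNReal.toReal_nonneg)]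
        exact Finset.sum_congr rfl fun t _ => (ENNReal.ofReal_toReal (hfin _)).symm
      _ ≤ ENNReal.ofReal (g k0 * (μ B).toReal) := by
        refine ENNReal.ofReal_le_ofReal ?_
        have h1 := hsum n
        have h2 := hGnn n
        linarith
      _ = ENNReal.ofReal (g k0) * μ B := by
        rw [ENNReal.ofReal_mul (hgnn k0 hk0), ENNReal.ofReal_toReal (hfin B)]
  -- hitting-time sets
  have hCm : ∀ t : ℕ, MeasurableSet {ω | (t : ℕ∞) < hitZero X ω} := by
    intro t
    have : {ω | (t : ℕ∞) < hitZero X ω}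
        = ⋂ s ∈ Finset.range (t + 1), {ω | X s ω = 0}ᶜ := by
      ext ω
      simp [lt_hitZero_iff, Nat.lt_succ_iff]
    rw [this]
    exact Finset.measurableSet_biInter _ fun s _ => (hXset s 0).compl
  have hCint : ∀ t : ℕ, {ω | (t : ℕ∞) < hitZero X ω} ∩ B = A t := by
    intro t
    ext ω
    simp only [Set.mem_inter_iff, Set.mem_setOf_eq, hAdef, hBdef, lt_hitZero_iff]
    tauto
  -- computing the conditional expectation
  have hcond : (μ[|B]) = (μ B)⁻¹ • μ.restrict B := rfl
  rw [hcond, lintegral_smul_measure]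
  have hint : ∫⁻ ω, (hitZero X ω : ENNReal) ∂(μ.restrict B) = ∑' t, μ (A t) := by
    have hrw : ∀ ω, ((hitZero X ω : ℕ∞) : ENNReal)
        = ∑' t : ℕ, Set.indicator {ω' | (t : ℕ∞) < hitZero X ω'} (fun _ => 1) ω := by
      intro ω
      rw [enatCast_eq_tsum]
      refine tsum_congr fun t => ?_
      rw [Set.indicator_apply]
      rfl
    calc ∫⁻ ω, (hitZero X ω : ENNReal) ∂(μ.restrict B)
        = ∫⁻ ω, ∑' t : ℕ, Set.indicator {ω' | (t : ℕ∞) < hitZero X ω'} (fun _ => 1) ω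
            ∂(μ.restrict B) := lintegral_congr hrw
      _ = ∑' t : ℕ, ∫⁻ ω, Set.indicator {ω' | (t : ℕ∞) < hitZero X ω'} (fun _ => 1) ω
            ∂(μ.restrict B) :=
        lintegral_tsum fun t => ((measurable_one.indicator (hCm t)).aemeasurable)
      _ = ∑' t : ℕ, (μ.restrict B) {ω | (t : ℕ∞) < hitZero X ω} := by
        refine tsum_congr fun t => ?_
        rw [lintegral_indicator (hCm t), setLIntegral_one]
      _ = ∑' t, μ (A t) := by
        refine tsum_congr fun t => ?_
        rw [Measure.restrict_apply (hCm t), hCint t]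
  rw [hint]
  have hfinal : ENNReal.ofReal (∑ k ∈ Icc 1 k0, 1 / Δ k) = ENNReal.ofReal (g k0) := by
    have he : (Icc 1 k0 : Finset ℕ) = Ioc 0 k0 := Finset.Icc_add_one_left_eq_Ioc 0 k0
    rw [he]
  rw [hfinal]
  calc (μ B)⁻¹ * ∑' t, μ (A t) ≤ (μ B)⁻¹ * (ENNReal.ofReal (g k0) * μ B) :=
      mul_le_mul_right htsum _
    _ = ENNReal.ofReal (g k0) * ((μ B)⁻¹ * μ B) := by ring
    _ = ENNReal.ofReal (g k0) := by
      rw [ENNReal.inv_mul_cancel hB0 (hfin B), mul_one]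
end

section
/- Let (X_t) be a non-increasing Markov process on {0, ..., N}, Δ : {1, ..., N} → (0, ∞) with E[X_t − X_{t+1} | X_t = k] ≤ Δ(k) for all k. Define η(k) = E[Σ_{j=X_{t+1}+1}^{k} 1/Δ(j) | X_t = k] and η* = max_{k=1,...,N} η(k). Then the first hitting time T = min{t : X_t = 0} satisfies E[T | X_0] ≥ Σ_{k=1}^{X_0} 1/(η* Δ(k)). -/
open MeasureTheory ProbabilityTheory Finset
open scoped ENNReal

/-- Variable drift theorem (lower bound, with error bound): for a non-increasing
Markov process on `{0, …, N}` whose drift from state `k` is at most `Δ k`, with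
`η k = E[∑_{j=X_{t+1}+1}^{k} 1 / Δ j | X_t = k] = ∑_{ℓ<k} p k ℓ ∑_{j=ℓ+1}^{k} 1 / Δ j`
and `η* = max_{1 ≤ k ≤ N} η k`, the first hitting time of `0` satisfies
`E[T | X_0] ≥ ∑_{k=1}^{X_0} 1 / (η* Δ k)`. -/
theorem variable_drift_lower_with_error
    {Ω : Type*} {m0 : MeasurableSpace Ω} {μ : Measure Ω} [IsProbabilityMeasure μ]
    (N : ℕ) (X : ℕ → Ω → ℕ)
    (hmeas : ∀ t, Measurable (X t))
    (hrange : ∀ t ω, X t ω ≤ N)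
    (hdec : ∀ t ω, X (t + 1) ω ≤ X t ω)
    (p : ℕ → ℕ → ℝ)
    (hp0 : ∀ k j, 0 ≤ p k j)
    (hp1 : ∀ k, k ≤ N → ∑ j ∈ range (N + 1), p k j = 1)
    (hMarkov : IsMarkovWith μ X p)
    (Δ : ℕ → ℝ)
    (hΔpos : ∀ k, 1 ≤ k → k ≤ N → 0 < Δ k)
    (hdrift : ∀ k, 1 ≤ k → k ≤ N →
      ∑ j ∈ range (N + 1), p k j * ((k : ℝ) - j) ≤ Δ k)
    (ηstar : ℝ)
    (hηstar : IsGreatest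
      ((fun k => ∑ l ∈ range k, p k l * ∑ j ∈ Icc (l + 1) k, 1 / Δ j) ''
        (Set.Icc 1 N)) ηstar) :
    ∀ k0, k0 ≤ N → μ {ω | X 0 ω = k0} ≠ 0 →
      ENNReal.ofReal (∑ k ∈ Icc 1 k0, 1 / (ηstar * Δ k))
        ≤ ∫⁻ ω, (hitZero X ω : ENNReal) ∂(μ[|{ω | X 0 ω = k0}]) := by
  intro k0 hk0N hA0
  -- basic positivity facts
  have hΔinv : ∀ j, 1 ≤ j → j ≤ N → (0:ℝ) ≤ 1 / Δ j := fun j h1 h2 =>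
    le_of_lt (one_div_pos.mpr (hΔpos j h1 h2))
  have hsumIoc : ∀ l k, k ≤ N → (0:ℝ) ≤ ∑ j ∈ Ioc l k, 1 / Δ j := by
    intro l k hk
    refine Finset.sum_nonneg fun j hj => ?_
    rw [mem_Ioc] at hj
    exact hΔinv j (by omega) (le_trans hj.2 hk)
  have hηk_nonneg : ∀ k, k ≤ N →
      0 ≤ ∑ l ∈ range k, p k l * ∑ j ∈ Icc (l + 1) k, 1 / Δ j := by
    intro k hk
    refine Finset.sum_nonneg fun l _ => mul_nonneg (hp0 _ _) ?_
    rw [Finset.Icc_add_one_left_eq_Ioc]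
    exact hsumIoc l k hk
  obtain ⟨kw, hkwmem, hkweq⟩ := hηstar.1
  rw [Set.mem_Icc] at hkwmem
  have hηnonneg : 0 ≤ ηstar := hkweq ▸ hηk_nonneg kw hkwmem.2
  rcases eq_or_lt_of_le hηnonneg with hη0 | hηpos
  · -- ηstar = 0 : LHS is 0
    have hz : ∀ k ∈ Icc 1 k0, (1:ℝ) / (ηstar * Δ k) = 0 := by
      intro k _; rw [← hη0, zero_mul, div_zero]
    rw [Finset.sum_congr rfl hz, Finset.sum_const_zero, ENNReal.ofReal_zero]
    exact zero_le
  -- main case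
  set A : Set Ω := {ω | X 0 ω = k0} with hA
  set ν : Measure Ω := μ[|A] with hν
  have hmSet : ∀ t k, MeasurableSet {ω | X t ω = k} := fun t k =>
    hmeas t (measurableSet_singleton k)
  have hmA : MeasurableSet A := hmSet 0 k0
  have hmNe : ∀ t, MeasurableSet {ω | X t ω ≠ 0} := fun t => (hmSet t 0).compl
  have hμA_ne_top : μ A ≠ ⊤ := measure_ne_top μ A
  have hνdef : ∀ S : Set Ω, ν S = (μ A)⁻¹ * μ (A ∩ S) := fun S => cond_apply hmA μ S
  -- Markov under ν
  have hAcomap : ∀ t : ℕ, MeasurableSet[MeasurableSpace.comap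
      (fun ω (i : Fin (t + 1)) => X i ω) inferInstance] A := by
    intro t
    refine ⟨(fun f : Fin (t + 1) → ℕ => f ⟨0, t.succ_pos⟩) ⁻¹' {k0},
      (measurable_pi_apply _) (measurableSet_singleton k0), ?_⟩
    ext ω; simp [hA]
  have hq : ∀ t k j, ν ({ω | X t ω = k} ∩ {ω | X (t + 1) ω = j})
      = ENNReal.ofReal (p k j) * ν {ω | X t ω = k} := by
    intro t k j
    have h1 := hMarkov t k j A (hAcomap t)
    rw [hνdef, hνdef, ← Set.inter_assoc, h1]
    ring
  have hZ : ∀ t k j, k < j → ν ({ω | X t ω = k} ∩ {ω | X (t + 1) ω = j}) = 0 := by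
    intro t k j hkj
    refine measure_mono_null ?_ measure_empty
    rintro ω ⟨h1, h2⟩
    have := hdec t ω
    rw [Set.mem_setOf_eq] at h1 h2
    rw [h1, h2] at this
    omega
  -- partition lemma
  have hpart : ∀ (t : ℕ) (E : Set Ω), MeasurableSet E →
      ν E = ∑ j ∈ range (N + 1), ν (E ∩ {ω | X t ω = j}) := by
    intro t E hE
    rw [← measure_biUnion_finset ?_ (fun j _ => hE.inter (hmSet t j))]
    · congr 1
      ext ω
      simp only [Set.mem_iUnion, mem_range, Set.mem_inter_iff, Set.mem_setOf_eq]
      constructor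
      · intro hω; exact ⟨X t ω, Nat.lt_succ_of_le (hrange t ω), hω, rfl⟩
      · rintro ⟨j, _, h, _⟩; exact h
    · intro i _ j _ hij
      simp only [Function.onFun]
      apply Set.disjoint_left.mpr
      rintro ω ⟨_, h1⟩ ⟨_, h2⟩
      rw [Set.mem_setOf_eq] at h1 h2
      exact hij (h1 ▸ h2 ▸ rfl)
  have hνA1 : ν A = 1 := by
    rw [hνdef, Set.inter_self]
    exact ENNReal.inv_mul_cancel hA0 hμA_ne_top
  -- the potential function
  set G : ℕ → ℝ := fun k => ∑ j ∈ Ioc 0 k, 1 / Δ j with hGdef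
  have hGdiff : ∀ j k, j ≤ k → G k - G j = ∑ i ∈ Ioc j k, 1 / Δ i := by
    intro j k hjk
    have h := Finset.sum_Ioc_consecutive (fun i => 1 / Δ i) (Nat.zero_le j) hjk
    simp only [hGdef]
    linarith
  have hGnonneg : ∀ k, k ≤ N → 0 ≤ G k := fun k hk => hsumIoc 0 k hk
  have hG0 : G 0 = 0 := by simp [hGdef]
  set S : ℕ → ℝ≥0∞ := fun t =>
    ∑ k ∈ range (N + 1), ENNReal.ofReal (G k) * ν {ω | X t ω = k} with hS
  -- S 0
  have hS0 : S 0 = ENNReal.ofReal (G k0) := by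
    simp only [hS]
    rw [Finset.sum_eq_single k0]
    · have : ({ω | X 0 ω = k0} : Set Ω) = A := rfl
      rw [this, hνA1, mul_one]
    · intro k _ hk
      have he : A ∩ {ω | X 0 ω = k} = ∅ := by
        ext ω
        simp only [hA, Set.mem_inter_iff, Set.mem_setOf_eq, Set.mem_empty_iff_false, iff_false,
          not_and]
        intro h1 h2; exact hk (h2 ▸ h1 ▸ rfl)
      rw [hνdef, he, measure_empty, mul_zero, mul_zero]
    · intro h
      exact absurd (mem_range.mpr (Nat.lt_succ_of_le hk0N)) h
  -- one step inequality
  have hstep : ∀ t, S t ≤ S (t + 1) + ENNReal.ofReal ηstar * ν {ω | X t ω ≠ 0} := by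
    intro t
    have e1 : S t = ∑ k ∈ range (N + 1), ∑ j ∈ range (N + 1),
        ENNReal.ofReal (G k) * ν ({ω | X t ω = k} ∩ {ω | X (t + 1) ω = j}) := by
      rw [hS]
      refine Finset.sum_congr rfl fun k _ => ?_
      rw [hpart (t + 1) _ (hmSet t k), Finset.mul_sum]
    have e2 : S (t + 1) = ∑ k ∈ range (N + 1), ∑ j ∈ range (N + 1),
        ENNReal.ofReal (G j) * ν ({ω | X t ω = k} ∩ {ω | X (t + 1) ω = j}) := by
      rw [hS, Finset.sum_comm]
      refine Finset.sum_congr rfl fun j _ => ?_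
      rw [hpart t _ (hmSet (t + 1) j), Finset.mul_sum]
      refine Finset.sum_congr rfl fun k _ => ?_
      rw [Set.inter_comm]
    rw [e1, e2]
    have key : ∀ k ∈ range (N + 1), ∀ j ∈ range (N + 1),
        ENNReal.ofReal (G k) * ν ({ω | X t ω = k} ∩ {ω | X (t + 1) ω = j})
        ≤ (ENNReal.ofReal (G j) + ENNReal.ofReal (G k - G j))
            * ν ({ω | X t ω = k} ∩ {ω | X (t + 1) ω = j}) := by
      intro k _ j _
      refine mul_le_mul_left ?_ _
      calc ENNReal.ofReal (G k) = ENNReal.ofReal (G j + (G k - G j)) := by ring_nf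
        _ ≤ _ := ENNReal.ofReal_add_le
    calc ∑ k ∈ range (N + 1), ∑ j ∈ range (N + 1),
          ENNReal.ofReal (G k) * ν ({ω | X t ω = k} ∩ {ω | X (t + 1) ω = j})
        ≤ ∑ k ∈ range (N + 1), ∑ j ∈ range (N + 1),
          (ENNReal.ofReal (G j) + ENNReal.ofReal (G k - G j))
            * ν ({ω | X t ω = k} ∩ {ω | X (t + 1) ω = j}) := by
          refine Finset.sum_le_sum fun k hk => Finset.sum_le_sum fun j hj => key k hk j hj
      _ = (∑ k ∈ range (N + 1), ∑ j ∈ range (N + 1),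
            ENNReal.ofReal (G j) * ν ({ω | X t ω = k} ∩ {ω | X (t + 1) ω = j}))
          + ∑ k ∈ range (N + 1), ∑ j ∈ range (N + 1),
            ENNReal.ofReal (G k - G j) * ν ({ω | X t ω = k} ∩ {ω | X (t + 1) ω = j}) := by
          rw [← Finset.sum_add_distrib]
          refine Finset.sum_congr rfl fun k _ => ?_
          rw [← Finset.sum_add_distrib]
          refine Finset.sum_congr rfl fun j _ => ?_
          rw [add_mul]
      _ ≤ _ := by
          refine add_le_add_right ?_ _
          -- bound the error sum
          have hbound : ∀ k ∈ range (N + 1),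
              ∑ j ∈ range (N + 1),
                ENNReal.ofReal (G k - G j) * ν ({ω | X t ω = k} ∩ {ω | X (t + 1) ω = j})
              ≤ ENNReal.ofReal ηstar * ν ({ω | X t ω ≠ 0} ∩ {ω | X t ω = k}) := by
            intro k hkmem
            rw [mem_range] at hkmem
            rcases Nat.eq_zero_or_pos k with hk0 | hkpos
            · subst hk0
              have : ∀ j ∈ range (N + 1),
                  ENNReal.ofReal (G 0 - G j) * ν ({ω | X t ω = 0} ∩ {ω | X (t + 1) ω = j})
                  = 0 := by
                intro j hj
                rw [mem_range] at hj
                have : G 0 - G j ≤ 0 := by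
                  have := hGnonneg j (by omega); rw [hG0]; linarith
                rw [ENNReal.ofReal_eq_zero.mpr this, zero_mul]
              rw [Finset.sum_congr rfl this, Finset.sum_const_zero]
              exact zero_le
            · have hseq : ({ω | X t ω ≠ 0} : Set Ω) ∩ {ω | X t ω = k} = {ω | X t ω = k} := by
                ext ω
                simp only [Set.mem_inter_iff, Set.mem_setOf_eq, and_iff_right_iff_imp]
                intro h; rw [h]; omega
              rw [hseq]
              have hkN : k ≤ N := by omega
              -- restrict the sum to j ≤ k
              have hsub : ∑ j ∈ range (N + 1),
                  ENNReal.ofReal (G k - G j) * ν ({ω | X t ω = k} ∩ {ω | X (t + 1) ω = j})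
                  = ∑ j ∈ range (k + 1),
                  ENNReal.ofReal (G k - G j) * ν ({ω | X t ω = k} ∩ {ω | X (t + 1) ω = j}) := by
                symm
                refine Finset.sum_subset ?_ ?_
                · intro j hj; rw [mem_range] at *; omega
                · intro j _ hj
                  rw [mem_range] at hj
                  rw [hZ t k j (by omega), mul_zero]
              rw [hsub]
              have hterm : ∀ j ∈ range (k + 1),
                  ENNReal.ofReal (G k - G j) * ν ({ω | X t ω = k} ∩ {ω | X (t + 1) ω = j})
                  = ENNReal.ofReal ((G k - G j) * p k j) * ν {ω | X t ω = k} := by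
                intro j hj
                rw [mem_range] at hj
                have hnn : 0 ≤ G k - G j := by
                  rw [hGdiff j k (by omega)]; exact hsumIoc j k hkN
                rw [hq, ENNReal.ofReal_mul hnn, mul_assoc]
              rw [Finset.sum_congr rfl hterm, ← Finset.sum_mul,
                ← ENNReal.ofReal_sum_of_nonneg]
              · refine mul_le_mul_left (ENNReal.ofReal_le_ofReal ?_) _
                have hlast : ∑ j ∈ range (k + 1), (G k - G j) * p k j
                    = ∑ j ∈ range k, (G k - G j) * p k j := by
                  rw [Finset.sum_range_succ, sub_self, zero_mul, add_zero]
                have hηk : ∑ j ∈ range k, (G k - G j) * p k j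
                    = ∑ l ∈ range k, p k l * ∑ j ∈ Icc (l + 1) k, 1 / Δ j := by
                  refine Finset.sum_congr rfl fun l hl => ?_
                  rw [mem_range] at hl
                  rw [hGdiff l k (by omega), Finset.Icc_add_one_left_eq_Ioc, mul_comm]
                rw [hlast, hηk]
                exact hηstar.2 ⟨k, Set.mem_Icc.mpr ⟨hkpos, hkN⟩, rfl⟩
              · intro j hj
                rw [mem_range] at hj
                refine mul_nonneg ?_ (hp0 _ _)
                rw [hGdiff j k (by omega)]; exact hsumIoc j k hkN
          calc ∑ k ∈ range (N + 1), ∑ j ∈ range (N + 1),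
                ENNReal.ofReal (G k - G j) * ν ({ω | X t ω = k} ∩ {ω | X (t + 1) ω = j})
              ≤ ∑ k ∈ range (N + 1),
                ENNReal.ofReal ηstar * ν ({ω | X t ω ≠ 0} ∩ {ω | X t ω = k}) :=
                Finset.sum_le_sum hbound
            _ = ENNReal.ofReal ηstar * ν {ω | X t ω ≠ 0} := by
                rw [← Finset.mul_sum, ← hpart t _ (hmNe t)]
  -- iterate
  have hiter : ∀ m, S 0 ≤ S m
      + ENNReal.ofReal ηstar * ∑ t ∈ range m, ν {ω | X t ω ≠ 0} := by
    intro m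
    induction m with
    | zero => simp
    | succ m ih =>
      refine ih.trans ?_
      calc S m + ENNReal.ofReal ηstar * ∑ t ∈ range m, ν {ω | X t ω ≠ 0}
          ≤ (S (m + 1) + ENNReal.ofReal ηstar * ν {ω | X m ω ≠ 0})
            + ENNReal.ofReal ηstar * ∑ t ∈ range m, ν {ω | X t ω ≠ 0} :=
            add_le_add_left (hstep m) _
        _ = S (m + 1) + ENNReal.ofReal ηstar * ∑ t ∈ range (m + 1), ν {ω | X t ω ≠ 0} := by
            rw [Finset.sum_range_succ, mul_add]; ring
  -- hitting time facts
  have hanti : ∀ (ω : Ω) (s t : ℕ), s ≤ t → X t ω ≤ X s ω := by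
    intro ω s t hst
    induction t with
    | zero => interval_cases s; exact le_rfl
    | succ t ih =>
      rcases Nat.lt_succ_iff_lt_or_eq.mp (Nat.lt_succ_of_le hst) with h | h
      · exact le_trans (hdec t ω) (ih (by omega))
      · rw [h]
  have hhit : ∀ (t : ℕ) (ω : Ω), X t ω ≠ 0 ↔ (t : ℕ∞) < hitZero X ω := by
    intro t ω
    constructor
    · intro h
      have h1 : ((t + 1 : ℕ) : ℕ∞) ≤ hitZero X ω := by
        refine le_iInf fun s => le_iInf fun hs => ?_
        have hts : t < s := by
          by_contra hc
          push_neg at hc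
          exact h (Nat.le_zero.mp (hs ▸ hanti ω s t hc))
        exact_mod_cast hts
      calc (t : ℕ∞) < ((t + 1 : ℕ) : ℕ∞) := by exact_mod_cast Nat.lt_succ_self t
        _ ≤ _ := h1
    · intro h hX0
      have h2 : hitZero X ω ≤ (t : ℕ∞) := iInf_le_of_le t (iInf_le_of_le hX0 le_rfl)
      exact absurd (lt_of_lt_of_le h h2) (lt_irrefl _)
  -- sums of survival probabilities are below the expectation
  have hsum_le : ∀ m, ∑ t ∈ range m, ν {ω | X t ω ≠ 0}
      ≤ ∫⁻ ω, (hitZero X ω : ENNReal) ∂ν := by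
    intro m
    have hind : ∀ t, ν {ω | X t ω ≠ 0}
        = ∫⁻ ω, Set.indicator {ω | X t ω ≠ 0} (fun _ => (1 : ℝ≥0∞)) ω ∂ν := by
      intro t
      rw [lintegral_indicator (hmNe t), setLIntegral_one]
    calc ∑ t ∈ range m, ν {ω | X t ω ≠ 0}
        = ∑ t ∈ range m,
            ∫⁻ ω, Set.indicator {ω | X t ω ≠ 0} (fun _ => (1 : ℝ≥0∞)) ω ∂ν :=
          Finset.sum_congr rfl fun t _ => hind t
      _ = ∫⁻ ω, ∑ t ∈ range m,
            Set.indicator {ω | X t ω ≠ 0} (fun _ => (1 : ℝ≥0∞)) ω ∂ν :=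
          (lintegral_finset_sum (range m)
            (f := fun t ω => Set.indicator {ω | X t ω ≠ 0} (fun _ => (1 : ℝ≥0∞)) ω)
            (fun t _ => (measurable_one.indicator (hmNe t)))).symm
      _ ≤ ∫⁻ ω, (hitZero X ω : ENNReal) ∂ν := by
          refine lintegral_mono fun ω => ?_
          cases hn : hitZero X ω with
          | top => simp only [hn]; exact le_top
          | coe c =>
            have hcast : ∀ t : ℕ, ((t : ℕ∞) < hitZero X ω) ↔ t < c := by
              intro t; rw [hn]; exact_mod_cast Iff.rfl
            calc ∑ t ∈ range m, Set.indicator {ω | X t ω ≠ 0} (fun _ => (1 : ℝ≥0∞)) ω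
                = ∑ t ∈ range m, (if t < c then (1 : ℝ≥0∞) else 0) := by
                  refine Finset.sum_congr rfl fun t _ => ?_
                  rw [Set.indicator_apply]
                  congr 1
                  simp only [Set.mem_setOf_eq, hhit t ω, hcast t]
              _ ≤ ((c : ℕ) : ℝ≥0∞) := by
                  rw [Finset.sum_boole]
                  have h1 : ((range m).filter (fun t => t < c)).card ≤ c := by
                    calc ((range m).filter (fun t => t < c)).card ≤ (range c).card :=
                        Finset.card_le_card (fun t ht => mem_range.mpr (mem_filter.mp ht).2)
                      _ = c := Finset.card_range c
                  exact_mod_cast h1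
              _ = ((c : ℕ∞) : ℝ≥0∞) := (ENat.toENNReal_coe c).symm
  -- bound S m by the survival probability
  have hSm : ∀ m, S m ≤ ENNReal.ofReal (G N) * ν {ω | X m ω ≠ 0} := by
    intro m
    have hterm : ∀ k ∈ range (N + 1),
        ENNReal.ofReal (G k) * ν {ω | X m ω = k}
        ≤ ENNReal.ofReal (G N) * ν ({ω | X m ω ≠ 0} ∩ {ω | X m ω = k}) := by
      intro k hk
      rw [mem_range] at hk
      rcases Nat.eq_zero_or_pos k with h0 | hpos
      · subst h0
        rw [hG0, ENNReal.ofReal_zero, zero_mul]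
        exact zero_le
      · have hseq : ({ω | X m ω ≠ 0} : Set Ω) ∩ {ω | X m ω = k} = {ω | X m ω = k} := by
          ext ω
          simp only [Set.mem_inter_iff, Set.mem_setOf_eq, and_iff_right_iff_imp]
          intro h; rw [h]; omega
        rw [hseq]
        refine mul_le_mul_left (ENNReal.ofReal_le_ofReal ?_) _
        have := hGdiff k N (by omega)
        have := hsumIoc k N le_rfl
        linarith
    calc S m ≤ ∑ k ∈ range (N + 1),
          ENNReal.ofReal (G N) * ν ({ω | X m ω ≠ 0} ∩ {ω | X m ω = k}) :=
        Finset.sum_le_sum hterm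
      _ = ENNReal.ofReal (G N) * ν {ω | X m ω ≠ 0} := by
        rw [← Finset.mul_sum, ← hpart m _ (hmNe m)]
  -- main limiting argument
  rcases eq_or_ne (∫⁻ ω, (hitZero X ω : ENNReal) ∂ν) ⊤ with htop | hfin
  · rw [htop]; exact le_top
  have htsum : ∑' t, ν {ω | X t ω ≠ 0} ≤ ∫⁻ ω, (hitZero X ω : ENNReal) ∂ν := by
    rw [ENNReal.tsum_eq_iSup_nat]
    exact iSup_le hsum_le
  have hto0 : Filter.Tendsto (fun t => ν {ω | X t ω ≠ 0}) Filter.atTop (nhds 0) :=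
    ENNReal.tendsto_atTop_zero_of_tsum_ne_top
      (lt_of_le_of_lt htsum (lt_top_iff_ne_top.mpr hfin)).ne
  have hSto0 : Filter.Tendsto S Filter.atTop (nhds 0) := by
    have h2 : Filter.Tendsto (fun m => ENNReal.ofReal (G N) * ν {ω | X m ω ≠ 0})
        Filter.atTop (nhds 0) := by
      have := ENNReal.Tendsto.const_mul (a := ENNReal.ofReal (G N)) hto0
        (Or.inr ENNReal.ofReal_ne_top)
      simpa using this
    exact tendsto_of_tendsto_of_tendsto_of_le_of_le tendsto_const_nhds h2
      (fun m => zero_le) hSm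
  have hfin2 : ∀ m, S 0 ≤ S m
      + ENNReal.ofReal ηstar * ∫⁻ ω, (hitZero X ω : ENNReal) ∂ν := fun m =>
    (hiter m).trans (add_le_add_right (mul_le_mul_right (hsum_le m) _) _)
  have hmain : ENNReal.ofReal (G k0)
      ≤ ENNReal.ofReal ηstar * ∫⁻ ω, (hitZero X ω : ENNReal) ∂ν := by
    have hlim : Filter.Tendsto
        (fun m => S m + ENNReal.ofReal ηstar * ∫⁻ ω, (hitZero X ω : ENNReal) ∂ν)
        Filter.atTop (nhds (0 + ENNReal.ofReal ηstar * ∫⁻ ω, (hitZero X ω : ENNReal) ∂ν)) :=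
      hSto0.add_const _
    have := ge_of_tendsto' hlim hfin2
    rw [zero_add] at this
    rw [← hS0]
    exact this
  -- conclude
  have hsum_eq : ∑ k ∈ Icc 1 k0, 1 / (ηstar * Δ k) = ηstar⁻¹ * G k0 := by
    rw [hGdef]
    simp only
    rw [Finset.mul_sum, ← Finset.Icc_add_one_left_eq_Ioc]
    exact Finset.sum_congr rfl fun k _ => by rw [one_div, mul_inv, one_div]
  rw [hsum_eq, ENNReal.ofReal_mul (inv_nonneg.mpr hηnonneg)]
  calc ENNReal.ofReal ηstar⁻¹ * ENNReal.ofReal (G k0)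
      ≤ ENNReal.ofReal ηstar⁻¹ * (ENNReal.ofReal ηstar * ∫⁻ ω, (hitZero X ω : ENNReal) ∂ν) :=
        mul_le_mul_right hmain _
    _ = (ENNReal.ofReal ηstar⁻¹ * ENNReal.ofReal ηstar) * ∫⁻ ω, (hitZero X ω : ENNReal) ∂ν := by
        rw [mul_assoc]
    _ = ∫⁻ ω, (hitZero X ω : ENNReal) ∂ν := by
        rw [← ENNReal.ofReal_mul (inv_nonneg.mpr hηnonneg), inv_mul_cancel₀ hηpos.ne',
          ENNReal.ofReal_one, one_mul]
end

section
/- Let (X_t) be a non-increasing Markov process on {0, ..., N}, Δ : {1, ..., N} → (0, ∞) with E[X_t − X_{t+1} | X_t = k] ≥ Δ(k) for all k. Define η(k) = E[Σ_{j=X_{t+1}+1}^{k} 1/Δ(j) | X_t = k] and η* = min_{k=1,...,N} η(k). Then the first hitting time T = min{t : X_t = 0} satisfies E[T | X_0] ≤ Σ_{k=1}^{X_0} 1/(η* Δ(k)). -/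
open MeasureTheory ProbabilityTheory Finset

private lemma sum_Icc_split (f : ℕ → ℝ) {j k : ℕ} (h : j ≤ k) :
    ∑ i ∈ Icc 1 k, f i = (∑ i ∈ Icc 1 j, f i) + ∑ i ∈ Icc (j + 1) k, f i := by
  have e1 : Icc 1 k = Ioc 0 k := by ext x; simp [Nat.lt_iff_add_one_le]
  have e2 : Icc 1 j = Ioc 0 j := by ext x; simp [Nat.lt_iff_add_one_le]
  have e3 : Icc (j + 1) k = Ioc j k := by ext x; simp only [mem_Icc, mem_Ioc]; omega
  rw [e1, e2, e3, Finset.sum_Ioc_consecutive f (Nat.zero_le j) h]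

private lemma keyReal (N k : ℕ) (hk1 : 1 ≤ k) (hkN : k ≤ N)
    (p : ℕ → ℝ) (hp0 : ∀ j, 0 ≤ p j) (hp1 : ∑ j ∈ range (N + 1), p j = 1)
    (hpz : ∀ j, k < j → j ≤ N → p j = 0)
    (Δ : ℕ → ℝ) (hΔpos : ∀ i, 1 ≤ i → i ≤ N → 0 < Δ i)
    (η : ℝ) (hη : 0 < η)
    (hlb : η ≤ ∑ l ∈ range k, p l * ∑ j ∈ Icc (l + 1) k, 1 / Δ j) :
    1 + ∑ j ∈ range (N + 1), p j * (∑ i ∈ Icc 1 j, 1 / (η * Δ i))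
      ≤ ∑ i ∈ Icc 1 k, 1 / (η * Δ i) := by
  set G : ℕ → ℝ := fun j => ∑ i ∈ Icc 1 j, 1 / (η * Δ i) with hG
  have hsub : range (k + 1) ⊆ range (N + 1) := by
    apply Finset.range_subset_range.mpr; omega
  have hrestrict : ∀ f : ℕ → ℝ,
      ∑ j ∈ range (N + 1), p j * f j = ∑ j ∈ range (k + 1), p j * f j := by
    intro f
    refine (Finset.sum_subset hsub ?_).symm
    intro j hj hj'
    rw [mem_range] at hj hj'
    rw [hpz j (by omega) (by omega), zero_mul]
  have hp1' : ∑ j ∈ range (k + 1), p j = 1 := by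
    have h := hrestrict (fun _ => 1)
    simp only [mul_one] at h
    rw [← h, hp1]
  -- core computation
  have hsplit : ∀ j ≤ k, G k - G j = η⁻¹ * ∑ i ∈ Icc (j + 1) k, 1 / Δ i := by
    intro j hj
    rw [hG]
    simp only
    rw [sum_Icc_split (fun i => 1 / (η * Δ i)) hj]
    have : ∑ i ∈ Icc (j + 1) k, 1 / (η * Δ i)
        = η⁻¹ * ∑ i ∈ Icc (j + 1) k, 1 / Δ i := by
      rw [Finset.mul_sum]
      refine Finset.sum_congr rfl fun i _ => ?_
      field_simp
    rw [this]; ring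
  have hkey : 1 ≤ ∑ j ∈ range (k + 1), p j * (G k - G j) := by
    have e : ∑ j ∈ range (k + 1), p j * (G k - G j)
        = η⁻¹ * ∑ j ∈ range k, p j * ∑ i ∈ Icc (j + 1) k, 1 / Δ i := by
      rw [Finset.sum_range_succ]
      have hzk : G k - G k = 0 := sub_self _
      rw [hzk, mul_zero, add_zero, Finset.mul_sum]
      refine Finset.sum_congr rfl fun j hj => ?_
      rw [mem_range] at hj
      rw [hsplit j (le_of_lt hj)]; ring
    rw [e]
    have h2 : η⁻¹ * η ≤ η⁻¹ * ∑ j ∈ range k, p j * ∑ i ∈ Icc (j + 1) k, 1 / Δ i :=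
      mul_le_mul_of_nonneg_left hlb (le_of_lt (inv_pos.mpr hη))
    rwa [inv_mul_cancel₀ (ne_of_gt hη)] at h2
  have hexp : ∑ j ∈ range (k + 1), p j * (G k - G j)
      = G k - ∑ j ∈ range (k + 1), p j * G j := by
    have hc : ∀ j ∈ range (k + 1), p j * (G k - G j) = p j * G k - p j * G j := by
      intro j _; ring
    rw [Finset.sum_congr rfl hc, Finset.sum_sub_distrib, ← Finset.sum_mul, hp1', one_mul]
  rw [hrestrict]
  have := hexp ▸ hkey
  linarith

private lemma hit_pointwise {Ω : Type*} (X : ℕ → Ω → ℕ)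
    (hdec : ∀ t ω, X (t + 1) ω ≤ X t ω) (ω : Ω) :
    ((hitZero X ω : ℕ∞) : ENNReal)
      = ∑' t, Set.indicator {ω' | X t ω' ≠ 0} (fun _ => (1 : ENNReal)) ω := by
  have hanti : ∀ s t, s ≤ t → X t ω ≤ X s ω := fun s t h =>
    antitone_nat_of_succ_le (f := fun u => X u ω) (fun n => hdec n ω) h
  by_cases h : ∃ t, X t ω = 0
  · set n := Nat.find h with hn
    have hn0 : X n ω = 0 := Nat.find_spec h
    have hlt : ∀ t < n, X t ω ≠ 0 := fun t ht => Nat.find_min h ht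
    have hge : ∀ t, n ≤ t → X t ω = 0 := fun t ht =>
      Nat.le_zero.mp (hn0 ▸ hanti n t ht)
    have h1 : hitZero X ω = (n : ℕ∞) := by
      apply le_antisymm
      · unfold hitZero
        exact iInf_le_of_le n (by simp [hn0])
      · refine le_iInf fun t => le_iInf fun ht => ?_
        have hle := Nat.find_le (h := h) ht
        exact_mod_cast hle
    rw [h1, ENat.toENNReal_coe]
    have h2 : ∑' t, Set.indicator {ω' | X t ω' ≠ 0} (fun _ => (1 : ENNReal)) ω
        = ∑ t ∈ range n, (1 : ENNReal) := by
      rw [tsum_eq_sum (s := range n) ?_]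
      · refine Finset.sum_congr rfl fun t ht => ?_
        rw [mem_range] at ht
        simp [Set.indicator, hlt t ht]
      · intro t ht
        rw [mem_range, not_lt] at ht
        simp [Set.indicator, hge t ht]
    rw [h2]
    simp
  · push_neg at h
    have h1 : hitZero X ω = ⊤ := by
      unfold hitZero
      simp [h]
    rw [h1, ENat.toENNReal_top]
    have : ∀ t, Set.indicator {ω' | X t ω' ≠ 0} (fun _ => (1 : ENNReal)) ω = 1 := by
      intro t; simp [Set.indicator, h t]
    rw [tsum_congr this, ENNReal.tsum_const_eq_top_of_ne_zero one_ne_zero]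

/-- Variable drift theorem (upper bound, with error bound): for a non-increasing
Markov process on `{0, …, N}` whose drift from state `k` is at least `Δ k`, with
`η k = E[∑_{j=X_{t+1}+1}^{k} 1 / Δ j | X_t = k] = ∑_{ℓ<k} p k ℓ ∑_{j=ℓ+1}^{k} 1 / Δ j`
and `η* = min_{1 ≤ k ≤ N} η k`, the first hitting time of `0` satisfies
`E[T | X_0] ≤ ∑_{k=1}^{X_0} 1 / (η* Δ k)`. -/
theorem variable_drift_upper_with_error
    {Ω : Type*} {m0 : MeasurableSpace Ω} {μ : Measure Ω} [IsProbabilityMeasure μ]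
    (N : ℕ) (X : ℕ → Ω → ℕ)
    (hmeas : ∀ t, Measurable (X t))
    (hrange : ∀ t ω, X t ω ≤ N)
    (hdec : ∀ t ω, X (t + 1) ω ≤ X t ω)
    (p : ℕ → ℕ → ℝ)
    (hp0 : ∀ k j, 0 ≤ p k j)
    (hp1 : ∀ k, k ≤ N → ∑ j ∈ range (N + 1), p k j = 1)
    (hMarkov : IsMarkovWith μ X p)
    (Δ : ℕ → ℝ)
    (hΔpos : ∀ k, 1 ≤ k → k ≤ N → 0 < Δ k)
    (hdrift : ∀ k, 1 ≤ k → k ≤ N →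
      Δ k ≤ ∑ j ∈ range (N + 1), p k j * ((k : ℝ) - j))
    (ηstar : ℝ)
    (hηstar : IsLeast
      ((fun k => ∑ l ∈ range k, p k l * ∑ j ∈ Icc (l + 1) k, 1 / Δ j) ''
        (Set.Icc 1 N)) ηstar) :
    ∀ k0, k0 ≤ N → μ {ω | X 0 ω = k0} ≠ 0 →
      ∫⁻ ω, (hitZero X ω : ENNReal) ∂(μ[|{ω | X 0 ω = k0}])
        ≤ ENNReal.ofReal (∑ k ∈ Icc 1 k0, 1 / (ηstar * Δ k)) := by
  intro k0 hk0 hA0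
  -- positivity of ηstar
  have hηpos : 0 < ηstar := by
    obtain ⟨ks, hks, hval⟩ := hηstar.1
    obtain ⟨hks1, hksN⟩ := hks
    have hex : ∃ l, l < ks ∧ 0 < p ks l := by
      by_contra hcon
      push_neg at hcon
      have hz : ∀ l, l < ks → p ks l = 0 := fun l hl =>
        le_antisymm (hcon l hl) (hp0 ks l)
      have hsum : ∑ j ∈ range (N + 1), p ks j * ((ks : ℝ) - j) ≤ 0 := by
        apply Finset.sum_nonpos
        intro j _
        rcases lt_or_ge j ks with hlt | hle
        · rw [hz j hlt, zero_mul]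
        · apply mul_nonpos_of_nonneg_of_nonpos (hp0 ks j)
          have : (ks : ℝ) ≤ (j : ℝ) := by exact_mod_cast hle
          linarith
      linarith [hdrift ks hks1 hksN, hΔpos ks hks1 hksN]
    obtain ⟨l, hl, hpl⟩ := hex
    rw [← hval]
    apply Finset.sum_pos'
    · intro i hi
      rw [mem_range] at hi
      apply mul_nonneg (hp0 ks i)
      apply Finset.sum_nonneg
      intro j hj
      rw [mem_Icc] at hj
      exact le_of_lt (one_div_pos.mpr (hΔpos j (by omega) (by omega)))
    · refine ⟨l, mem_range.mpr hl, mul_pos hpl ?_⟩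
      apply Finset.sum_pos
      · intro j hj
        rw [mem_Icc] at hj
        exact one_div_pos.mpr (hΔpos j (by omega) (by omega))
      · exact Finset.nonempty_Icc.mpr (by omega)
  have hηlb : ∀ k, 1 ≤ k → k ≤ N →
      ηstar ≤ ∑ l ∈ range k, p k l * ∑ j ∈ Icc (l + 1) k, 1 / Δ j := by
    intro k h1 h2
    exact hηstar.2 ⟨k, ⟨h1, h2⟩, rfl⟩
  set A : Set Ω := {ω | X 0 ω = k0} with hAdef
  have hAmeasSet : MeasurableSet A := hmeas 0 (measurableSet_singleton k0)
  have hXmeasSet : ∀ t k, MeasurableSet {ω | X t ω = k} := fun t k =>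
    hmeas t (measurableSet_singleton k)
  have hXneSet : ∀ t, MeasurableSet {ω | X t ω ≠ 0} := fun t =>
    (hXmeasSet t 0).compl
  have hAcomap : ∀ t, MeasurableSet[MeasurableSpace.comap
      (fun ω (i : Fin (t + 1)) => X i ω) inferInstance] A := by
    intro t
    refine ⟨(fun v : Fin (t + 1) → ℕ => v 0) ⁻¹' {k0},
      (measurable_pi_apply 0) (measurableSet_singleton k0), ?_⟩
    ext ω
    simp [hAdef]
  -- partition lemma
  have part : ∀ (s : ℕ) (B : Set Ω), MeasurableSet B →
      μ B = ∑ j ∈ range (N + 1), μ (B ∩ {ω | X s ω = j}) := by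
    intro s B hB
    have hU : B = ⋃ j ∈ range (N + 1), B ∩ {ω | X s ω = j} := by
      ext ω
      simp only [Set.mem_iUnion, mem_range, Set.mem_inter_iff, Set.mem_setOf_eq]
      constructor
      · intro h; exact ⟨X s ω, Nat.lt_succ_of_le (hrange s ω), h, rfl⟩
      · rintro ⟨_, _, h, _⟩; exact h
    rw [eq_comm, ← measure_biUnion_finset ?_ ?_]
    · rw [← hU]
    · intro i _ j _ hij
      simp only [Function.onFun]
      apply Set.disjoint_left.mpr
      rintro ω ⟨_, hi⟩ ⟨_, hj⟩
      exact hij (hi.symm.trans hj)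
    · intro j _
      exact hB.inter (hXmeasSet s j)
  -- potential function
  set g : ℕ → ENNReal := fun j => ENNReal.ofReal (∑ i ∈ Icc 1 j, 1 / (ηstar * Δ i))
    with hgdef
  have hGnn : ∀ j, j ≤ N → 0 ≤ ∑ i ∈ Icc 1 j, 1 / (ηstar * Δ i) := by
    intro j hj
    apply Finset.sum_nonneg
    intro i hi
    rw [mem_Icc] at hi
    have := hΔpos i hi.1 (le_trans hi.2 hj)
    positivity
  set F : ℕ → ENNReal := fun t => ∑ k ∈ range (N + 1), g k * μ (A ∩ {ω | X t ω = k})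
    with hFdef
  -- key one-step inequality
  have hstep : ∀ t, μ (A ∩ {ω | X t ω ≠ 0}) + F (t + 1) ≤ F t := by
    intro t
    have e1 : μ (A ∩ {ω | X t ω ≠ 0})
        = ∑ k ∈ range (N + 1), (if k = 0 then 0 else μ (A ∩ {ω | X t ω = k})) := by
      rw [part t _ (hAmeasSet.inter (hXneSet t))]
      refine Finset.sum_congr rfl fun k _ => ?_
      by_cases hk : k = 0
      · subst hk
        rw [if_pos rfl]
        have hem : A ∩ {ω | X t ω ≠ 0} ∩ {ω | X t ω = 0} = ∅ := by
          ext ω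
          simp only [Set.mem_inter_iff, Set.mem_setOf_eq, Set.mem_empty_iff_false,
            iff_false, not_and]
          tauto
        rw [hem, measure_empty]
      · rw [if_neg hk]
        congr 1
        ext ω
        simp only [Set.mem_inter_iff, Set.mem_setOf_eq]
        constructor
        · rintro ⟨⟨h1, _⟩, h3⟩; exact ⟨h1, h3⟩
        · rintro ⟨h1, h3⟩; exact ⟨⟨h1, h3 ▸ hk⟩, h3⟩
    have e2 : F (t + 1) = ∑ k ∈ range (N + 1), ∑ j ∈ range (N + 1),
        g j * μ (A ∩ {ω | X t ω = k} ∩ {ω | X (t + 1) ω = j}) := by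
      show (∑ j ∈ range (N + 1), g j * μ (A ∩ {ω | X (t + 1) ω = j})) = _
      rw [Finset.sum_comm]
      refine Finset.sum_congr rfl fun j _ => ?_
      rw [← Finset.mul_sum]
      congr 1
      rw [part t _ (hAmeasSet.inter (hXmeasSet (t + 1) j))]
      refine Finset.sum_congr rfl fun k _ => ?_
      congr 1
      exact Set.inter_right_comm A {ω | X (t + 1) ω = j} {ω | X t ω = k}
    rw [e1, e2, ← Finset.sum_add_distrib]
    show _ ≤ ∑ k ∈ range (N + 1), g k * μ (A ∩ {ω | X t ω = k})
    refine Finset.sum_le_sum fun k hkmem => ?_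
    rw [mem_range] at hkmem
    by_cases hk0' : k = 0
    · subst hk0'
      rw [if_pos rfl, zero_add]
      have hz : ∀ j ∈ range (N + 1),
          g j * μ (A ∩ {ω | X t ω = 0} ∩ {ω | X (t + 1) ω = j}) = 0 := by
        intro j _
        by_cases hj0 : j = 0
        · subst hj0
          have hg0 : g 0 = 0 := by simp [hgdef]
          rw [hg0, zero_mul]
        · have hem : A ∩ {ω | X t ω = 0} ∩ {ω | X (t + 1) ω = j} = ∅ := by
            ext ω
            simp only [Set.mem_inter_iff, Set.mem_setOf_eq, Set.mem_empty_iff_false,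
              iff_false, not_and]
            rintro ⟨_, h2⟩ h3
            have := hdec t ω
            omega
          rw [hem, measure_empty, mul_zero]
      rw [Finset.sum_eq_zero hz]
      exact zero_le
    · rw [if_neg hk0']
      have hk1 : 1 ≤ k := Nat.one_le_iff_ne_zero.mpr hk0'
      have hkN : k ≤ N := by omega
      by_cases hm : μ (A ∩ {ω | X t ω = k}) = 0
      · have hz : ∀ j ∈ range (N + 1),
            g j * μ (A ∩ {ω | X t ω = k} ∩ {ω | X (t + 1) ω = j}) = 0 := by
          intro j _
          have hle : μ (A ∩ {ω | X t ω = k} ∩ {ω | X (t + 1) ω = j})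
              ≤ μ (A ∩ {ω | X t ω = k}) := measure_mono Set.inter_subset_left
          rw [hm] at hle
          rw [le_antisymm hle zero_le, mul_zero]
        rw [Finset.sum_eq_zero hz, hm]
        simp
      · have hMark : ∀ j, μ (A ∩ {ω | X t ω = k} ∩ {ω | X (t + 1) ω = j})
            = ENNReal.ofReal (p k j) * μ (A ∩ {ω | X t ω = k}) :=
          fun j => hMarkov t k j A (hAcomap t)
        have hpz : ∀ j, k < j → j ≤ N → p k j = 0 := by
          intro j hkj hjN
          have hem : A ∩ {ω | X t ω = k} ∩ {ω | X (t + 1) ω = j} = ∅ := by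
            ext ω
            simp only [Set.mem_inter_iff, Set.mem_setOf_eq, Set.mem_empty_iff_false,
              iff_false, not_and]
            rintro ⟨_, h2⟩ h3
            have := hdec t ω
            omega
          have h0 : ENNReal.ofReal (p k j) * μ (A ∩ {ω | X t ω = k}) = 0 := by
            rw [← hMark j, hem, measure_empty]
          rcases mul_eq_zero.mp h0 with h | h
          · exact le_antisymm (ENNReal.ofReal_eq_zero.mp h) (hp0 k j)
          · exact absurd h hm
        have hkey : 1 + ∑ j ∈ range (N + 1), ENNReal.ofReal (p k j) * g j ≤ g k := by
          have hterm : ∀ j ∈ range (N + 1), ENNReal.ofReal (p k j) * g j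
              = ENNReal.ofReal (p k j * ∑ i ∈ Icc 1 j, 1 / (ηstar * Δ i)) := by
            intro j _
            rw [hgdef]
            exact (ENNReal.ofReal_mul (hp0 k j)).symm
          have hsumnn : 0 ≤ ∑ j ∈ range (N + 1),
              p k j * ∑ i ∈ Icc 1 j, 1 / (ηstar * Δ i) := by
            apply Finset.sum_nonneg
            intro j hj
            rw [mem_range] at hj
            exact mul_nonneg (hp0 k j) (hGnn j (by omega))
          calc 1 + ∑ j ∈ range (N + 1), ENNReal.ofReal (p k j) * g j
              = ENNReal.ofReal (1 + ∑ j ∈ range (N + 1),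
                  p k j * ∑ i ∈ Icc 1 j, 1 / (ηstar * Δ i)) := by
                rw [Finset.sum_congr rfl hterm,
                  ← ENNReal.ofReal_sum_of_nonneg (fun j hj => by
                    rw [mem_range] at hj
                    exact mul_nonneg (hp0 k j) (hGnn j (by omega))),
                  ← ENNReal.ofReal_one,
                  ← ENNReal.ofReal_add zero_le_one hsumnn]
            _ ≤ g k := ENNReal.ofReal_le_ofReal
                (keyReal N k hk1 hkN (p k) (hp0 k) (hp1 k hkN) hpz Δ hΔpos ηstar hηpos
                  (hηlb k hk1 hkN))
        calc μ (A ∩ {ω | X t ω = k})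
              + ∑ j ∈ range (N + 1), g j * μ (A ∩ {ω | X t ω = k} ∩ {ω | X (t + 1) ω = j})
            = (1 + ∑ j ∈ range (N + 1), ENNReal.ofReal (p k j) * g j)
                * μ (A ∩ {ω | X t ω = k}) := by
              rw [add_mul, one_mul, Finset.sum_mul]
              congr 1
              refine Finset.sum_congr rfl fun j _ => ?_
              rw [hMark j]
              ring
          _ ≤ g k * μ (A ∩ {ω | X t ω = k}) := mul_le_mul_left hkey _
  -- telescoping
  have htel : ∀ n, (∑ t ∈ range n, μ (A ∩ {ω | X t ω ≠ 0})) + F n ≤ F 0 := by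
    intro n
    induction n with
    | zero => simp
    | succ n ih =>
      rw [Finset.sum_range_succ, add_assoc]
      calc (∑ t ∈ range n, μ (A ∩ {ω | X t ω ≠ 0}))
            + (μ (A ∩ {ω | X n ω ≠ 0}) + F (n + 1))
          ≤ (∑ t ∈ range n, μ (A ∩ {ω | X t ω ≠ 0})) + F n :=
            add_le_add_right (hstep n) _
        _ ≤ F 0 := ih
  have hF0 : F 0 = g k0 * μ A := by
    show (∑ k ∈ range (N + 1), g k * μ (A ∩ {ω | X 0 ω = k})) = g k0 * μ A
    rw [Finset.sum_eq_single_of_mem k0 (mem_range.mpr (Nat.lt_succ_of_le hk0))]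
    · congr 1
      congr 1
      ext ω
      simp [hAdef]
    · intro k _ hk
      have : A ∩ {ω | X 0 ω = k} = ∅ := by
        ext ω
        simp only [Set.mem_inter_iff, Set.mem_setOf_eq, Set.mem_empty_iff_false, iff_false,
          not_and, hAdef]
        intro h1 h2
        exact hk (h1 ▸ h2.symm ▸ rfl)
      rw [this]
      simp
  have htsum : ∑' t, μ (A ∩ {ω | X t ω ≠ 0}) ≤ g k0 * μ A := by
    rw [ENNReal.tsum_eq_iSup_nat]
    refine iSup_le fun n => ?_
    calc ∑ t ∈ range n, μ (A ∩ {ω | X t ω ≠ 0})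
        ≤ (∑ t ∈ range n, μ (A ∩ {ω | X t ω ≠ 0})) + F n := le_self_add
      _ ≤ F 0 := htel n
      _ = g k0 * μ A := hF0
  -- integral computation
  have hint : ∫⁻ ω, (hitZero X ω : ENNReal) ∂(μ[|A])
      = (μ A)⁻¹ * ∑' t, μ (A ∩ {ω | X t ω ≠ 0}) := by
    have hpt : ∀ ω, ((hitZero X ω : ℕ∞) : ENNReal)
        = ∑' t, Set.indicator {ω' | X t ω' ≠ 0} (fun _ => (1 : ENNReal)) ω :=
      hit_pointwise X hdec
    rw [ProbabilityTheory.cond]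
    rw [lintegral_smul_measure]
    congr 1
    calc ∫⁻ ω, (hitZero X ω : ENNReal) ∂(μ.restrict A)
        = ∫⁻ ω, ∑' t, Set.indicator {ω' | X t ω' ≠ 0} (fun _ => (1 : ENNReal)) ω
            ∂(μ.restrict A) := by
          exact lintegral_congr hpt
      _ = ∑' t, ∫⁻ ω, Set.indicator {ω' | X t ω' ≠ 0} (fun _ => (1 : ENNReal)) ω
            ∂(μ.restrict A) := by
          apply lintegral_tsum
          intro t
          exact (measurable_const.indicator (hXneSet t)).aemeasurable
      _ = ∑' t, μ (A ∩ {ω | X t ω ≠ 0}) := by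
          refine tsum_congr fun t => ?_
          rw [lintegral_indicator (hXneSet t)]
          simp only [lintegral_const, one_mul, MeasurableSet.univ, Measure.restrict_apply,
            Set.univ_inter]
          rw [Measure.restrict_apply (hXneSet t)]
          rw [Set.inter_comm]
  rw [hint]
  calc (μ A)⁻¹ * ∑' t, μ (A ∩ {ω | X t ω ≠ 0})
      ≤ (μ A)⁻¹ * (g k0 * μ A) := mul_le_mul_right htsum _
    _ = g k0 * ((μ A)⁻¹ * μ A) := by ring
    _ = g k0 := by
        rw [ENNReal.inv_mul_cancel hA0 (measure_ne_top μ A), mul_one]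
end

section
/- For k ∈ {0, ..., n+1} and n ≥ 1, the normalized drift Δ*_n(k) := Σ_{ℓ=1}^{k} C(k,ℓ) Σ_{j=0}^{ℓ−1} (ℓ−j) C(n+1−k, j) (1/n)^{j+ℓ} equals the coefficient of z^{−1} in the Laurent expansion of (1−z)^{−2} (1 + 1/(nz))^k (1 + z/n)^{n+1−k}. -/
open Finset Complex

/-- Normalized drift `Δ*_n(k)` of the (1+1) EA on OneMax. -/
noncomputable def deltaStar (n k : ℕ) : ℝ :=
  ∑ l ∈ Icc 1 k, ∑ j ∈ range l,
    ((l : ℝ) - j) * (k.choose l) * ((n + 1 - k).choose j) * (1 / n) ^ (j + l)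

open Metric

lemma auxPoly (q : ℕ) (z : ℂ) :
    (∑ i ∈ range (q+1), ((i:ℂ)+1) * z ^ i) * (1 - z)^2
      = 1 - ((q:ℂ)+2) * z^(q+1) + ((q:ℂ)+1) * z^(q+2) := by
  induction q with
  | zero => rw [Finset.sum_range_one]; push_cast; ring
  | succ q ih => rw [sum_range_succ, add_mul, ih]; push_cast; ring

lemma pfrac {z : ℂ} (hz0 : z ≠ 0) (hz1 : (1:ℂ) - z ≠ 0) (q : ℕ) :
    z ^ (-(q:ℤ)-1) * (((1:ℂ) - z)^2)⁻¹
      = (∑ i ∈ range (q+1), ((i:ℂ)+1) * z ^ ((i:ℤ) - q - 1))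
        + (((q:ℂ)+2) - ((q:ℂ)+1)*z) * (((1:ℂ) - z)^2)⁻¹ := by
  have hw : ((1:ℂ) - z)^2 ≠ 0 := pow_ne_zero _ hz1
  set A := z ^ (-(q:ℤ)-1) with hA
  have e1 : (-(q:ℤ)-1) + ((q+1:ℕ):ℤ) = 0 := by push_cast; ring
  have e2 : (-(q:ℤ)-1) + ((q+2:ℕ):ℤ) = 1 := by push_cast; ring
  have hA1 : A * z ^ (q+1) = 1 := by
    rw [hA, ← zpow_natCast z (q+1), ← zpow_add₀ hz0, e1, zpow_zero]
  have hA2 : A * z ^ (q+2) = z := by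
    rw [hA, ← zpow_natCast z (q+2), ← zpow_add₀ hz0, e2, zpow_one]
  have hS : (∑ i ∈ range (q+1), ((i:ℂ)+1) * z ^ ((i:ℤ) - q - 1))
      = (∑ i ∈ range (q+1), ((i:ℂ)+1) * z ^ i) * A := by
    rw [Finset.sum_mul]
    refine Finset.sum_congr rfl fun i _ => ?_
    rw [mul_assoc, hA, ← zpow_natCast z i, ← zpow_add₀ hz0]
    congr 1
    ring_nf
  have expand : (∑ i ∈ range (q+1), ((i:ℂ)+1) * z ^ i)
      = (1 - ((q:ℂ)+2) * z^(q+1) + ((q:ℂ)+1) * z^(q+2)) * (((1:ℂ) - z)^2)⁻¹ := by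
    rw [eq_mul_inv_iff_mul_eq₀ hw]; exact auxPoly q z
  rw [hS, expand]
  linear_combination ((((q:ℂ)+2) * (((1:ℂ) - z)^2)⁻¹) * hA1
    - (((q:ℂ)+1) * (((1:ℂ) - z)^2)⁻¹) * hA2)

lemma sphere_facts {r : ℝ} (hr0 : 0 < r) (hr1 : r < 1) {z : ℂ}
    (hz : z ∈ sphere (0:ℂ) r) : z ≠ 0 ∧ (1:ℂ) - z ≠ 0 := by
  rw [mem_sphere_iff_norm, sub_zero] at hz
  constructor
  · intro h; rw [h] at hz; simp at hz; linarith
  · rw [sub_ne_zero]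
    intro h; rw [← h] at hz; simp at hz; linarith

lemma circleIntegral_add' {f g : ℂ → ℂ} {c : ℂ} {R : ℝ}
    (hf : CircleIntegrable f c R) (hg : CircleIntegrable g c R) :
    (∮ z in C(c, R), (f z + g z)) = (∮ z in C(c, R), f z) + ∮ z in C(c, R), g z := by
  simp only [circleIntegral, smul_add]
  exact intervalIntegral.integral_add hf.out hg.out

lemma circleIntegral_finset_sum {ι : Type*} (s : Finset ι) (f : ι → ℂ → ℂ) {c : ℂ} {R : ℝ}
    (h : ∀ i ∈ s, CircleIntegrable (f i) c R) :
    (∮ z in C(c, R), ∑ i ∈ s, f i z) = ∑ i ∈ s, ∮ z in C(c, R), f i z := by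
  simp only [circleIntegral, Finset.smul_sum]
  exact intervalIntegral.integral_finset_sum (fun i hi => (h i hi).out)

lemma contTerm {r : ℝ} (hr0 : 0 < r) (hr1 : r < 1) (p : ℤ) :
    ContinuousOn (fun z : ℂ => z ^ p * (((1:ℂ) - z)^2)⁻¹) (sphere (0:ℂ) r) := by
  intro z hz
  obtain ⟨hz0, hz1⟩ := sphere_facts hr0 hr1 hz
  exact ((continuousAt_zpow₀ z p (Or.inl hz0)).mul
    (((continuous_const.sub continuous_id).pow 2).continuousAt.inv₀
      (pow_ne_zero 2 hz1))).continuousWithinAt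

lemma cauchyZero {r : ℝ} (hr0 : 0 ≤ r) (hr1 : r < 1) (f : ℂ → ℂ)
    (hf : ∀ z : ℂ, z ≠ 1 → DifferentiableAt ℂ f z) :
    (∮ z in C(0, r), f z) = 0 := by
  have hne : ∀ z ∈ closedBall (0:ℂ) r, z ≠ 1 := by
    intro z hz h
    rw [mem_closedBall, dist_zero_right, h] at hz
    simp at hz; linarith
  refine Complex.circleIntegral_eq_zero_of_differentiable_on_off_countable hr0
    Set.countable_empty ?_ ?_
  · exact fun z hz => (hf z (hne z hz)).continuousAt.continuousWithinAt
  · exact fun z hz => hf z (hne z (ball_subset_closedBall hz.1))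

lemma zpow_int_integral {r : ℝ} (hr0 : 0 < r) (p : ℤ) :
    (∮ z in C(0, r), z ^ p) = if p = -1 then 2 * Real.pi * Complex.I else 0 := by
  split_ifs with h
  · subst h
    have := circleIntegral.integral_sub_inv_of_mem_ball
      (show (0:ℂ) ∈ ball (0:ℂ) r by simp [hr0])
    simpa [zpow_neg_one] using this
  · have := circleIntegral.integral_sub_zpow_of_ne h (0:ℂ) (0:ℂ) r
    simpa using this

lemma zpow_cont_sphere {r : ℝ} (hr0 : 0 < r) (hr1 : r < 1) (p : ℤ) (a : ℂ) :
    CircleIntegrable (fun z : ℂ => a * z ^ p) 0 r := by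
  apply ContinuousOn.circleIntegrable hr0.le
  intro z hz
  exact (continuousAt_const.mul
    (continuousAt_zpow₀ z p (Or.inl (sphere_facts hr0 hr1 hz).1))).continuousWithinAt

lemma Jval {r : ℝ} (hr0 : 0 < r) (hr1 : r < 1) (p : ℤ) :
    (∮ z in C(0, r), z ^ p * (((1:ℂ) - z)^2)⁻¹)
      = if p < 0 then 2 * Real.pi * Complex.I * (-p : ℤ) else 0 := by
  split_ifs with hp
  · -- p = -(q+1)
    obtain ⟨q, rfl⟩ : ∃ q : ℕ, p = -(q:ℤ) - 1 := ⟨(-p-1).toNat, by omega⟩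
    have hcong : (∮ z in C(0, r), z ^ (-(q:ℤ)-1) * (((1:ℂ) - z)^2)⁻¹)
        = ∮ z in C(0, r),
          ((∑ i ∈ range (q+1), ((i:ℂ)+1) * z ^ ((i:ℤ) - q - 1))
            + (((q:ℂ)+2) - ((q:ℂ)+1)*z) * (((1:ℂ) - z)^2)⁻¹) := by
      refine circleIntegral.integral_congr hr0.le fun z hz => ?_
      obtain ⟨hz0, hz1⟩ := sphere_facts hr0 hr1 hz
      exact pfrac hz0 hz1 q
    rw [hcong, circleIntegral_add']
    · rw [circleIntegral_finset_sum _ _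
        (fun i _ => zpow_cont_sphere hr0 hr1 _ _)]
      have hG : (∮ z in C(0, r), (((q:ℂ)+2) - ((q:ℂ)+1)*z) * (((1:ℂ) - z)^2)⁻¹) = 0 := by
        refine cauchyZero hr0.le hr1 _ fun z hz => ?_
        refine DifferentiableAt.mul (by fun_prop) ?_
        exact DifferentiableAt.inv (by fun_prop)
          (pow_ne_zero 2 (sub_ne_zero.mpr (Ne.symm hz)))
      rw [hG, add_zero]
      have hterm : ∀ i ∈ range (q+1),
          (∮ z in C(0, r), ((i:ℂ)+1) * z ^ ((i:ℤ) - q - 1))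
            = if i = q then 2 * Real.pi * Complex.I * ((q:ℂ)+1) else 0 := by
        intro i hi
        rw [circleIntegral.integral_const_mul, zpow_int_integral hr0]
        simp only [mem_range] at hi
        split_ifs with h1 h2
        · subst h2; ring
        · omega
        · omega
        · ring
      rw [Finset.sum_congr rfl hterm, Finset.sum_ite_eq' (range (q+1)) q,
        if_pos (Finset.self_mem_range_succ q)]
      push_cast
      ring
    · apply ContinuousOn.circleIntegrable hr0.le
      refine continuousOn_finset_sum _ fun i _ => ?_
      intro z hz
      exact (continuousAt_const.mul
        (continuousAt_zpow₀ z _ (Or.inl (sphere_facts hr0 hr1 hz).1))).continuousWithinAt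
    · apply ContinuousOn.circleIntegrable hr0.le
      intro z hz
      obtain ⟨hz0, hz1⟩ := sphere_facts hr0 hr1 hz
      exact (continuousAt_const.sub (continuousAt_const.mul continuousAt_id)).continuousWithinAt.mul
        ((((continuous_const.sub continuous_id).pow 2).continuousAt.inv₀
          (pow_ne_zero 2 hz1)).continuousWithinAt)
  · push_neg at hp
    refine cauchyZero hr0.le hr1 _ fun z hz => ?_
    have : (fun z : ℂ => z ^ p * (((1:ℂ) - z)^2)⁻¹)
        = fun z : ℂ => z ^ p.toNat * (((1:ℂ) - z)^2)⁻¹ := by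
      funext w
      rw [← zpow_natCast w p.toNat, Int.toNat_of_nonneg hp]
    rw [this]
    refine DifferentiableAt.mul (by fun_prop) ?_
    exact DifferentiableAt.inv (by fun_prop)
      (pow_ne_zero 2 (sub_ne_zero.mpr (Ne.symm hz)))

/-- `Δ*_n(k)` equals the coefficient of `z⁻¹` in the Laurent expansion of
`(1 - z)⁻² (1 + 1/(nz))^k (1 + z/n)^{n+1-k}` around `0`, expressed as the
residue at `0`, i.e. as `(2πi)⁻¹` times the contour integral over any small
circle around the origin. -/
theorem deltaStar_eq_laurent_coeff (n k : ℕ) (hn : 1 ≤ n) (hk : k ≤ n + 1)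
    (r : ℝ) (hr0 : 0 < r) (hr1 : r < 1) :
    (2 * Real.pi * Complex.I)⁻¹ *
      (∮ z in C(0, r),
        ((1 - z) ^ 2)⁻¹ * (1 + 1 / (n * z)) ^ k * (1 + z / n) ^ (n + 1 - k))
      = (deltaStar n k : ℂ) := by
  set m := n + 1 - k with hm
  have hN : (n:ℂ) ≠ 0 := Nat.cast_ne_zero.mpr (by omega)
  have h2pi : (2 * (Real.pi:ℂ) * Complex.I) ≠ 0 := Complex.two_pi_I_ne_zero
  -- coefficients
  set c : ℕ → ℕ → ℂ := fun l j =>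
    (k.choose l : ℂ) * (m.choose j : ℂ) * ((n:ℂ))⁻¹ ^ (l + j) with hc
  -- Step 1 : rewrite the integrand as a finite double sum on the sphere
  have hcong : (∮ z in C(0, r),
        ((1 - z) ^ 2)⁻¹ * (1 + 1 / (n * z)) ^ k * (1 + z / n) ^ m)
      = ∮ z in C(0, r), ∑ l ∈ range (k+1), ∑ j ∈ range (m+1),
          c l j * (z ^ ((j:ℤ) - (l:ℤ)) * (((1:ℂ) - z)^2)⁻¹) := by
    refine circleIntegral.integral_congr hr0.le fun z hz => ?_
    obtain ⟨hz0, hz1⟩ := sphere_facts hr0 hr1 hz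
    rw [show ((1:ℂ) + 1 / (n * z)) = (1 / ((n:ℂ) * z) + 1) from add_comm _ _, add_pow,
        show ((1:ℂ) + z / n) = (z / (n:ℂ) + 1) from add_comm _ _, add_pow,
        mul_assoc, Finset.sum_mul_sum, Finset.mul_sum]
    refine Finset.sum_congr rfl fun l _ => ?_
    rw [Finset.mul_sum]
    refine Finset.sum_congr rfl fun j _ => ?_
    rw [hc, one_pow, one_pow, zpow_sub₀ hz0, zpow_natCast, zpow_natCast]
    field_simp
    have hzl := pow_ne_zero l hz0
    rw [one_div, one_div, mul_inv, mul_pow, div_eq_mul_inv z, mul_pow, pow_add, inv_pow z l]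
    calc _ = (z^l)⁻¹ * z^l * ((n:ℂ)⁻¹ ^ l * (k.choose l : ℂ) * (z ^ j * (n:ℂ)⁻¹ ^ j) * (m.choose j : ℂ)) := by ring
      _ = _ := by rw [inv_mul_cancel₀ hzl, one_mul]; ring
  -- Step 2 : integrate term by term
  have hint : ∀ (p : ℤ) (a : ℂ), CircleIntegrable
      (fun z : ℂ => a * (z ^ p * (((1:ℂ) - z)^2)⁻¹)) 0 r := by
    intro p a
    apply ContinuousOn.circleIntegrable hr0.le
    intro z hz
    obtain ⟨hz0, hz1⟩ := sphere_facts hr0 hr1 hz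
    exact (continuousAt_const.mul ((continuousAt_zpow₀ z p (Or.inl hz0)).mul
      (((continuous_const.sub continuous_id).pow 2).continuousAt.inv₀
        (pow_ne_zero 2 hz1)))).continuousWithinAt
  have hswap : (∮ z in C(0, r), ∑ l ∈ range (k+1), ∑ j ∈ range (m+1),
          c l j * (z ^ ((j:ℤ) - (l:ℤ)) * (((1:ℂ) - z)^2)⁻¹))
      = ∑ l ∈ range (k+1), ∑ j ∈ range (m+1),
          c l j * ∮ z in C(0, r), (z ^ ((j:ℤ) - (l:ℤ)) * (((1:ℂ) - z)^2)⁻¹) := by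
    rw [circleIntegral_finset_sum]
    · refine Finset.sum_congr rfl fun l _ => ?_
      rw [circleIntegral_finset_sum]
      · exact Finset.sum_congr rfl fun j _ => circleIntegral.integral_const_mul _ _ _ _
      · exact fun j _ => hint _ _
    · intro l _
      apply ContinuousOn.circleIntegrable hr0.le
      refine continuousOn_finset_sum _ fun j _ => ?_
      intro z hz
      obtain ⟨hz0, hz1⟩ := sphere_facts hr0 hr1 hz
      exact (continuousAt_const.mul ((continuousAt_zpow₀ z _ (Or.inl hz0)).mul
        (((continuous_const.sub continuous_id).pow 2).continuousAt.inv₀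
          (pow_ne_zero 2 hz1)))).continuousWithinAt
  rw [hcong, hswap]
  -- Step 3 : evaluate each integral
  have hval : ∀ l ∈ range (k+1), ∀ j ∈ range (m+1),
      (c l j * ∮ z in C(0, r), (z ^ ((j:ℤ) - (l:ℤ)) * (((1:ℂ) - z)^2)⁻¹))
        = if j < l then (2 * (Real.pi:ℂ) * Complex.I) *
            (((l:ℂ) - j) * (k.choose l : ℂ) * (m.choose j : ℂ) * (1/(n:ℂ)) ^ (j + l))
          else 0 := by
    intro l _ j _
    rw [Jval hr0 hr1]
    by_cases h : j < l
    · rw [if_pos (by omega : (j:ℤ) - (l:ℤ) < 0), if_pos h, hc]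
      simp only
      push_cast
      rw [one_div, inv_pow, inv_pow]
      rw [show l + j = j + l by ring]
      ring
    · rw [if_neg (by omega : ¬ ((j:ℤ) - (l:ℤ) < 0)), if_neg h, mul_zero]
  rw [Finset.sum_congr rfl (fun l hl => Finset.sum_congr rfl (fun j hj => hval l hl j hj))]
  -- Step 4 : pull out 2πi and reindex
  have pull : ∀ l, ∑ j ∈ range (m+1),
      (if j < l then (2 * (Real.pi:ℂ) * Complex.I) *
            (((l:ℂ) - j) * (k.choose l : ℂ) * (m.choose j : ℂ) * (1/(n:ℂ)) ^ (j + l))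
          else 0)
      = (2 * (Real.pi:ℂ) * Complex.I) * ∑ j ∈ range l,
            (((l:ℂ) - j) * (k.choose l : ℂ) * (m.choose j : ℂ) * (1/(n:ℂ)) ^ (j + l)) := by
    intro l
    rw [Finset.mul_sum]
    rw [← Finset.sum_filter]
    have hfil : (range (m+1)).filter (fun j => j < l) = range (min l (m+1)) := by
      ext x; simp [Finset.mem_filter]; omega
    rw [hfil]
    refine Finset.sum_subset (by intro x; simp; omega) ?_
    intro x hx hx2
    simp only [Finset.mem_range] at hx hx2
    have : m < x := by omega
    rw [Nat.choose_eq_zero_of_lt this]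
    simp
  rw [Finset.sum_congr rfl (fun l _ => pull l), ← Finset.mul_sum,
    ← mul_assoc, inv_mul_cancel₀ h2pi, one_mul]
  -- Step 5 : compare with deltaStar
  have hsub : Finset.Icc 1 k ⊆ Finset.range (k+1) := by
    intro x hx
    simp only [Finset.mem_Icc] at hx
    simp only [Finset.mem_range]
    omega
  have hzero : ∀ x ∈ Finset.range (k+1), x ∉ Finset.Icc 1 k →
      (∑ j ∈ range x,
        (((x:ℂ) - j) * (k.choose x : ℂ) * (m.choose j : ℂ) * (1/(n:ℂ)) ^ (j + x))) = 0 := by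
    intro x hx hx2
    simp only [Finset.mem_range] at hx
    simp only [Finset.mem_Icc] at hx2
    have : x = 0 := by omega
    subst this
    simp
  rw [← Finset.sum_subset hsub hzero, deltaStar]
  push_cast
  rfl
end

section
/- For k ∈ {0, ..., n} and n ≥ 1, the differences of the normalized drift satisfy 1/n ≤ Δ*_n(k+1) − Δ*_n(k) ≤ 2e/n. -/
open Finset

noncomputable def dStarS (p : ℝ) (N x y : ℕ) : ℝ :=
  ∑ a ∈ range N, ∑ b ∈ range N,
    ((a - b : ℕ) : ℝ) * (x.choose a) * (y.choose b) * p ^ (a + b)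

lemma deltaStar_eq (n k : ℕ) (hk : k ≤ n + 1) :
    deltaStar n k = dStarS (1 / n) (n + 2) k (n + 1 - k) := by
  unfold deltaStar dStarS
  have step1 : ∀ l ∈ Icc 1 k,
      (∑ j ∈ range l, ((l : ℝ) - j) * (k.choose l) * ((n + 1 - k).choose j) * ((1:ℝ) / n) ^ (j + l))
      = ∑ b ∈ range (n + 2), ((l - b : ℕ) : ℝ) * (k.choose l) * ((n + 1 - k).choose b) * ((1:ℝ) / n) ^ (l + b) := by
    intro l hl
    have hlk : l ≤ k := (mem_Icc.mp hl).2
    have hz : ∀ b ∈ range (n + 2), b ∉ range l →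
        ((l - b : ℕ) : ℝ) * (k.choose l) * ((n + 1 - k).choose b) * ((1:ℝ) / n) ^ (l + b) = 0 := by
      intro b _ hb
      have : l - b = 0 := by
        have := mem_range.not.mp hb
        omega
      rw [this]
      simp
    rw [← sum_subset (range_subset_range.mpr (by omega : l ≤ n + 2)) hz]
    apply sum_congr rfl
    intro j hj
    have hjl : j < l := mem_range.mp hj
    rw [Nat.cast_sub hjl.le, add_comm l j]
  rw [sum_congr rfl step1]
  apply sum_subset
  · intro l hl
    have := (mem_Icc.mp hl).2
    exact mem_range.mpr (by omega)
  · intro l _ hl'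
    rw [mem_Icc] at hl'
    apply sum_eq_zero
    intro b _
    rcases (by omega : l = 0 ∨ k < l) with h | h
    · subst h; simp
    · rw [Nat.choose_eq_zero_of_lt h]; simp

lemma pascal_x (p : ℝ) (N x y : ℕ) (hx : x.choose (N + 1) = 0) :
    dStarS p (N + 2) (x + 1) y = dStarS p (N + 2) x y
      + p * ∑ a ∈ range (N + 2), ∑ b ∈ range (N + 2),
          ((a + 1 - b : ℕ) : ℝ) * (x.choose a) * (y.choose b) * p ^ (a + b) := by
  unfold dStarS
  rw [sum_range_succ'
    (fun a => ∑ b ∈ range (N + 2), ((a - b : ℕ) : ℝ) * ((x+1).choose a) * (y.choose b) * p ^ (a + b)) (N+1),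
    sum_range_succ'
    (fun a => ∑ b ∈ range (N + 2), ((a - b : ℕ) : ℝ) * (x.choose a) * (y.choose b) * p ^ (a + b)) (N+1),
    sum_range_succ
    (fun a => ∑ b ∈ range (N + 2), ((a + 1 - b : ℕ) : ℝ) * (x.choose a) * (y.choose b) * p ^ (a + b)) (N+1)]
  have h0 : ∀ z : ℕ, (∑ b ∈ range (N + 2), ((0 - b : ℕ) : ℝ) * (z.choose 0) * (y.choose b) * p ^ (0 + b)) = 0 := by
    intro z; apply sum_eq_zero; intro b _; simp [Nat.zero_sub]
  have hlast : (∑ b ∈ range (N + 2), ((N + 1 + 1 - b : ℕ) : ℝ) * (x.choose (N+1)) * (y.choose b) * p ^ (N + 1 + b)) = 0 := by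
    apply sum_eq_zero; intro b _; rw [hx]; simp
  simp only [h0, hlast, add_zero]
  rw [mul_sum, ← sum_add_distrib]
  apply sum_congr rfl
  intro a _
  rw [mul_sum, ← sum_add_distrib]
  apply sum_congr rfl
  intro b _
  rw [Nat.choose_succ_succ]
  push_cast
  ring

lemma pascal_y (p : ℝ) (N x y : ℕ) (hy : y.choose (N + 1) = 0) :
    dStarS p (N + 2) x (y + 1) = dStarS p (N + 2) x y
      + p * ∑ a ∈ range (N + 2), ∑ b ∈ range (N + 2),
          ((a - (b + 1) : ℕ) : ℝ) * (x.choose a) * (y.choose b) * p ^ (a + b) := by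
  unfold dStarS
  rw [show (∑ a ∈ range (N+2), ∑ b ∈ range (N+2),
        ((a - b : ℕ) : ℝ) * (x.choose a) * ((y+1).choose b) * p ^ (a + b))
      = ∑ b ∈ range (N+2), ∑ a ∈ range (N+2),
        ((a - b : ℕ) : ℝ) * (x.choose a) * ((y+1).choose b) * p ^ (a + b) from sum_comm,
    show (∑ a ∈ range (N+2), ∑ b ∈ range (N+2),
        ((a - b : ℕ) : ℝ) * (x.choose a) * (y.choose b) * p ^ (a + b))
      = ∑ b ∈ range (N+2), ∑ a ∈ range (N+2),
        ((a - b : ℕ) : ℝ) * (x.choose a) * (y.choose b) * p ^ (a + b) from sum_comm,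
    show (∑ a ∈ range (N+2), ∑ b ∈ range (N+2),
        ((a - (b+1) : ℕ) : ℝ) * (x.choose a) * (y.choose b) * p ^ (a + b))
      = ∑ b ∈ range (N+2), ∑ a ∈ range (N+2),
        ((a - (b+1) : ℕ) : ℝ) * (x.choose a) * (y.choose b) * p ^ (a + b) from sum_comm]
  rw [sum_range_succ'
    (fun b => ∑ a ∈ range (N + 2), ((a - b : ℕ) : ℝ) * (x.choose a) * ((y+1).choose b) * p ^ (a + b)) (N+1),
    sum_range_succ'
    (fun b => ∑ a ∈ range (N + 2), ((a - b : ℕ) : ℝ) * (x.choose a) * (y.choose b) * p ^ (a + b)) (N+1),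
    sum_range_succ
    (fun b => ∑ a ∈ range (N + 2), ((a - (b+1) : ℕ) : ℝ) * (x.choose a) * (y.choose b) * p ^ (a + b)) (N+1)]
  have h0 : (∑ a ∈ range (N + 2), ((a - 0 : ℕ) : ℝ) * (x.choose a) * ((y+1).choose 0) * p ^ (a + 0))
      = ∑ a ∈ range (N + 2), ((a - 0 : ℕ) : ℝ) * (x.choose a) * (y.choose 0) * p ^ (a + 0) := by
    simp
  have hlast : (∑ a ∈ range (N + 2), ((a - (N + 1 + 1) : ℕ) : ℝ) * (x.choose a) * (y.choose (N+1)) * p ^ (a + (N + 1))) = 0 := by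
    apply sum_eq_zero; intro a _; rw [hy]; simp
  simp only [h0, hlast, add_zero]
  rw [mul_sum, add_right_comm, ← sum_add_distrib]
  congr 1
  apply sum_congr rfl
  intro b _
  rw [mul_sum, ← sum_add_distrib]
  apply sum_congr rfl
  intro a _
  rw [Nat.choose_succ_succ]
  push_cast
  ring

/-- For `k ∈ {0, …, n}` the differences of the normalized drift satisfy
`1/n ≤ Δ*_n(k+1) − Δ*_n(k) ≤ 2e/n`. -/
theorem deltaStar_diff_bounds (n k : ℕ) (hn : 1 ≤ n) (hk : k ≤ n) :
    1 / (n : ℝ) ≤ deltaStar n (k + 1) - deltaStar n k ∧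
      deltaStar n (k + 1) - deltaStar n k ≤ 2 * Real.exp 1 / n := by
  have hn0 : (0:ℝ) < n := by exact_mod_cast hn
  set p : ℝ := 1 / n with hp
  have hp0 : 0 < p := by positivity
  -- the two sums from the Pascal lemmas
  set T : ℝ := ∑ a ∈ range (n + 2), ∑ b ∈ range (n + 2),
      ((a + 1 - b : ℕ) : ℝ) * (k.choose a) * ((n-k).choose b) * p ^ (a + b) with hT
  set U : ℝ := ∑ a ∈ range (n + 2), ∑ b ∈ range (n + 2),
      ((a - (b + 1) : ℕ) : ℝ) * (k.choose a) * ((n-k).choose b) * p ^ (a + b) with hU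
  set V : ℝ := ∑ a ∈ range (n + 2), ∑ b ∈ range (n + 2),
      (((a + 1 - b : ℕ) : ℝ) - ((a - (b + 1) : ℕ) : ℝ)) * (k.choose a) * ((n-k).choose b) * p ^ (a + b) with hV
  have e1 : deltaStar n (k+1) = dStarS p (n+2) (k+1) (n-k) := by
    have h := deltaStar_eq n (k+1) (by omega)
    rwa [show n + 1 - (k+1) = n - k from by omega] at h
  have e2 : deltaStar n k = dStarS p (n+2) k ((n-k)+1) := by
    have h := deltaStar_eq n k (by omega)
    rwa [show n + 1 - k = (n-k) + 1 from by omega] at h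
  have hx := pascal_x p n k (n-k) (Nat.choose_eq_zero_of_lt (by omega))
  have hy := pascal_y p n k (n-k) (Nat.choose_eq_zero_of_lt (by omega))
  have hTU : T - U = V := by
    rw [hT, hU, hV, ← sum_sub_distrib]
    apply sum_congr rfl; intro a _
    rw [← sum_sub_distrib]
    apply sum_congr rfl; intro b _
    ring
  have hD : deltaStar n (k+1) - deltaStar n k = p * V := by
    rw [e1, e2, hx, hy, ← hTU]; ring
  -- nonnegativity of the terms of V
  have hterm : ∀ a b : ℕ,
      0 ≤ (((a + 1 - b : ℕ) : ℝ) - ((a - (b + 1) : ℕ) : ℝ)) * (k.choose a) * ((n-k).choose b) * p ^ (a + b) := by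
    intro a b
    have h1 : ((a - (b + 1) : ℕ) : ℝ) ≤ ((a + 1 - b : ℕ) : ℝ) := by
      exact_mod_cast Nat.cast_le.mpr (by omega : a - (b+1) ≤ a + 1 - b)
    have h2 : (0:ℝ) ≤ ((a + 1 - b : ℕ) : ℝ) - ((a - (b + 1) : ℕ) : ℝ) := by linarith
    have h3 : (0:ℝ) ≤ (k.choose a : ℝ) := by positivity
    have h4 : (0:ℝ) ≤ ((n-k).choose b : ℝ) := by positivity
    have h5 : (0:ℝ) ≤ p ^ (a+b) := by positivity
    exact mul_nonneg (mul_nonneg (mul_nonneg h2 h3) h4) h5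
  -- lower bound on V
  have hV1 : (1:ℝ) ≤ V := by
    have h00 : (((0 + 1 - 0 : ℕ) : ℝ) - ((0 - (0 + 1) : ℕ) : ℝ)) * (k.choose 0) * ((n-k).choose 0) * p ^ (0 + 0) = 1 := by
      norm_num
    have hb : (((0 + 1 - 0 : ℕ) : ℝ) - ((0 - (0 + 1) : ℕ) : ℝ)) * (k.choose 0) * ((n-k).choose 0) * p ^ (0 + 0)
        ≤ ∑ b ∈ range (n + 2),
          (((0 + 1 - b : ℕ) : ℝ) - ((0 - (b + 1) : ℕ) : ℝ)) * (k.choose 0) * ((n-k).choose b) * p ^ (0 + b) :=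
      single_le_sum (fun b _ => hterm 0 b) (mem_range.mpr (by omega))
    have ha : (∑ b ∈ range (n + 2),
          (((0 + 1 - b : ℕ) : ℝ) - ((0 - (b + 1) : ℕ) : ℝ)) * (k.choose 0) * ((n-k).choose b) * p ^ (0 + b)) ≤ V :=
      single_le_sum (fun a _ => sum_nonneg fun b _ => hterm a b) (mem_range.mpr (by omega))
    linarith [hb, ha, h00.ge]
  -- binomial sums
  have hbin : ∀ m : ℕ, m ≤ n → (∑ a ∈ range (n + 2), (m.choose a : ℝ) * p ^ a) = (1 + p) ^ m := by
    intro m hm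
    have hz : ∀ a ∈ range (n+2), a ∉ range (m+1) → (m.choose a : ℝ) * p ^ a = 0 := by
      intro a _ ha
      have : m < a := by have := mem_range.not.mp ha; omega
      rw [Nat.choose_eq_zero_of_lt this]; simp
    rw [← sum_subset (range_subset_range.mpr (by omega : m + 1 ≤ n + 2)) hz,
      show (1 + p : ℝ) ^ m = (p + 1) ^ m from by ring, add_pow]
    apply sum_congr rfl
    intro a _
    simp [one_pow]
    ring
  -- upper bound on V
  have hVtop : V ≤ 2 * Real.exp 1 := by
    have step : V ≤ ∑ a ∈ range (n + 2), ∑ b ∈ range (n + 2),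
        ((k.choose a : ℝ) * p ^ a) * (2 * (((n-k).choose b : ℝ) * p ^ b)) := by
      rw [hV]
      apply sum_le_sum; intro a _
      apply sum_le_sum; intro b _
      have hc : (((a + 1 - b : ℕ) : ℝ) - ((a - (b + 1) : ℕ) : ℝ)) ≤ 2 := by
        have h1 : (a + 1 - b : ℕ) ≤ (a - (b+1)) + 2 := by omega
        have h2 : ((a + 1 - b : ℕ) : ℝ) ≤ ((a - (b+1) : ℕ) : ℝ) + 2 := by exact_mod_cast h1
        linarith
      have hX : (0:ℝ) ≤ (k.choose a : ℝ) * ((n-k).choose b : ℝ) * p ^ (a+b) := by positivity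
      calc (((a + 1 - b : ℕ) : ℝ) - ((a - (b + 1) : ℕ) : ℝ)) * (k.choose a) * ((n-k).choose b) * p ^ (a + b)
          = (((a + 1 - b : ℕ) : ℝ) - ((a - (b + 1) : ℕ) : ℝ)) * ((k.choose a : ℝ) * ((n-k).choose b : ℝ) * p ^ (a+b)) := by ring
        _ ≤ 2 * ((k.choose a : ℝ) * ((n-k).choose b : ℝ) * p ^ (a+b)) := mul_le_mul_of_nonneg_right hc hX
        _ = ((k.choose a : ℝ) * p ^ a) * (2 * (((n-k).choose b : ℝ) * p ^ b)) := by rw [pow_add]; ring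
    have collapse : (∑ a ∈ range (n + 2), ∑ b ∈ range (n + 2),
        ((k.choose a : ℝ) * p ^ a) * (2 * (((n-k).choose b : ℝ) * p ^ b)))
        = (∑ a ∈ range (n + 2), (k.choose a : ℝ) * p ^ a)
          * (2 * ∑ b ∈ range (n + 2), ((n-k).choose b : ℝ) * p ^ b) := by
      calc (∑ a ∈ range (n + 2), ∑ b ∈ range (n + 2),
            ((k.choose a : ℝ) * p ^ a) * (2 * (((n-k).choose b : ℝ) * p ^ b)))
          = ∑ a ∈ range (n + 2), ((k.choose a : ℝ) * p ^ a)
              * (2 * ∑ b ∈ range (n + 2), ((n-k).choose b : ℝ) * p ^ b) := by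
            apply sum_congr rfl; intro a _
            rw [← mul_sum, ← mul_sum]
        _ = (∑ a ∈ range (n + 2), (k.choose a : ℝ) * p ^ a)
              * (2 * ∑ b ∈ range (n + 2), ((n-k).choose b : ℝ) * p ^ b) := by
            rw [← sum_mul]
    have hpow : (1 + p) ^ k * (1 + p) ^ (n - k) = (1 + p) ^ n := by
      rw [← pow_add]; congr 1; omega
    have hexp : (1 + p) ^ n ≤ Real.exp 1 := by
      have h1 : (1:ℝ) + p ≤ Real.exp p := by
        have := Real.add_one_le_exp p; linarith
      have h2 : (0:ℝ) ≤ 1 + p := by positivity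
      calc (1 + p) ^ n ≤ (Real.exp p) ^ n := pow_le_pow_left₀ h2 h1 n
        _ = Real.exp (n * p) := (Real.exp_nat_mul p n).symm
        _ = Real.exp 1 := by
            congr 1
            rw [hp]
            field_simp
    have hexp0 : (0:ℝ) < Real.exp 1 := Real.exp_pos 1
    calc V ≤ _ := step
      _ = (1 + p) ^ k * (2 * (1 + p) ^ (n - k)) := by
          rw [collapse, hbin k hk, hbin (n-k) (by omega)]
      _ = 2 * ((1 + p) ^ n) := by rw [← hpow]; ring
      _ ≤ 2 * Real.exp 1 := by linarith [hexp]
  constructor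
  · rw [hD]
    calc 1 / (n:ℝ) = p * 1 := by rw [hp]; ring
      _ ≤ p * V := by nlinarith
  · rw [hD]
    calc p * V ≤ p * (2 * Real.exp 1) := mul_le_mul_of_nonneg_left hVtop hp0.le
      _ = 2 * Real.exp 1 / n := by rw [hp]; ring
end

section
/- For k ∈ {0, ..., n−1} and n ≥ 2, the drift Δ_n(k) of the (1+1) EA on OneMax satisfies 1/(en) ≤ Δ_n(k+1) − Δ_n(k) ≤ 2/(n−1). -/
open Finset

/-- Drift `Δ_n(k)`: the expected one-step decrease of the number of zero-bits of
the (1+1) EA (mutation rate `1/n`) on OneMax from a state with `k` zero-bits. -/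
noncomputable def Delta (n k : ℕ) : ℝ :=
  ∑ l ∈ Icc 1 k, ∑ j ∈ range (l + 1),
    ((l : ℝ) - j) * (k.choose l) * ((n - k).choose j) *
      (1 / n) ^ (l + j) * (1 - 1 / n) ^ (n - l - j)

private lemma binom_shift (k : ℕ) (g : ℕ → ℝ) :
    ∑ l ∈ range (k+2), ((k+1).choose l : ℝ) * g l
      = ∑ l ∈ range (k+1), (k.choose l : ℝ) * (g l + g (l+1)) := by
  rw [Finset.sum_range_succ' (fun l => ((k+1).choose l : ℝ) * g l) (k+1)]
  have h0 : ∑ l ∈ range (k+1), (k.choose l : ℝ) * g l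
      = ∑ l ∈ range k, (k.choose (l+1) : ℝ) * g (l+1) + g 0 := by
    rw [Finset.sum_range_succ' (fun l => (k.choose l : ℝ) * g l) k]
    simp
  simp only [Nat.choose_succ_succ, Nat.cast_add, add_mul, mul_add]
  rw [Finset.sum_add_distrib, Finset.sum_add_distrib, h0]
  have h1 : ∑ l ∈ range (k+1), (k.choose (l+1) : ℝ) * g (l+1)
      = ∑ l ∈ range k, (k.choose (l+1) : ℝ) * g (l+1) := by
    rw [Finset.sum_range_succ]; simp
  rw [h1]; simp [Nat.choose_succ_succ]; ring

private noncomputable def gA (p q : ℝ) (k b l : ℕ) : ℝ :=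
  ∑ j ∈ range (b+1), max ((l:ℝ)-j) 0 * (b.choose j) * p^(l+j) * q^(k+1+b-l-j)

private noncomputable def gB (p q : ℝ) (k b l j : ℕ) : ℝ :=
  max ((l:ℝ)-j) 0 * (k.choose l) * p^(l+j) * q^(k+1+b-l-j)

private lemma G_diff (p q : ℝ) (n k b : ℕ) (hkb : n = k + 1 + b) :
    (∑ l ∈ range (k+2), ∑ j ∈ range (b+1),
        max ((l:ℝ)-j) 0 * ((k+1).choose l) * (b.choose j) * p^(l+j) * q^(n-l-j))
    - (∑ l ∈ range (k+1), ∑ j ∈ range (b+2),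
        max ((l:ℝ)-j) 0 * (k.choose l) * ((b+1).choose j) * p^(l+j) * q^(n-l-j))
    = p * ∑ l ∈ range (k+1), ∑ j ∈ range (b+1),
        (max ((l:ℝ)-j+1) 0 - max ((l:ℝ)-j-1) 0) * (k.choose l) * (b.choose j)
          * p^(l+j) * q^(n-1-l-j) := by
  subst hkb
  have hA : (∑ l ∈ range (k+2), ∑ j ∈ range (b+1),
        max ((l:ℝ)-j) 0 * ((k+1).choose l) * (b.choose j) * p^(l+j) * q^(k+1+b-l-j))
      = ∑ l ∈ range (k+2), ((k+1).choose l : ℝ) * gA p q k b l := by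
    refine Finset.sum_congr rfl fun l hl => ?_
    rw [gA, Finset.mul_sum]
    exact Finset.sum_congr rfl fun j hj => by ring
  have hB : (∑ l ∈ range (k+1), ∑ j ∈ range (b+2),
        max ((l:ℝ)-j) 0 * (k.choose l) * ((b+1).choose j) * p^(l+j) * q^(k+1+b-l-j))
      = ∑ l ∈ range (k+1), ∑ j ∈ range (b+2), ((b+1).choose j : ℝ) * gB p q k b l j := by
    refine Finset.sum_congr rfl fun l hl => Finset.sum_congr rfl fun j hj => by rw [gB]; ring
  rw [hA, hB, binom_shift k (gA p q k b)]
  have hB2 : ∀ l ∈ range (k+1), ∑ j ∈ range (b+2), ((b+1).choose j : ℝ) * gB p q k b l j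
      = ∑ j ∈ range (b+1), (b.choose j : ℝ) * (gB p q k b l j + gB p q k b l (j+1)) :=
    fun l _ => binom_shift b (gB p q k b l)
  rw [Finset.sum_congr rfl hB2, Finset.mul_sum, ← Finset.sum_sub_distrib]
  refine Finset.sum_congr rfl fun l hl => ?_
  rw [gA, gA, mul_add, Finset.mul_sum, Finset.mul_sum,
    ← Finset.sum_add_distrib, ← Finset.sum_sub_distrib, Finset.mul_sum]
  refine Finset.sum_congr rfl fun j hj => ?_
  simp only [gB]
  have hl' : l ≤ k := Nat.lt_succ_iff.mp (Finset.mem_range.mp hl)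
  have hj' : j ≤ b := Nat.lt_succ_iff.mp (Finset.mem_range.mp hj)
  have e1 : k+1+b-l-j = (k+b-l-j)+1 := by omega
  have e2 : k+1+b-(l+1)-j = k+b-l-j := by omega
  have e4 : k+1+b-l-(j+1) = k+b-l-j := by omega
  have e5 : k+1+b-1-l-j = k+b-l-j := by omega
  have e6 : l+1+j = (l+j)+1 := by omega
  have e7 : l+(j+1) = (l+j)+1 := by omega
  rw [e1, e2, e4, e5, e6, e7, pow_succ, pow_succ]
  push_cast
  ring_nf

private lemma Delta_eq (n k : ℕ) (hk : k ≤ n) :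
    Delta n k = ∑ l ∈ range (k+1), ∑ j ∈ range (n-k+1),
      max ((l:ℝ)-j) 0 * (k.choose l) * ((n-k).choose j)
        * (1/(n:ℝ))^(l+j) * (1-1/(n:ℝ))^(n-l-j) := by
  have hins : range (k+1) = insert 0 (Icc 1 k) := by
    ext x; simp [Finset.mem_range, Finset.mem_Icc]; omega
  rw [hins, Finset.sum_insert (by simp), Delta]
  have h0 : (∑ j ∈ range (n-k+1),
      max (((0:ℕ):ℝ)-j) 0 * ((k.choose 0 : ℕ):ℝ) * ((n-k).choose j)
        * (1/(n:ℝ))^(0+j) * (1-1/(n:ℝ))^(n-0-j)) = 0 := by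
    refine Finset.sum_eq_zero fun j hj => ?_
    have : max (((0:ℕ):ℝ)-j) 0 = 0 := by
      apply max_eq_right; simp
    rw [this]; ring
  rw [h0, zero_add]
  refine Finset.sum_congr rfl fun l hl => ?_
  obtain ⟨hl1, hl2⟩ := Finset.mem_Icc.mp hl
  have hLa : (∑ j ∈ range (l+1),
        ((l:ℝ)-j) * (k.choose l) * ((n-k).choose j) * (1/(n:ℝ))^(l+j) * (1-1/(n:ℝ))^(n-l-j))
      = ∑ j ∈ range (l+1),
        max ((l:ℝ)-j) 0 * (k.choose l) * ((n-k).choose j) * (1/(n:ℝ))^(l+j) * (1-1/(n:ℝ))^(n-l-j) := by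
    refine Finset.sum_congr rfl fun j hj => ?_
    have hj' : j ≤ l := Nat.lt_succ_iff.mp (Finset.mem_range.mp hj)
    have : max ((l:ℝ)-j) 0 = (l:ℝ)-j := by
      apply max_eq_left; simp [sub_nonneg]; exact_mod_cast hj'
    rw [this]
  have hLb : (∑ j ∈ range (l+1),
        max ((l:ℝ)-j) 0 * (k.choose l) * ((n-k).choose j) * (1/(n:ℝ))^(l+j) * (1-1/(n:ℝ))^(n-l-j))
      = ∑ j ∈ range (n+1),
        max ((l:ℝ)-j) 0 * (k.choose l) * ((n-k).choose j) * (1/(n:ℝ))^(l+j) * (1-1/(n:ℝ))^(n-l-j) := by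
    refine Finset.sum_subset (Finset.range_subset_range.mpr (by omega)) fun j hj hj' => ?_
    have : l < j := by
      simp only [Finset.mem_range] at hj hj'; omega
    have hm : max ((l:ℝ)-j) 0 = 0 := by
      apply max_eq_right; simp only [sub_nonpos]; exact_mod_cast this.le
    rw [hm]; ring
  have hRb : (∑ j ∈ range (n-k+1),
        max ((l:ℝ)-j) 0 * (k.choose l) * ((n-k).choose j) * (1/(n:ℝ))^(l+j) * (1-1/(n:ℝ))^(n-l-j))
      = ∑ j ∈ range (n+1),
        max ((l:ℝ)-j) 0 * (k.choose l) * ((n-k).choose j) * (1/(n:ℝ))^(l+j) * (1-1/(n:ℝ))^(n-l-j) := by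
    refine Finset.sum_subset (Finset.range_subset_range.mpr (by omega)) fun j hj hj' => ?_
    have : n - k < j := by
      simp only [Finset.mem_range] at hj hj'; omega
    rw [Nat.choose_eq_zero_of_lt this]; push_cast; ring
  rw [hLa, hLb, hRb]

private lemma exp_bound (n : ℕ) (hn : 2 ≤ n) : Real.exp (-1) ≤ (1 - 1/(n:ℝ))^(n-1) := by
  set m : ℕ := n - 1 with hm
  have hm1 : 1 ≤ m := by omega
  have hmr : (0:ℝ) < (m:ℝ) := by exact_mod_cast hm1
  have hmn : (m:ℝ) = (n:ℝ) - 1 := by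
    have : (m:ℝ) + 1 = (n:ℝ) := by exact_mod_cast Nat.sub_add_cancel (by omega)
    linarith
  have hnr : (0:ℝ) < (n:ℝ) := by positivity
  have hn1 : (n:ℝ) - 1 ≠ 0 := by rw [← hmn]; exact hmr.ne'
  have h2 : 1 + 1/(m:ℝ) ≤ Real.exp (1/(m:ℝ)) := by
    have := Real.add_one_le_exp (1/(m:ℝ)); linarith
  have hq : (1 - 1/(n:ℝ)) = (1 + 1/(m:ℝ))⁻¹ := by
    rw [hmn]
    field_simp
    rw [sub_add_cancel, div_self hnr.ne']
  have hstep : Real.exp (-(1/(m:ℝ))) ≤ 1 - 1/(n:ℝ) := by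
    rw [Real.exp_neg, hq]
    exact inv_anti₀ (by positivity) h2
  have hpow : (Real.exp (-(1/(m:ℝ))))^m ≤ (1 - 1/(n:ℝ))^m :=
    pow_le_pow_left₀ (Real.exp_pos _).le hstep m
  have hexp : (Real.exp (-(1/(m:ℝ))))^m = Real.exp (-1) := by
    rw [← Real.exp_nat_mul]
    congr 1
    field_simp
  rw [← hexp]; exact hpow

/-- For `k ∈ {0, …, n−1}` and `n ≥ 2` the drift differences satisfy
`1/(en) ≤ Δ_n(k+1) − Δ_n(k) ≤ 2/(n−1)`. -/
theorem delta_diff_bounds (n k : ℕ) (hn : 2 ≤ n) (hk : k ≤ n - 1) :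
    1 / (Real.exp 1 * n) ≤ Delta n (k + 1) - Delta n k ∧
      Delta n (k + 1) - Delta n k ≤ 2 / ((n : ℝ) - 1) := by
  set p : ℝ := 1/(n:ℝ) with hp
  set q : ℝ := 1 - 1/(n:ℝ) with hqdef
  have hnr : (0:ℝ) < (n:ℝ) := by positivity
  have hp0 : 0 ≤ p := by positivity
  have hq0 : 0 ≤ q := by
    rw [hqdef, sub_nonneg, div_le_one hnr]
    exact_mod_cast Nat.one_le_iff_ne_zero.mpr (by omega)
  set b : ℕ := n - 1 - k with hbdef
  have hkb : n = k + 1 + b := by omega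
  have hb1 : n - (k+1) = b := by omega
  have hb2 : n - k = b + 1 := by omega
  have key : Delta n (k+1) - Delta n k
      = p * ∑ l ∈ range (k+1), ∑ j ∈ range (b+1),
          (max ((l:ℝ)-j+1) 0 - max ((l:ℝ)-j-1) 0) * (k.choose l) * (b.choose j)
            * p^(l+j) * q^(n-1-l-j) := by
    rw [Delta_eq n (k+1) (by omega), Delta_eq n k (by omega), hb1, hb2]
    exact G_diff p q n k b hkb
  set S := ∑ l ∈ range (k+1), ∑ j ∈ range (b+1),
      (max ((l:ℝ)-j+1) 0 - max ((l:ℝ)-j-1) 0) * (k.choose l) * (b.choose j)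
        * p^(l+j) * q^(n-1-l-j) with hS
  -- termwise nonnegativity
  have hcnn : ∀ x : ℝ, 0 ≤ max (x+1) 0 - max (x-1) 0 := by
    intro x
    have : max (x-1) 0 ≤ max (x+1) 0 := max_le_max (by linarith) le_rfl
    linarith
  have hcle2 : ∀ x : ℝ, max (x+1) 0 - max (x-1) 0 ≤ 2 := by
    intro x
    have h1 : x + 1 ≤ max (x-1) 0 + 2 := by
      have := le_max_left (x-1) (0:ℝ); linarith
    have h2 : (0:ℝ) ≤ max (x-1) 0 + 2 := by
      have := le_max_right (x-1) (0:ℝ); linarith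
    have := max_le h1 h2
    linarith
  have htnn : ∀ l j : ℕ, 0 ≤ (max ((l:ℝ)-j+1) 0 - max ((l:ℝ)-j-1) 0)
      * (k.choose l) * (b.choose j) * p^(l+j) * q^(n-1-l-j) := by
    intro l j
    refine mul_nonneg (mul_nonneg (mul_nonneg (mul_nonneg (hcnn _) ?_) ?_) ?_) ?_
    · exact Nat.cast_nonneg _
    · exact Nat.cast_nonneg _
    · exact pow_nonneg hp0 _
    · exact pow_nonneg hq0 _
  constructor
  · -- lower bound
    have hin0 : (max (((0:ℕ):ℝ)-((0:ℕ):ℝ)+1) 0 - max (((0:ℕ):ℝ)-((0:ℕ):ℝ)-1) 0)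
        * (k.choose 0) * (b.choose 0) * p^(0+0) * q^(n-1-0-0) = q^(n-1) := by
      norm_num
    have hrow0 : q^(n-1) ≤ ∑ j ∈ range (b+1),
        (max (((0:ℕ):ℝ)-j+1) 0 - max (((0:ℕ):ℝ)-j-1) 0) * (k.choose 0) * (b.choose j)
          * p^(0+j) * q^(n-1-0-j) := by
      rw [← hin0]
      exact Finset.single_le_sum (fun j _ => htnn 0 j) (by simp)
    have hSlow : q^(n-1) ≤ S := by
      refine hrow0.trans ?_
      exact Finset.single_le_sum
        (fun l _ => Finset.sum_nonneg fun j _ => htnn l j) (by simp)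
    have hfin : 1 / (Real.exp 1 * n) ≤ p * q^(n-1) := by
      have he : 1 / (Real.exp 1 * (n:ℝ)) = Real.exp (-1) * p := by
        rw [Real.exp_neg, hp]
        field_simp
      rw [he]
      calc Real.exp (-1) * p ≤ q^(n-1) * p :=
            mul_le_mul_of_nonneg_right (exp_bound n hn) hp0
        _ = p * q^(n-1) := by ring
    rw [key]
    refine hfin.trans ?_
    exact mul_le_mul_of_nonneg_left hSlow hp0
  · -- upper bound
    have hW1 : ∑ l ∈ range (k+1), ∑ j ∈ range (b+1),
        ((k.choose l : ℝ) * (b.choose j) * p^(l+j) * q^(n-1-l-j)) = 1 := by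
      have hsplit : ∀ l ∈ range (k+1), ∀ j ∈ range (b+1),
          (k.choose l : ℝ) * (b.choose j) * p^(l+j) * q^(n-1-l-j)
            = (p^l * q^(k-l) * (k.choose l)) * (p^j * q^(b-j) * (b.choose j)) := by
        intro l hl j hj
        have hl' : l ≤ k := Nat.lt_succ_iff.mp (Finset.mem_range.mp hl)
        have hj' : j ≤ b := Nat.lt_succ_iff.mp (Finset.mem_range.mp hj)
        have e1 : n-1-l-j = (k-l)+(b-j) := by omega
        rw [e1, pow_add, pow_add]
        ring
      rw [Finset.sum_congr rfl fun l hl => Finset.sum_congr rfl (hsplit l hl)]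
      rw [← Finset.sum_mul_sum]
      have hpq : p + q = 1 := by rw [hp, hqdef]; ring
      have h1 : ∑ l ∈ range (k+1), p^l * q^(k-l) * (k.choose l) = 1 := by
        rw [← add_pow, hpq, one_pow]
      have h2 : ∑ j ∈ range (b+1), p^j * q^(b-j) * (b.choose j) = 1 := by
        rw [← add_pow, hpq, one_pow]
      rw [h1, h2, mul_one]
    have hSup : S ≤ 2 := by
      calc S ≤ ∑ l ∈ range (k+1), ∑ j ∈ range (b+1),
            2 * ((k.choose l : ℝ) * (b.choose j) * p^(l+j) * q^(n-1-l-j)) := by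
            refine Finset.sum_le_sum fun l _ => Finset.sum_le_sum fun j _ => ?_
            have hR : (0:ℝ) ≤ (k.choose l : ℝ) * (b.choose j) * p^(l+j) * q^(n-1-l-j) :=
              mul_nonneg (mul_nonneg (mul_nonneg (Nat.cast_nonneg _) (Nat.cast_nonneg _))
                (pow_nonneg hp0 _)) (pow_nonneg hq0 _)
            calc (max ((l:ℝ)-j+1) 0 - max ((l:ℝ)-j-1) 0) * (k.choose l) * (b.choose j)
                  * p^(l+j) * q^(n-1-l-j)
                = (max ((l:ℝ)-j+1) 0 - max ((l:ℝ)-j-1) 0)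
                    * ((k.choose l : ℝ) * (b.choose j) * p^(l+j) * q^(n-1-l-j)) := by ring
              _ ≤ 2 * ((k.choose l : ℝ) * (b.choose j) * p^(l+j) * q^(n-1-l-j)) :=
                  mul_le_mul_of_nonneg_right (hcle2 _) hR
        _ = 2 * ∑ l ∈ range (k+1), ∑ j ∈ range (b+1),
            ((k.choose l : ℝ) * (b.choose j) * p^(l+j) * q^(n-1-l-j)) := by
            rw [Finset.mul_sum]
            exact Finset.sum_congr rfl fun l _ => (Finset.mul_sum _ _ _).symm
        _ = 2 := by rw [hW1]; norm_num
    rw [key]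
    have h2n : p * S ≤ 2 / (n:ℝ) := by
      calc p * S ≤ p * 2 := mul_le_mul_of_nonneg_left hSup hp0
        _ = 2 / (n:ℝ) := by rw [hp]; ring
    refine h2n.trans ?_
    have hn1 : (0:ℝ) < (n:ℝ) - 1 := by
      have : (2:ℝ) ≤ (n:ℝ) := by exact_mod_cast hn
      linarith
    gcongr
    linarith
end

section
/- For n ≥ 2 and k ≥ 1, the drift Δ(k) of the (1+1) EA on OneMax satisfies e^{−1} k/n ≤ Δ(k) ≤ k/n. -/
open Finset

/-- Partial binomial sums are at most 1. -/
lemma binom_partial_sum_le_one (m L : ℕ) (p q : ℝ) (hp : 0 ≤ p) (hq : 0 ≤ q)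
    (hpq : p + q = 1) :
    ∑ j ∈ range L, (m.choose j : ℝ) * p ^ j * q ^ (m - j) ≤ 1 := by
  have h1 : ∑ j ∈ range L, (m.choose j : ℝ) * p ^ j * q ^ (m - j)
      ≤ ∑ j ∈ range (max L (m + 1)), (m.choose j : ℝ) * p ^ j * q ^ (m - j) := by
    apply Finset.sum_le_sum_of_subset_of_nonneg
    · exact Finset.range_subset_range.2 (le_max_left _ _)
    · intro j _ _; positivity
  have h2 : ∑ j ∈ range (max L (m + 1)), (m.choose j : ℝ) * p ^ j * q ^ (m - j)
      = ∑ j ∈ range (m + 1), (m.choose j : ℝ) * p ^ j * q ^ (m - j) := by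
    symm
    apply Finset.sum_subset (Finset.range_subset_range.2 (le_max_right _ _))
    intro j _ hj
    have : m < j := by simpa using hj
    simp [Nat.choose_eq_zero_of_lt this]
  have h3 : ∑ j ∈ range (m + 1), (m.choose j : ℝ) * p ^ j * q ^ (m - j) = 1 := by
    have hb := add_pow p q m
    rw [hpq, one_pow] at hb
    rw [hb]
    apply Finset.sum_congr rfl
    intro j _; ring
  calc ∑ j ∈ range L, (m.choose j : ℝ) * p ^ j * q ^ (m - j) ≤ _ := h1
    _ = _ := h2
    _ = 1 := h3

/-- Mean of the binomial distribution. -/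
lemma binom_mean (m : ℕ) (p q : ℝ) (hpq : p + q = 1) :
    ∑ l ∈ Icc 1 (m + 1), (l : ℝ) * ((m + 1).choose l) * p ^ l * q ^ (m + 1 - l)
      = (m + 1 : ℝ) * p := by
  have h0 : ∑ l ∈ Icc 1 (m + 1), (l : ℝ) * ((m + 1).choose l) * p ^ l * q ^ (m + 1 - l)
      = ∑ l ∈ range (m + 2), (l : ℝ) * ((m + 1).choose l) * p ^ l * q ^ (m + 1 - l) := by
    apply Finset.sum_subset
    · intro x hx
      simp only [Finset.mem_Icc] at hx
      simp only [Finset.mem_range]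
      omega
    · intro x hx' hx
      simp only [Finset.mem_Icc, not_and, not_le] at hx
      simp only [Finset.mem_range] at hx'
      have hx0 : x = 0 := by omega
      subst hx0; simp
  rw [h0, Finset.sum_range_succ']
  simp only [Nat.cast_zero, zero_mul, add_zero]
  have key : ∀ i ∈ range (m + 1),
      ((i : ℝ) + 1) * ((m + 1).choose (i + 1)) * p ^ (i + 1) * q ^ (m + 1 - (i + 1))
        = ((m : ℝ) + 1) * p * ((m.choose i : ℝ) * p ^ i * q ^ (m - i)) := by
    intro i hi
    have hc : (m + 1) * m.choose i = (m + 1).choose (i + 1) * (i + 1) :=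
      Nat.add_one_mul_choose_eq m i
    have hc' : ((m : ℝ) + 1) * (m.choose i : ℝ) = ((m + 1).choose (i + 1) : ℝ) * ((i : ℝ) + 1) := by
      exact_mod_cast congrArg (Nat.cast : ℕ → ℝ) hc
    have hsub : m + 1 - (i + 1) = m - i := by omega
    rw [hsub, pow_succ]
    calc ((i : ℝ) + 1) * ((m + 1).choose (i + 1)) * (p ^ i * p) * q ^ (m - i)
        = (((m + 1).choose (i + 1) : ℝ) * ((i : ℝ) + 1)) * (p ^ i * p) * q ^ (m - i) := by ring
      _ = (((m : ℝ) + 1) * (m.choose i : ℝ)) * (p ^ i * p) * q ^ (m - i) := by rw [← hc']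
      _ = ((m : ℝ) + 1) * p * ((m.choose i : ℝ) * p ^ i * q ^ (m - i)) := by ring
  have : ∑ i ∈ range (m + 1),
      ((i : ℝ) + 1) * ((m + 1).choose (i + 1)) * p ^ (i + 1) * q ^ (m + 1 - (i + 1))
      = ((m : ℝ) + 1) * p * ∑ i ∈ range (m + 1), (m.choose i : ℝ) * p ^ i * q ^ (m - i) := by
    rw [Finset.mul_sum]
    exact Finset.sum_congr rfl key
  have hbin : ∑ i ∈ range (m + 1), (m.choose i : ℝ) * p ^ i * q ^ (m - i) = 1 := by
    have hb := add_pow p q m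
    rw [hpq, one_pow] at hb
    rw [hb]
    exact Finset.sum_congr rfl fun j _ => by ring
  simp only [Nat.cast_add, Nat.cast_one] at this ⊢
  rw [this, hbin, mul_one]

/-- `(1 - 1/n)^(n-1) ≥ e⁻¹` for `n ≥ 2`. -/
lemma exp_neg_one_le (n : ℕ) (hn : 2 ≤ n) :
    Real.exp (-1) ≤ (1 - 1 / (n : ℝ)) ^ (n - 1) := by
  have hn1 : (1 : ℝ) ≤ (n : ℝ) - 1 := by
    have : (2 : ℝ) ≤ (n : ℝ) := by exact_mod_cast hn
    linarith
  have hnpos : (0 : ℝ) < (n : ℝ) := by positivity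
  have hn1pos : (0 : ℝ) < (n : ℝ) - 1 := by linarith
  set x : ℝ := 1 / ((n : ℝ) - 1) with hx
  have hxpos : 0 < x := by positivity
  have hexp : x + 1 ≤ Real.exp x := Real.add_one_le_exp x
  have hstep : Real.exp (-x) ≤ 1 - 1 / (n : ℝ) := by
    rw [Real.exp_neg]
    have h1 : 1 - 1 / (n : ℝ) = ((n : ℝ) - 1) / n := by field_simp
    have h2 : x + 1 = (n : ℝ) / ((n : ℝ) - 1) := by rw [hx]; field_simp; ring
    rw [h1]
    rw [inv_le_iff_one_le_mul₀ (lt_of_lt_of_le (by linarith) hexp)]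
    have : (1 : ℝ) ≤ ((n : ℝ) - 1) / n * (x + 1) := by
      rw [h2]; field_simp; exact le_refl _
    calc (1 : ℝ) ≤ ((n : ℝ) - 1) / n * (x + 1) := this
      _ ≤ ((n : ℝ) - 1) / n * Real.exp x := by
          apply mul_le_mul_of_nonneg_left hexp; positivity
  have hcast : ((n - 1 : ℕ) : ℝ) = (n : ℝ) - 1 := by
    rw [Nat.cast_sub (by omega), Nat.cast_one]
  have hexp1 : Real.exp (-1) = Real.exp (-x) ^ (n - 1) := by
    rw [← Real.exp_nat_mul, hcast, hx]
    congr 1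
    field_simp
  rw [hexp1]
  apply pow_le_pow_left₀ (Real.exp_nonneg _) hstep

/-- For every state `k ≥ 1` (of the (1+1) EA on OneMax over `{0,1}ⁿ`, so `k ≤ n`),
the drift satisfies `e⁻¹ k/n ≤ Δ(k) ≤ k/n`. -/
theorem delta_bounds (n k : ℕ) (hn : 2 ≤ n) (hk1 : 1 ≤ k) (hkn : k ≤ n) :
    (Real.exp 1)⁻¹ * (k / n : ℝ) ≤ Delta n k ∧ Delta n k ≤ (k / n : ℝ) := by
  have hnpos : (0 : ℝ) < (n : ℝ) := by positivity
  set p : ℝ := 1 / (n : ℝ) with hp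
  set q : ℝ := 1 - 1 / (n : ℝ) with hq
  have hppos : 0 < p := by positivity
  have hqnn : 0 ≤ q := by
    rw [hq]
    have : (1 : ℝ) / n ≤ 1 := by
      rw [div_le_one hnpos]; exact_mod_cast Nat.one_le_iff_ne_zero.2 (by omega)
    linarith
  have hpq : p + q = 1 := by rw [hp, hq]; ring
  constructor
  · -- lower bound
    unfold Delta
    simp only [← hq, ← hp]
    have hmem : (1 : ℕ) ∈ Icc 1 k := by simp [hk1]
    have hnn : ∀ l ∈ Icc 1 k, 0 ≤ ∑ j ∈ range (l + 1),
        ((l : ℝ) - j) * (k.choose l) * ((n - k).choose j) * p ^ (l + j) * q ^ (n - l - j) := by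
      intro l hl
      apply Finset.sum_nonneg
      intro j hj
      simp only [Finset.mem_range] at hj
      have hjl : (j : ℝ) ≤ l := by exact_mod_cast Nat.lt_succ_iff.mp hj
      have h0 : (0 : ℝ) ≤ (l : ℝ) - j := by linarith
      have hp0 : (0 : ℝ) ≤ p := le_of_lt hppos
      positivity
    refine le_trans ?_ (Finset.single_le_sum hnn hmem)
    rw [Finset.sum_range_succ, Finset.sum_range_one]
    have hexp : Real.exp (-1) ≤ q ^ (n - 1) := by
      rw [hq]; exact exp_neg_one_le n hn
    have h1 : (Real.exp 1)⁻¹ = Real.exp (-1) := by rw [Real.exp_neg]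
    have hk0 : (0 : ℝ) ≤ (k : ℝ) / n := by positivity
    have hmain : (Real.exp 1)⁻¹ * ((k : ℝ) / n) ≤ (k : ℝ) * p * q ^ (n - 1) := by
      rw [h1]
      calc Real.exp (-1) * ((k : ℝ) / n) ≤ q ^ (n - 1) * ((k : ℝ) / n) :=
            mul_le_mul_of_nonneg_right hexp hk0
        _ = (k : ℝ) * p * q ^ (n - 1) := by rw [hp]; ring
    refine le_trans hmain ?_
    simp only [Nat.cast_one, Nat.cast_zero, sub_zero, sub_self, zero_mul, mul_zero, add_zero,
      Nat.choose_one_right, Nat.choose_zero_right, Nat.cast_one, mul_one, pow_one, one_mul,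
      Nat.sub_zero]
    exact le_refl _
  · -- upper bound
    obtain ⟨m, rfl⟩ : ∃ m, k = m + 1 := ⟨k - 1, by omega⟩
    have hub : Delta n (m + 1) ≤ ∑ l ∈ Icc 1 (m + 1),
        (l : ℝ) * ((m + 1).choose l) * p ^ l * q ^ (m + 1 - l) := by
      unfold Delta
      simp only [← hq, ← hp]
      apply Finset.sum_le_sum
      intro l hl
      simp only [Finset.mem_Icc] at hl
      have hterm : ∀ j ∈ range (l + 1),
          ((l : ℝ) - j) * ((m + 1).choose l) * ((n - (m + 1)).choose j) * p ^ (l + j)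
            * q ^ (n - l - j)
          ≤ ((l : ℝ) * ((m + 1).choose l) * p ^ l * q ^ (m + 1 - l))
            * (((n - (m + 1)).choose j : ℝ) * p ^ j * q ^ (n - (m + 1) - j)) := by
        intro j hj
        simp only [Finset.mem_range] at hj
        by_cases hcase : j ≤ n - (m + 1)
        · have hsub : n - l - j = (m + 1 - l) + (n - (m + 1) - j) := by omega
          have hjl : (j : ℝ) ≤ (l : ℝ) := by exact_mod_cast Nat.lt_succ_iff.mp hj
          rw [hsub, pow_add, pow_add]
          have hrest : (0:ℝ) ≤ ((m + 1).choose l : ℝ) * ((n - (m + 1)).choose j : ℝ) *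
              (p ^ l * p ^ j) * (q ^ (m + 1 - l) * q ^ (n - (m + 1) - j)) := by positivity
          calc ((l : ℝ) - j) * ((m + 1).choose l) * ((n - (m + 1)).choose j) * (p ^ l * p ^ j)
                * (q ^ (m + 1 - l) * q ^ (n - (m + 1) - j))
              = ((l : ℝ) - j) * (((m + 1).choose l : ℝ) * ((n - (m + 1)).choose j : ℝ) *
                (p ^ l * p ^ j) * (q ^ (m + 1 - l) * q ^ (n - (m + 1) - j))) := by ring
            _ ≤ (l : ℝ) * (((m + 1).choose l : ℝ) * ((n - (m + 1)).choose j : ℝ) *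
                (p ^ l * p ^ j) * (q ^ (m + 1 - l) * q ^ (n - (m + 1) - j))) := by
                apply mul_le_mul_of_nonneg_right (by linarith) hrest
            _ = ((l : ℝ) * ((m + 1).choose l) * p ^ l * q ^ (m + 1 - l))
                * (((n - (m + 1)).choose j : ℝ) * p ^ j * q ^ (n - (m + 1) - j)) := by ring
        · have : n - (m + 1) < j := by omega
          rw [Nat.choose_eq_zero_of_lt this]
          simp
      calc ∑ j ∈ range (l + 1),
            ((l : ℝ) - j) * ((m + 1).choose l) * ((n - (m + 1)).choose j) * p ^ (l + j)
              * q ^ (n - l - j)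
          ≤ ∑ j ∈ range (l + 1),
            ((l : ℝ) * ((m + 1).choose l) * p ^ l * q ^ (m + 1 - l))
              * (((n - (m + 1)).choose j : ℝ) * p ^ j * q ^ (n - (m + 1) - j)) :=
            Finset.sum_le_sum hterm
        _ = ((l : ℝ) * ((m + 1).choose l) * p ^ l * q ^ (m + 1 - l))
            * ∑ j ∈ range (l + 1),
              ((n - (m + 1)).choose j : ℝ) * p ^ j * q ^ (n - (m + 1) - j) := by
            rw [Finset.mul_sum]
        _ ≤ ((l : ℝ) * ((m + 1).choose l) * p ^ l * q ^ (m + 1 - l)) * 1 := by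
            apply mul_le_mul_of_nonneg_left
            · exact binom_partial_sum_le_one (n - (m + 1)) (l + 1) p q (le_of_lt hppos) hqnn hpq
            · positivity
        _ = (l : ℝ) * ((m + 1).choose l) * p ^ l * q ^ (m + 1 - l) := by rw [mul_one]
    rw [binom_mean m p q hpq] at hub
    calc Delta n (m + 1) ≤ ((m : ℝ) + 1) * p := hub
      _ = ((m + 1 : ℕ) : ℝ) / n := by rw [hp]; push_cast; ring
end

section
/- For n ≥ 2, k ≥ 1 and ℓ ∈ {1, ..., k−1}, the drift Δ(·) of the (1+1) EA on OneMax satisfies 1/Δ(k−ℓ) − 1/Δ(k) ≤ 2e²ℓn² / (k(k−ℓ)(n−1)). -/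
open Finset

lemma binom_step (p q : ℝ) (f : ℕ → ℝ) (a : ℕ) :
    ∑ l ∈ range (a+2), f l * ((a+1).choose l : ℝ) * p^l * q^(a+1-l)
      = p * ∑ l ∈ range (a+1), f (l+1) * (a.choose l : ℝ) * p^l * q^(a-l)
      + q * ∑ l ∈ range (a+1), f l * (a.choose l : ℝ) * p^l * q^(a-l) := by
  rw [Finset.sum_range_succ' (fun l => f l * ((a+1).choose l : ℝ) * p^l * q^(a+1-l)) (a+1)]
  have h1 : ∀ l ∈ range (a+1),
      f (l+1) * ((a+1).choose (l+1) : ℝ) * p^(l+1) * q^(a+1-(l+1))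
      = p * (f (l+1) * (a.choose l : ℝ) * p^l * q^(a-l))
        + f (l+1) * (a.choose (l+1) : ℝ) * p^(l+1) * q^(a-l) := by
    intro l _
    rw [Nat.choose_succ_succ]
    push_cast [Nat.succ_eq_add_one]
    ring
  rw [Finset.sum_congr rfl h1, Finset.sum_add_distrib, ← Finset.mul_sum]
  have h2 : ∑ l ∈ range (a+1), f l * (a.choose l : ℝ) * p^l * q^(a-l)
      = ∑ l ∈ range a, f (l+1) * (a.choose (l+1) : ℝ) * p^(l+1) * q^(a-(l+1))
        + f 0 * (a.choose 0 : ℝ) * p^0 * q^(a-0) := by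
    rw [Finset.sum_range_succ' (fun l => f l * (a.choose l : ℝ) * p^l * q^(a-l)) a]
  have h3 : ∑ l ∈ range (a+1), f (l+1) * (a.choose (l+1) : ℝ) * p^(l+1) * q^(a-l)
      = ∑ l ∈ range a, f (l+1) * (a.choose (l+1) : ℝ) * p^(l+1) * q^(a-l) := by
    rw [Finset.sum_range_succ]
    simp [Nat.choose_succ_self]
  rw [h3, h2]
  rw [mul_add, Finset.mul_sum]
  have h4 : ∀ l ∈ range a,
      f (l+1) * (a.choose (l+1) : ℝ) * p^(l+1) * q^(a-l)
      = q * (f (l+1) * (a.choose (l+1) : ℝ) * p^(l+1) * q^(a-(l+1))) := by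
    intro l hl
    have hla : l < a := Finset.mem_range.mp hl
    have : a - l = (a - (l+1)) + 1 := by omega
    rw [this, pow_succ]
    ring
  rw [Finset.sum_congr rfl h4]
  simp only [Nat.choose_zero_right, Nat.choose_self, Nat.sub_zero, pow_zero]
  push_cast
  rw [← Finset.mul_sum, ← Finset.mul_sum]
  ring

noncomputable def Bin (p q : ℝ) (a : ℕ) (f : ℕ → ℝ) : ℝ :=
  ∑ l ∈ range (a+1), f l * (a.choose l : ℝ) * p^l * q^(a-l)

lemma Bin_step (p q : ℝ) (a : ℕ) (f : ℕ → ℝ) :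
    Bin p q (a+1) f = p * Bin p q a (fun l => f (l+1)) + q * Bin p q a f :=
  binom_step p q f a

lemma Bin_lin (p q c d : ℝ) (a : ℕ) (f g : ℕ → ℝ) :
    Bin p q a (fun l => c * f l + d * g l) = c * Bin p q a f + d * Bin p q a g := by
  simp only [Bin, Finset.mul_sum, ← Finset.sum_add_distrib]
  exact Finset.sum_congr rfl (fun l _ => by ring)

lemma Bin_mono {p q : ℝ} (hp : 0 ≤ p) (hq : 0 ≤ q) (a : ℕ) {f g : ℕ → ℝ}
    (h : ∀ l, f l ≤ g l) : Bin p q a f ≤ Bin p q a g := by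
  apply Finset.sum_le_sum
  intro i _
  have h1 : (0:ℝ) ≤ (a.choose i : ℝ) := by positivity
  gcongr
  exact h i

lemma Bin_const (p q c : ℝ) (a : ℕ) : Bin p q a (fun _ => c) = c * (p+q)^a := by
  rw [add_pow, Finset.mul_sum, Bin]
  exact Finset.sum_congr rfl (fun l _ => by ring)

noncomputable def T (p q : ℝ) (w : ℕ → ℕ → ℝ) (a b : ℕ) : ℝ :=
  Bin p q a (fun l => Bin p q b (fun j => w l j))

lemma T_succ_left (p q : ℝ) (w : ℕ → ℕ → ℝ) (a b : ℕ) :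
    T p q w (a+1) b = p * T p q (fun l j => w (l+1) j) a b + q * T p q w a b :=
  Bin_step p q a _

lemma T_succ_right (p q : ℝ) (w : ℕ → ℕ → ℝ) (a b : ℕ) :
    T p q w a (b+1) = p * T p q (fun l j => w l (j+1)) a b + q * T p q w a b := by
  unfold T
  rw [← Bin_lin p q p q a]
  congr 1
  funext l
  exact Bin_step p q b (fun j => w l j)

/-- The main weight. -/
noncomputable def W : ℕ → ℕ → ℝ := fun l j => ((l - j : ℕ) : ℝ)

lemma T_step {p q : ℝ} (hp : 0 ≤ p) (hq : 0 ≤ q) (hpq : p + q = 1) (a b : ℕ) :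
    T p q W (a+1) b ≤ T p q W a (b+1) + 2*p := by
  rw [T_succ_left, T_succ_right]
  have key : T p q (fun l j => W (l+1) j) a b
      ≤ T p q (fun l j => W l (j+1)) a b + 2 := by
    have h2 : T p q (fun l j => W l (j+1)) a b + 2
        = T p q (fun l j => W l (j+1) + 2) a b := by
      unfold T
      have : ∀ l : ℕ, Bin p q b (fun j => W l (j+1) + 2)
          = 1 * Bin p q b (fun j => W l (j+1)) + 2 * Bin p q b (fun _ => 1) := by
        intro l
        rw [← Bin_lin]
        congr 1; funext j; ring
      calc Bin p q a (fun l => Bin p q b (fun j => W l (j+1))) + 2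
          = 1 * Bin p q a (fun l => Bin p q b (fun j => W l (j+1)))
            + 2 * Bin p q a (fun _ => Bin p q b (fun _ => 1)) := by
            rw [Bin_const, Bin_const, hpq, one_pow, one_pow]; ring
        _ = Bin p q a (fun l => 1 * Bin p q b (fun j => W l (j+1))
              + 2 * Bin p q b (fun _ => 1)) := (Bin_lin p q 1 2 a _ _).symm
        _ = _ := by
            congr 1; funext l; rw [this l]
    rw [h2]
    unfold T
    apply Bin_mono hp hq
    intro l
    apply Bin_mono hp hq
    intro j
    unfold W
    have : (l + 1 - j : ℕ) ≤ (l - (j+1) : ℕ) + 2 := by omega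
    calc ((l + 1 - j : ℕ) : ℝ) ≤ (((l - (j+1) : ℕ) + 2 : ℕ) : ℝ) := by exact_mod_cast this
      _ = ((l - (j+1) : ℕ) : ℝ) + 2 := by push_cast; ring
  nlinarith [key]

lemma T_tele {p q : ℝ} (hp : 0 ≤ p) (hq : 0 ≤ q) (hpq : p + q = 1) (n : ℕ) :
    ∀ m i, i + m ≤ n → T p q W (i+m) (n-(i+m)) ≤ T p q W i (n-i) + m*(2*p) := by
  intro m
  induction m with
  | zero => intro i _; simp
  | succ m ih =>
    intro i h
    have h1 : i + m ≤ n := by omega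
    have h2 : n - (i+m+1) + 1 = n - (i+m) := by omega
    have h3 : i + (m+1) = (i+m) + 1 := by omega
    calc T p q W (i+(m+1)) (n-(i+(m+1)))
        = T p q W ((i+m)+1) (n-(i+m+1)) := by rw [h3]
      _ ≤ T p q W (i+m) (n-(i+m+1)+1) + 2*p := T_step hp hq hpq _ _
      _ = T p q W (i+m) (n-(i+m)) + 2*p := by rw [h2]
      _ ≤ (T p q W i (n-i) + m*(2*p)) + 2*p := by linarith [ih i h1]
      _ = T p q W i (n-i) + (m+1:ℕ)*(2*p) := by push_cast; ring

lemma Delta_eq_T (n k : ℕ) (hkn : k ≤ n) :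
    Delta n k = T (1/(n:ℝ)) (1 - 1/(n:ℝ)) W k (n-k) := by
  set p : ℝ := 1/(n:ℝ)
  set q : ℝ := 1 - 1/(n:ℝ)
  have key : ∀ C : ℝ, ∀ l : ℕ, l ≤ k →
      ∑ j ∈ range (n+1), W l j * ((n-k).choose j : ℝ) * p^j * q^(n-k-j) * C * p^l * q^(k-l)
      = ∑ j ∈ range (n+1), ((l - j : ℕ) : ℝ) * C * ((n-k).choose j : ℝ) * p^(l+j) * q^(n-l-j) := by
    intro C l hlk
    refine Finset.sum_congr rfl (fun j hj => ?_)
    by_cases hjnk : j ≤ n - k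
    · have h : n - l - j = (n-k-j) + (k-l) := by omega
      rw [h, pow_add, pow_add]
      unfold W
      ring
    · rw [Nat.choose_eq_zero_of_lt (by omega)]
      simp
  have claim1 : Delta n k
      = ∑ l ∈ range (k+1), ∑ j ∈ range (n+1),
          ((l - j : ℕ) : ℝ) * (k.choose l : ℝ) * ((n-k).choose j : ℝ) * p^(l+j) * q^(n-l-j) := by
    unfold Delta
    have step1 : ∀ l ∈ Icc 1 k,
        ∑ j ∈ range (l+1), ((l : ℝ) - j) * (k.choose l : ℝ) * ((n-k).choose j : ℝ) * p^(l+j) * q^(n-l-j)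
        = ∑ j ∈ range (n+1), ((l - j : ℕ) : ℝ) * (k.choose l : ℝ) * ((n-k).choose j : ℝ) * p^(l+j) * q^(n-l-j) := by
      intro l hl
      have hlk : l ≤ k := (Finset.mem_Icc.mp hl).2
      rw [Finset.sum_congr rfl (fun j hj => ?_)]
      · exact Finset.sum_subset
          (Finset.range_subset_range.mpr (by omega))
          (fun j _ hj => by
            have : l < j := by have h := Finset.mem_range.not.mp hj; omega
            rw [Nat.sub_eq_zero_of_le (by omega)]
            simp)
      · have hjl : j ≤ l := by have := Finset.mem_range.mp hj; omega
        rw [Nat.cast_sub hjl]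
    rw [Finset.sum_congr rfl step1]
    refine Finset.sum_subset (fun x hx => ?_) (fun x hx hx' => ?_)
    · have := Finset.mem_Icc.mp hx
      exact Finset.mem_range.mpr (by omega)
    · have hx0 : x = 0 := by
        have h1 := Finset.mem_range.mp hx
        have h2 := Finset.mem_Icc.not.mp hx'
        omega
      subst hx0
      refine Finset.sum_eq_zero (fun j _ => ?_)
      simp
  have claim2 : T p q W k (n-k)
      = ∑ l ∈ range (k+1), ∑ j ∈ range (n+1),
          ((l - j : ℕ) : ℝ) * (k.choose l : ℝ) * ((n-k).choose j : ℝ) * p^(l+j) * q^(n-l-j) := by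
    unfold T Bin
    refine Finset.sum_congr rfl (fun l hl => ?_)
    have hlk : l ≤ k := by have := Finset.mem_range.mp hl; omega
    have ext : ∑ j ∈ range (n-k+1), W l j * ((n-k).choose j : ℝ) * p^j * q^(n-k-j)
        = ∑ j ∈ range (n+1), W l j * ((n-k).choose j : ℝ) * p^j * q^(n-k-j) := by
      refine Finset.sum_subset (Finset.range_subset_range.mpr (by omega)) (fun j _ hj => ?_)
      have : n - k < j := by have h := Finset.mem_range.not.mp hj; omega
      rw [Nat.choose_eq_zero_of_lt this]
      simp
    beta_reduce
    rw [ext, Finset.sum_mul, Finset.sum_mul, Finset.sum_mul]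
    exact key (k.choose l : ℝ) l hlk
  rw [claim1, claim2]

lemma exp_aux (n : ℕ) (hn : 2 ≤ n) : (Real.exp 1)⁻¹ ≤ (1 - 1/(n:ℝ))^(n-1) := by
  have hn2 : (2:ℝ) ≤ (n:ℝ) := by exact_mod_cast hn
  have hpos : (0:ℝ) < (n:ℝ) - 1 := by linarith
  have hnn : (0:ℝ) < (n:ℝ) := by linarith
  have hq : (1 - 1/(n:ℝ)) = (((n:ℝ)-1)/(n:ℝ)) := by field_simp
  have h1 : (n:ℝ)/((n:ℝ)-1) ≤ Real.exp (1/((n:ℝ)-1)) := by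
    have h := Real.add_one_le_exp (1/((n:ℝ)-1))
    have e : (n:ℝ)/((n:ℝ)-1) = 1/((n:ℝ)-1) + 1 := by field_simp; ring
    rw [e]; exact h
  have h2 : ((n:ℝ)/((n:ℝ)-1))^(n-1) ≤ Real.exp 1 := by
    calc ((n:ℝ)/((n:ℝ)-1))^(n-1) ≤ (Real.exp (1/((n:ℝ)-1)))^(n-1) := by
          apply pow_le_pow_left₀ (by positivity) h1
      _ = Real.exp ((n-1 : ℕ) * (1/((n:ℝ)-1))) := (Real.exp_nat_mul _ _).symm
      _ = Real.exp 1 := by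
          congr 1
          have hc : ((n-1:ℕ):ℝ) = (n:ℝ)-1 := by
            rw [Nat.cast_sub (by omega : 1 ≤ n)]; norm_num
          rw [hc]; field_simp
  have hinv : (((n:ℝ)-1)/(n:ℝ))^(n-1) = (((n:ℝ)/((n:ℝ)-1))^(n-1))⁻¹ := by
    rw [← inv_pow, inv_div]
  rw [hq, hinv]
  exact inv_anti₀ (by positivity) h2

lemma T_lb (n k : ℕ) (hn : 2 ≤ n) (hk : 1 ≤ k) (hkn : k ≤ n) :
    (k:ℝ)/(Real.exp 1 * n) ≤ T (1/(n:ℝ)) (1-1/(n:ℝ)) W k (n-k) := by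
  set p : ℝ := 1/(n:ℝ) with hpdef
  set q : ℝ := 1 - 1/(n:ℝ) with hqdef
  have hnn : (0:ℝ) < (n:ℝ) := by positivity
  have hn1 : (1:ℝ) ≤ (n:ℝ) := by exact_mod_cast (by omega : 1 ≤ n)
  have hp : (0:ℝ) ≤ p := by positivity
  have hq : (0:ℝ) ≤ q := by
    rw [hqdef]
    have : 1/(n:ℝ) ≤ 1 := by rw [div_le_one hnn]; exact hn1
    linarith
  have inner_nonneg : ∀ l, 0 ≤ Bin p q (n-k) (fun j => W l j) := by
    intro l
    refine Finset.sum_nonneg (fun j _ => ?_)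
    unfold W
    positivity
  have inner_lb : q^(n-k) ≤ Bin p q (n-k) (fun j => W 1 j) := by
    have h0 : 0 ∈ range (n-k+1) := Finset.mem_range.mpr (by omega)
    have := Finset.single_le_sum
      (f := fun j => W 1 j * ((n-k).choose j : ℝ) * p^j * q^(n-k-j))
      (fun j _ => by unfold W; positivity) h0
    simpa [W, Bin] using this
  have outer_lb : Bin p q (n-k) (fun j => W 1 j) * (k.choose 1 : ℝ) * p^1 * q^(k-1)
      ≤ T p q W k (n-k) := by
    have h1 : 1 ∈ range (k+1) := Finset.mem_range.mpr (by omega)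
    exact Finset.single_le_sum
      (f := fun l => Bin p q (n-k) (fun j => W l j) * (k.choose l : ℝ) * p^l * q^(k-l))
      (fun l _ => mul_nonneg (mul_nonneg (mul_nonneg (inner_nonneg l)
        (Nat.cast_nonneg _)) (pow_nonneg hp _)) (pow_nonneg hq _)) h1
  have chain : q^(n-k) * (k:ℝ) * p * q^(k-1) ≤ T p q W k (n-k) := by
    calc q^(n-k) * (k:ℝ) * p * q^(k-1)
        = q^(n-k) * ((k.choose 1 : ℝ) * p^1 * q^(k-1)) := by
          rw [Nat.choose_one_right]; ring
      _ ≤ Bin p q (n-k) (fun j => W 1 j) * ((k.choose 1 : ℝ) * p^1 * q^(k-1)) := by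
          apply mul_le_mul_of_nonneg_right inner_lb
          exact mul_nonneg (mul_nonneg (Nat.cast_nonneg _) (pow_nonneg hp _)) (pow_nonneg hq _)
      _ = Bin p q (n-k) (fun j => W 1 j) * (k.choose 1 : ℝ) * p^1 * q^(k-1) := by ring
      _ ≤ T p q W k (n-k) := outer_lb
  have hqpow : q^(n-k) * q^(k-1) = q^(n-1) := by
    rw [← pow_add]
    congr 1
    omega
  have hfin : (k:ℝ)/(Real.exp 1 * n) ≤ q^(n-k) * (k:ℝ) * p * q^(k-1) := by
    have e1 : q^(n-k) * (k:ℝ) * p * q^(k-1) = (k:ℝ) * p * q^(n-1) := by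
      rw [← hqpow]; ring
    rw [e1]
    have h3 : (Real.exp 1)⁻¹ ≤ q^(n-1) := by rw [hqdef]; exact exp_aux n hn
    have hne : Real.exp 1 ≠ 0 := (Real.exp_pos 1).ne'
    have hnne : (n:ℝ) ≠ 0 := hnn.ne'
    calc (k:ℝ)/(Real.exp 1 * n) = (k:ℝ) * p * (Real.exp 1)⁻¹ := by
          rw [hpdef]; field_simp
      _ ≤ (k:ℝ) * p * q^(n-1) := by
          apply mul_le_mul_of_nonneg_left h3
          exact mul_nonneg (Nat.cast_nonneg _) hp
  linarith

/-- For `k ≥ 1` and `ℓ ∈ {1, …, k−1}` (states of the (1+1) EA on OneMax, so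
`k ≤ n`), the inverse drifts satisfy
`1/Δ(k−ℓ) − 1/Δ(k) ≤ 2e²ℓn² / (k(k−ℓ)(n−1))`. -/
theorem inv_delta_diff_upper (n k l : ℕ) (hn : 2 ≤ n) (hl : 1 ≤ l)
    (hlk : l ≤ k - 1) (hk : 1 ≤ k) (hkn : k ≤ n) :
    1 / Delta n (k - l) - 1 / Delta n k
      ≤ 2 * Real.exp 1 ^ 2 * l * n ^ 2 / (k * (k - l) * ((n : ℝ) - 1)) := by
  set p : ℝ := 1/(n:ℝ) with hpdef
  set q : ℝ := 1 - 1/(n:ℝ) with hqdef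
  have hn2 : (2:ℝ) ≤ (n:ℝ) := by exact_mod_cast hn
  have hnn : (0:ℝ) < (n:ℝ) := by linarith
  have hp : (0:ℝ) ≤ p := by rw [hpdef]; positivity
  have hppos : (0:ℝ) < p := by rw [hpdef]; positivity
  have hq : (0:ℝ) ≤ q := by
    rw [hqdef]
    have : 1/(n:ℝ) ≤ 1 := by rw [div_le_one hnn]; linarith
    linarith
  have hpq : p + q = 1 := by rw [hpdef, hqdef]; ring
  set k' := k - l with hk'def
  have hk'1 : 1 ≤ k' := by omega
  have hk'l : k' + l = k := by omega
  have hk'n : k' ≤ n := by omega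
  have hA : Delta n k' = T p q W k' (n-k') := Delta_eq_T n k' hk'n
  have hB : Delta n k = T p q W k (n-k) := Delta_eq_T n k hkn
  have tele := T_tele hp hq hpq n l k' (by omega)
  rw [hk'l] at tele
  have hdiff : Delta n k ≤ Delta n k' + 2*(l:ℝ)*p := by
    rw [hA, hB]; linarith [tele]
  have lbA : (k':ℝ)/(Real.exp 1 * n) ≤ Delta n k' := by
    rw [hA]; exact T_lb n k' hn hk'1 hk'n
  have lbB : (k:ℝ)/(Real.exp 1 * n) ≤ Delta n k := by
    rw [hB]; exact T_lb n k hn hk hkn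
  have hk'pos : (0:ℝ) < (k':ℝ) := by exact_mod_cast hk'1
  have hkpos : (0:ℝ) < (k:ℝ) := by exact_mod_cast hk
  have hlpos : (0:ℝ) < (l:ℝ) := by exact_mod_cast hl
  have he : (0:ℝ) < Real.exp 1 := Real.exp_pos 1
  have hfracA : (0:ℝ) < (k':ℝ)/(Real.exp 1 * n) := by positivity
  have hfracB : (0:ℝ) < (k:ℝ)/(Real.exp 1 * n) := by positivity
  have hApos : 0 < Delta n k' := lt_of_lt_of_le hfracA lbA
  have hBpos : 0 < Delta n k := lt_of_lt_of_le hfracB lbB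
  have invA : 1/(Delta n k') ≤ Real.exp 1 * n / (k':ℝ) := by
    have := one_div_le_one_div_of_le hfracA lbA
    rwa [one_div_div] at this
  have invB : 1/(Delta n k) ≤ Real.exp 1 * n / (k:ℝ) := by
    have := one_div_le_one_div_of_le hfracB lbB
    rwa [one_div_div] at this
  have hcast : (k:ℝ) - (l:ℝ) = (k':ℝ) := by
    rw [hk'def, Nat.cast_sub (by omega : l ≤ k)]
  rw [hcast]
  have e1 : 1/(Delta n k') - 1/(Delta n k)
      = (Delta n k - Delta n k') * (1/(Delta n k') * (1/(Delta n k))) := by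
    field_simp
  rw [e1]
  have e2 : (Delta n k - Delta n k') * (1/(Delta n k') * (1/(Delta n k)))
      ≤ (2*(l:ℝ)*p) * ((Real.exp 1 * n / (k':ℝ)) * (Real.exp 1 * n / (k:ℝ))) := by
    have hBA : Delta n k - Delta n k' ≤ 2*(l:ℝ)*p := by linarith
    have h1A : 0 < 1/(Delta n k') := by positivity
    have h1B : 0 < 1/(Delta n k) := by positivity
    apply mul_le_mul hBA
    · exact mul_le_mul invA invB (le_of_lt h1B) (by positivity)
    · positivity
    · positivity
  refine le_trans e2 ?_
  rw [hpdef]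
  have hm : (0:ℝ) < (n:ℝ) - 1 := by linarith
  have eL : 2 * (l:ℝ) * (1 / (n:ℝ)) * (Real.exp 1 * (n:ℝ) / (k':ℝ) * (Real.exp 1 * (n:ℝ) / (k:ℝ)))
      = 2 * (l:ℝ) * Real.exp 1 ^ 2 * (n:ℝ) / ((k':ℝ) * (k:ℝ)) := by
    field_simp
  rw [eL, div_le_div_iff₀ (by positivity) (by positivity)]
  nlinarith [mul_pos (mul_pos (mul_pos hlpos (mul_pos he he)) (mul_pos hkpos hk'pos)) hnn]
end
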